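/- arXiv:2007.15768 — 3 statements merged into one kernel-verified Lean document; each statement's English description precedes it below -/
import Mathlib

section
/- Let Z be a special symbol of defect 1 and size (m+1,m) and Z' a special symbol of defect 0 and size (m',m') with m' = m or m' = m+1. Then: (i) if m' = m+1, Z' is regular and D_Z = {Z'}, then D_{Z'} = {Z}; (ii) if m' = m, Z is regular and D_{Z'} = {Z}, then D_Z = {Z'}. -/
open scoped symmDiff

/-- A symbol: a pair of finsets of naturals (its two rows, each read in
strictly decreasing order). -/
abbrev Symb :=  Finset ℕ × Finset ℕ

/-- The strictly decreasing enumeration of a finset of naturals. -/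
def rowList (s : Finset ℕ) : List ℕ := (s.sort (· ≤ ·)).reverse

/-- The `i`-th entry (0-based) of the strictly decreasing enumeration of `s`. -/
def ent (s : Finset ℕ) (i : ℕ) : Option ℕ := (rowList s)[i]?

/-- Impose a relation on two optional entries whenever both exist. -/
def oRel (r : ℕ → ℕ → Prop) : Option ℕ → Option ℕ → Prop
  | some x, some y => r x y
  | _, _ => True

/-- `Z` is a special symbol of defect 1 and size `(m+1, m)`. -/
def IsSpecial1 (Z : Symb) (m : ℕ) : Prop :=
  Z.1.card = m + 1 ∧ Z.2.card = m ∧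
  (∀ i, oRel (· ≥ ·) (ent Z.1 i) (ent Z.2 i)) ∧
  (∀ i, oRel (· ≥ ·) (ent Z.2 i) (ent Z.1 (i + 1)))

/-- `Z'` is a special symbol of defect 0 and size `(m', m')`. -/
def IsSpecial0 (Z : Symb) (m' : ℕ) : Prop :=
  Z.1.card = m' ∧ Z.2.card = m' ∧
  (∀ i, oRel (· ≥ ·) (ent Z.1 i) (ent Z.2 i)) ∧
  (∀ i, oRel (· ≥ ·) (ent Z.2 i) (ent Z.1 (i + 1)))

/-- `Z_I`: the entries of `Z` lying in exactly one row (row remembered). -/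
def ZI (Z : Symb) : Symb := (Z.1 \ Z.2, Z.2 \ Z.1)

/-- `M` is a subset of `Z_I`. -/
def SubZI (M Z : Symb) : Prop := M.1 ⊆ Z.1 \ Z.2 ∧ M.2 ⊆ Z.2 \ Z.1

/-- `Z` is regular: no degenerate entries. -/
def Regular (Z : Symb) : Prop := Disjoint Z.1 Z.2

/-- `Λ_M`: exchange the rows of the entries of `M`. -/
def lam (Z M : Symb) : Symb := ((Z.1 \ M.1) ∪ M.2, (Z.2 \ M.2) ∪ M.1)

/-- `S̄_Z = {Λ_M : M ⊆ Z_I}`. -/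
def Sbar (Z : Symb) : Set Symb := {Λ | ∃ M, SubZI M Z ∧ Λ = lam Z M}

/-- Size and inequality conditions of `B̄⁺_{Z,Z'}` in the case `m' = m`. -/
def Bm (Λ Λ' : Symb) : Prop :=
  Λ'.1.card = Λ.2.card ∧ Λ'.2.card + 1 = Λ.1.card ∧
  (∀ i, oRel (· > ·) (ent Λ.1 i) (ent Λ'.2 i)) ∧
  (∀ i, oRel (· ≥ ·) (ent Λ'.2 i) (ent Λ.1 (i + 1))) ∧
  (∀ i, oRel (· > ·) (ent Λ.2 i) (ent Λ'.1 (i + 1))) ∧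
  (∀ i, oRel (· ≥ ·) (ent Λ'.1 i) (ent Λ.2 i))

/-- Size and inequality conditions of `B̄⁺_{Z,Z'}` in the case `m' = m + 1`. -/
def Bm1 (Λ Λ' : Symb) : Prop :=
  Λ'.1.card = Λ.2.card + 1 ∧ Λ'.2.card = Λ.1.card ∧
  (∀ i, oRel (· ≥ ·) (ent Λ.1 i) (ent Λ'.2 i)) ∧
  (∀ i, oRel (· > ·) (ent Λ'.2 i) (ent Λ.1 (i + 1))) ∧
  (∀ i, oRel (· ≥ ·) (ent Λ.2 i) (ent Λ'.1 (i + 1))) ∧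
  (∀ i, oRel (· > ·) (ent Λ'.1 i) (ent Λ.2 i))

/-- The relation `B̄⁺_{Z,Z'}`. -/
def BbarPlus (Z Z' : Symb) (m m' : ℕ) (Λ Λ' : Symb) : Prop :=
  Λ ∈ Sbar Z ∧ Λ' ∈ Sbar Z' ∧
  ((m' = m ∧ Bm Λ Λ') ∨ (m' = m + 1 ∧ Bm1 Λ Λ'))

/-- The relation `D_{Z,Z'}`. -/
def DRel (Z Z' : Symb) (m m' : ℕ) (A A' : Symb) : Prop :=
  BbarPlus Z Z' m m' A A' ∧
  A.1.card = m + 1 ∧ A.2.card = m ∧ A'.1.card = m' ∧ A'.2.card = m'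

/-- `{c, d}` is a consecutive pair in `Z_I`. -/
def ConsecPair (Z : Symb) (c d : ℕ) : Prop :=
  c ∈ Z.1 \ Z.2 ∧ d ∈ Z.2 \ Z.1 ∧
  ∀ x ∈ (Z.1 \ Z.2) ∪ (Z.2 \ Z.1), ¬(min c d < x ∧ x < max c d)

def rk (s : Finset ℕ) (v : ℕ) : ℕ := (s.filter (fun z => v < z)).card

lemma rowList_sorted (s : Finset ℕ) : (rowList s).Pairwise (· > ·) := by
  rw [rowList, List.pairwise_reverse]
  exact (Finset.sortedLT_sort s).pairwise

lemma length_rowList (s : Finset ℕ) : (rowList s).length = s.card := by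
  simp [rowList]

lemma mem_rowList {s : Finset ℕ} {a : ℕ} : a ∈ rowList s ↔ a ∈ s := by
  simp [rowList]

lemma nodup_rowList (s : Finset ℕ) : (rowList s).Nodup := by
  rw [rowList, List.nodup_reverse]
  exact Finset.sort_nodup s _

lemma listEnt : ∀ (l : List ℕ), l.Pairwise (· > ·) → ∀ i v,
    l[i]? = some v ↔ v ∈ l ∧ (l.filter (fun z => v < z)).length = i := by
  intro l
  induction l with
  | nil => intro _ i v; simp
  | cons a l ih =>
    intro hs i v
    have ha : ∀ b ∈ l, a > b := fun b hb => (List.pairwise_cons.1 hs).1 b hb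
    have hl : l.Pairwise (· > ·) := (List.pairwise_cons.1 hs).2
    cases i with
    | zero =>
      simp only [List.getElem?_cons_zero, Option.some.injEq]
      constructor
      · rintro rfl
        refine ⟨List.mem_cons_self, ?_⟩
        rw [List.filter_cons, List.length_eq_zero_iff]
        rw [if_neg (by simp)]
        rw [List.filter_eq_nil_iff]
        intro b hb
        simp only [decide_eq_true_eq]
        exact not_lt.2 (le_of_lt (ha b hb))
      · rintro ⟨hv, hlen⟩
        rcases List.mem_cons.1 hv with rfl | hv
        · rfl
        · exfalso
          have : a ∈ (a :: l).filter (fun z => decide (v < z)) := by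
            rw [List.mem_filter]
            exact ⟨List.mem_cons_self, by simp [ha v hv]⟩
          rw [List.length_eq_zero_iff] at hlen
          rw [hlen] at this
          exact List.not_mem_nil this
    | succ n =>
      rw [List.getElem?_cons_succ, ih hl n v]
      constructor
      · rintro ⟨hv, hlen⟩
        refine ⟨List.mem_cons_of_mem _ hv, ?_⟩
        rw [List.filter_cons]
        have : v < a := ha v hv
        simp [this, hlen]
      · rintro ⟨hv, hlen⟩
        rcases List.mem_cons.1 hv with rfl | hv
        · exfalso
          rw [List.filter_cons] at hlen
          have : ¬ (v < v) := lt_irrefl v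
          simp only [this, decide_false, if_neg, Bool.false_eq_true, not_false_iff] at hlen
          have : ∀ b ∈ l, ¬ (v < b) := fun b hb => not_lt.2 (le_of_lt (ha b hb))
          rw [List.filter_eq_nil_iff.2 (by intro b hb; simpa using this b hb)] at hlen
          simp at hlen
        · refine ⟨hv, ?_⟩
          rw [List.filter_cons] at hlen
          have : v < a := ha v hv
          simp only [this, decide_true, if_pos, List.length_cons] at hlen
          omega

lemma filter_length (s : Finset ℕ) (p : ℕ → Prop) [DecidablePred p] :
    ((rowList s).filter (fun z => decide (p z))).length = (s.filter p).card := by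
  have h1 : ((rowList s).filter (fun z => decide (p z))).toFinset = s.filter p := by
    rw [List.toFinset_filter]
    apply Finset.ext
    intro a
    simp only [Finset.mem_filter, List.mem_toFinset, mem_rowList, decide_eq_true_eq]
  rw [← h1, List.toFinset_card_of_nodup]
  exact List.Nodup.filter _ (nodup_rowList s)

lemma ent_eq_some_iff {s : Finset ℕ} {i v : ℕ} :
    ent s i = some v ↔ v ∈ s ∧ rk s v = i := by
  rw [ent, listEnt (rowList s) (rowList_sorted s), mem_rowList, rk, ← filter_length]

lemma ent_eq_none_iff {s : Finset ℕ} {i : ℕ} : ent s i = none ↔ s.card ≤ i := by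
  rw [ent, List.getElem?_eq_none_iff, length_rowList]

lemma rk_lt_card {s : Finset ℕ} {v : ℕ} (hv : v ∈ s) : rk s v < s.card := by
  apply Finset.card_lt_card
  constructor
  · exact Finset.filter_subset _ s
  · intro hsub
    have := hsub hv
    simp at this

lemma ent_rk {s : Finset ℕ} {v : ℕ} (hv : v ∈ s) : ent s (rk s v) = some v :=
  ent_eq_some_iff.2 ⟨hv, rfl⟩

lemma rk_lt_rk {s : Finset ℕ} {v w : ℕ} (hv : v ∈ s) (hw : w ∈ s) (h : w < v) :
    rk s v < rk s w := by
  apply Finset.card_lt_card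
  constructor
  · intro z hz
    rw [Finset.mem_filter] at hz ⊢
    exact ⟨hz.1, lt_trans h hz.2⟩
  · intro hsub
    have := hsub (Finset.mem_filter.2 ⟨hv, h⟩)
    rw [Finset.mem_filter] at this
    exact lt_irrefl v this.2

lemma ent_inj {s : Finset ℕ} {i j v : ℕ} (h1 : ent s i = some v) (h2 : ent s j = some v) :
    i = j := by
  rw [ent_eq_some_iff] at h1 h2
  omega

lemma exists_ent_of_lt {s : Finset ℕ} {i : ℕ} (h : i < s.card) : ∃ v, ent s i = some v := by
  cases he : ent s i with
  | none => rw [ent_eq_none_iff] at he; omega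
  | some v => exact ⟨v, rfl⟩

lemma le_ent_of_rk_ge {s : Finset ℕ} {v i : ℕ} (hv : v ∈ s) (h : i ≤ rk s v) :
    ∃ u, ent s i = some u ∧ v ≤ u := by
  have hi : i < s.card := lt_of_le_of_lt h (rk_lt_card hv)
  obtain ⟨u, hu⟩ := exists_ent_of_lt hi
  refine ⟨u, hu, ?_⟩
  by_contra hlt
  push_neg at hlt
  have h1 := rk_lt_rk hv (ent_eq_some_iff.1 hu).1 hlt
  rw [(ent_eq_some_iff.1 hu).2] at h1
  omega

lemma oRel_none_right {r : ℕ → ℕ → Prop} {o : Option ℕ} : oRel r o none := by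
  cases o <;> trivial

lemma oRel_none_left {r : ℕ → ℕ → Prop} {o : Option ℕ} : oRel r none o := by
  cases o <;> trivial

lemma oRel_some {r : ℕ → ℕ → Prop} {a b : ℕ} : oRel r (some a) (some b) ↔ r a b :=
  Iff.rfl

lemma card_swap {s : Finset ℕ} {x y : ℕ} (hx : x ∈ s) (hy : y ∉ s) :
    (insert y (s.erase x)).card = s.card := by
  rw [Finset.card_insert_of_notMem (fun h => hy (Finset.mem_of_mem_erase h)),
    Finset.card_erase_of_mem hx]
  have : 0 < s.card := Finset.card_pos.2 ⟨x, hx⟩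
  omega

lemma mem_swap {s : Finset ℕ} {x y v : ℕ} :
    v ∈ insert y (s.erase x) ↔ v = y ∨ (v ∈ s ∧ v ≠ x) := by
  simp only [Finset.mem_insert, Finset.mem_erase]
  tauto

lemma ent_swap {s : Finset ℕ} {x y : ℕ} (hx : x ∈ s) (hy : y ∉ s)
    (H : ∀ v ∈ s, v ≠ x → (v < x ↔ v < y)) (i : ℕ) :
    ent (insert y (s.erase x)) i = (ent s i).map (fun v => if v = x then y else v) := by
  set s' := insert y (s.erase x) with hs'
  have hxy : x ≠ y := fun h => hy (h ▸ hx)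
  have hcard : s'.card = s.card := card_swap hx hy
  have Hgt : ∀ v ∈ s, v ≠ x → (x < v ↔ y < v) := by
    intro v hv hvx
    have h1 := H v hv hvx
    have hvy : v ≠ y := fun h => hy (h ▸ hv)
    constructor
    · intro h; rcases lt_trichotomy v y with h2 | h2 | h2
      · exact absurd (h1.2 h2) (not_lt.2 (le_of_lt h))
      · exact absurd h2 hvy
      · exact h2
    · intro h; rcases lt_trichotomy v x with h2 | h2 | h2
      · exact absurd (h1.1 h2) (not_lt.2 (le_of_lt h))
      · exact absurd h2 hvx
      · exact h2
  by_cases hi : i < s.card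
  · obtain ⟨u, hu⟩ := exists_ent_of_lt hi
    obtain ⟨hus, hrk⟩ := ent_eq_some_iff.1 hu
    rw [hu]
    by_cases hux : u = x
    · subst hux
      rw [Option.map_some, show (if u = u then y else u) = y from if_pos rfl]
      rw [ent_eq_some_iff]
      refine ⟨Finset.mem_insert_self _ _, ?_⟩
      rw [← hrk, rk, rk]
      rw [show s'.filter (fun z => y < z) = (s.erase u).filter (fun z => y < z) by
        rw [hs', Finset.filter_insert, if_neg (lt_irrefl y)]]
      rw [show (s.erase u).filter (fun z => y < z) = (s.erase u).filter (fun z => u < z) by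
        apply Finset.filter_congr
        intro z hz
        have hz1 := Finset.mem_of_mem_erase hz
        have hz2 := Finset.ne_of_mem_erase hz
        exact (Hgt z hz1 hz2).symm]
      rw [Finset.filter_erase]
      rw [Finset.erase_eq_of_notMem
        (fun h => absurd (Finset.mem_filter.1 h).2 (lt_irrefl u))]
    · simp only [Option.map_some, if_neg hux]
      rw [ent_eq_some_iff]
      have hus' : u ∈ s' := mem_swap.2 (Or.inr ⟨hus, hux⟩)
      refine ⟨hus', ?_⟩
      rw [← hrk, rk, rk]
      have huy : u ≠ y := fun h => hy (h ▸ hus)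
      by_cases hult : u < x
      · have huy' : u < y := (H u hus hux).1 hult
        rw [hs', Finset.filter_insert, if_pos huy', Finset.filter_erase]
        have hx' : x ∈ s.filter (fun z => u < z) := Finset.mem_filter.2 ⟨hx, hult⟩
        rw [Finset.card_insert_of_notMem
          (fun h => hy (Finset.mem_filter.1 (Finset.mem_of_mem_erase h)).1),
          Finset.card_erase_of_mem hx']
        have hpos : 0 < (s.filter (fun z => u < z)).card := Finset.card_pos.2 ⟨x, hx'⟩
        omega
      · have huy' : ¬ (u < y) := fun h => hult ((H u hus hux).2 h)
        rw [hs', Finset.filter_insert, if_neg huy', Finset.filter_erase]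
        rw [Finset.erase_eq_of_notMem (fun h => hult (Finset.mem_filter.1 h).2)]
  · have h1 : ent s i = none := ent_eq_none_iff.2 (le_of_not_gt hi)
    have h2 : ent s' i = none := ent_eq_none_iff.2 (by rw [hcard]; exact le_of_not_gt hi)
    rw [h1, h2]; rfl

lemma gap_down {s : Finset ℕ} {i x y : ℕ} (hent : ent s i = some x) (hyx : y < x)
    (hnext : ∀ u, ent s (i+1) = some u → u < y) :
    ∀ v ∈ s, v ≠ x → (v < x ↔ v < y) := by
  intro v hv hvx
  obtain ⟨hxs, hrk⟩ := ent_eq_some_iff.1 hent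
  constructor
  · intro hlt
    have h1 : rk s x < rk s v := rk_lt_rk hxs hv hlt
    have h2 : i + 1 ≤ rk s v := by omega
    obtain ⟨u, hu, hvu⟩ := le_ent_of_rk_ge hv h2
    exact lt_of_le_of_lt hvu (hnext u hu)
  · intro hlt
    exact lt_trans hlt hyx

lemma ent_le_of_rk_le {s : Finset ℕ} {v u j : ℕ} (hv : v ∈ s) (hu : ent s j = some u)
    (h : rk s v ≤ j) : u ≤ v := by
  by_contra hlt
  push_neg at hlt
  obtain ⟨hus, hrk⟩ := ent_eq_some_iff.1 hu
  have := rk_lt_rk hus hv hlt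
  omega

lemma gap_up {s : Finset ℕ} {i x y : ℕ} (hent : ent s i = some x) (hxy : x < y)
    (hprev : ∀ j u, j + 1 = i → ent s j = some u → y ≤ u) :
    ∀ v ∈ s, v ≠ x → (v < x ↔ v < y) := by
  intro v hv hvx
  obtain ⟨hxs, hrk⟩ := ent_eq_some_iff.1 hent
  constructor
  · intro hlt; exact lt_trans hlt hxy
  · intro hlt
    rcases lt_trichotomy v x with h | h | h
    · exact h
    · exact absurd h hvx
    · exfalso
      have h1 : rk s v < rk s x := rk_lt_rk hv hxs h
      obtain ⟨j, rfl⟩ : ∃ j, j + 1 = i := ⟨i - 1, by omega⟩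
      have hjc : j < s.card := by have := rk_lt_card hxs; omega
      obtain ⟨u, hu⟩ := exists_ent_of_lt hjc
      have h2 : u ≤ v := ent_le_of_rk_le hv hu (by omega)
      have := hprev j u rfl hu
      omega

lemma oRel_map_right {r : ℕ → ℕ → Prop} {o o' : Option ℕ} {x y : ℕ}
    (h1 : oRel r o o') (h2 : o' = some x → oRel r o (some y)) :
    oRel r o (o'.map (fun v => if v = x then y else v)) := by
  cases o' with
  | none => exact oRel_none_right
  | some v =>
    by_cases hv : v = x
    · subst hv
      simpa using h2 rfl
    · simpa [hv] using h1

lemma oRel_map_left {r : ℕ → ℕ → Prop} {o o' : Option ℕ} {x y : ℕ}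
    (h1 : oRel r o' o) (h2 : o' = some x → oRel r (some y) o) :
    oRel r (o'.map (fun v => if v = x then y else v)) o := by
  cases o' with
  | none => exact oRel_none_left
  | some v =>
    by_cases hv : v = x
    · subst hv
      simpa using h2 rfl
    · simpa [hv] using h1

lemma top_moved {E F M₁ M₂ U : Finset ℕ} (hM1 : M₁ ⊆ E \ F) (hM2 : M₂ ⊆ F \ E)
    (hU : U = (E \ M₁) ∪ M₂) (hcard : U.card = E.card) {x : ℕ} (hx : x ∈ M₁)
    (hmax : ∀ v ∈ M₁ ∪ M₂, v ≤ x) :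
    ∃ w, ent U (rk E x) = some w ∧ w < x := by
  have hxE : x ∈ E := (Finset.mem_sdiff.1 (hM1 hx)).1
  have hj : rk E x < E.card := rk_lt_card hxE
  obtain ⟨w, hw⟩ := exists_ent_of_lt (show rk E x < U.card by omega)
  refine ⟨w, hw, ?_⟩
  obtain ⟨hwU, hrkU⟩ := ent_eq_some_iff.1 hw
  have hxU : x ∉ U := by
    rw [hU]; simp only [Finset.mem_union, Finset.mem_sdiff]
    rintro (⟨_, hx1⟩ | hx2)
    · exact hx1 hx
    · exact (Finset.mem_sdiff.1 (hM2 hx2)).2 hxE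
  have hwx : w ≠ x := fun h => hxU (h ▸ hwU)
  rcases lt_or_gt_of_ne hwx with h | h
  · exact h
  exfalso
  have hwE : w ∈ E := by
    rw [hU] at hwU
    rcases Finset.mem_union.1 hwU with h1 | h1
    · exact (Finset.mem_sdiff.1 h1).1
    · exact absurd (hmax w (Finset.mem_union_right _ h1)) (not_le.2 h)
  have hfil : U.filter (fun z => w < z) = E.filter (fun z => w < z) := by
    apply Finset.ext; intro z
    simp only [Finset.mem_filter, hU, Finset.mem_union, Finset.mem_sdiff]
    constructor
    · rintro ⟨h1 | h1, h2⟩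
      · exact ⟨h1.1, h2⟩
      · have := hmax z (Finset.mem_union_right _ h1); omega
    · rintro ⟨h1, h2⟩
      refine ⟨Or.inl ⟨h1, fun hz => ?_⟩, h2⟩
      have := hmax z (Finset.mem_union_left _ hz); omega
  have heq : rk E w = rk E x := by
    have h1 : rk U w = rk E w := by rw [rk, rk, hfil]
    omega
  have h2 : ent E (rk E x) = some w := by rw [← heq]; exact ent_rk hwE
  have h3 := ent_rk hxE
  rw [h2] at h3
  exact hwx (Option.some.inj h3)

lemma uniqGeneric {E F G H M₁ M₂ U V : Finset ℕ}
    (sEF1 : ∀ i, oRel (· ≥ ·) (ent E i) (ent F i))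
    (sEF2 : ∀ i, oRel (· ≥ ·) (ent F i) (ent E (i+1)))
    (sHG1 : ∀ i, oRel (· ≥ ·) (ent H i) (ent G i))
    (cross2 : ∀ i, oRel (· > ·) (ent G i) (ent E (i+1)))
    (cross4 : ∀ i, oRel (· > ·) (ent H i) (ent F i))
    (cP : ∀ i, oRel (· > ·) (ent G i) (ent F i))
    (cQ : ∀ i, oRel (· > ·) (ent H i) (ent E i))
    (hGE : G.card = E.card) (hHF : H.card = F.card + 1)
    (hFE : F.card ≤ E.card) (hEF1 : E.card ≤ F.card + 1)
    (hM1 : M₁ ⊆ E \ F) (hM2 : M₂ ⊆ F \ E)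
    (hU : U = (E \ M₁) ∪ M₂) (hV : V = (F \ M₂) ∪ M₁)
    (hUc : U.card = E.card) (hVc : V.card = F.card)
    (slotU : ∀ i, oRel (· ≥ ·) (ent U i) (ent G i))
    (slotV : ∀ i, oRel (· ≥ ·) (ent V i) (ent H (i+1))) :
    M₁ = ∅ ∧ M₂ = ∅ := by
  by_contra hne
  have hne' : (M₁ ∪ M₂).Nonempty := by
    rcases Finset.eq_empty_or_nonempty M₁ with h1 | h1
    · rcases Finset.eq_empty_or_nonempty M₂ with h2 | h2
      · exact absurd ⟨h1, h2⟩ hne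
      · exact h2.mono Finset.subset_union_right
    · exact h1.mono Finset.subset_union_left
  set x := (M₁ ∪ M₂).max' hne' with hxdef
  have hxmem := (M₁ ∪ M₂).max'_mem hne'
  have hmax : ∀ v ∈ M₁ ∪ M₂, v ≤ x := fun v hv => Finset.le_max' _ v hv
  rcases Finset.mem_union.1 hxmem with hx1 | hx2
  · -- x ∈ M₁ : moved from E to V
    have hxE : x ∈ E := (Finset.mem_sdiff.1 (hM1 hx1)).1
    have hxF : x ∉ F := (Finset.mem_sdiff.1 (hM1 hx1)).2
    obtain ⟨w, hw, hwx⟩ := top_moved hM1 hM2 hU hUc hx1 hmax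
    set j := rk E x with hjdef
    have hj : j < E.card := rk_lt_card hxE
    obtain ⟨g, hg⟩ := exists_ent_of_lt (show j < G.card by omega)
    have hwg : w ≥ g := by have := slotU j; rw [hw, hg, oRel_some] at this; exact this
    have hwU := (ent_eq_some_iff.1 hw).1
    rw [hU] at hwU
    rcases Finset.mem_union.1 hwU with h1 | h1
    · have hwE := (Finset.mem_sdiff.1 h1).1
      have h2 : j + 1 ≤ rk E w := by
        have := rk_lt_rk hxE hwE hwx; omega
      obtain ⟨u, hu, hwu⟩ := le_ent_of_rk_ge hwE h2
      have h3 := cross2 j; rw [hg, hu, oRel_some] at h3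
      omega
    · have hwF : w ∈ F := (Finset.mem_sdiff.1 (hM2 h1)).1
      have hgej : j ≤ rk F w := by
        rcases Nat.eq_zero_or_pos j with h0 | h0
        · omega
        · obtain ⟨u', hu'⟩ := exists_ent_of_lt (show j - 1 < F.card by omega)
          have h3 := sEF2 (j-1)
          rw [hu', show ent E (j - 1 + 1) = some x by
            rw [show j - 1 + 1 = j by omega]; exact ent_rk hxE, oRel_some] at h3
          have hu'F := (ent_eq_some_iff.1 hu').1
          have hne2 : u' ≠ x := fun h => hxF (h ▸ hu'F)
          have h4 := rk_lt_rk hu'F hwF (by omega)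
          have h5 : rk F u' = j - 1 := (ent_eq_some_iff.1 hu').2
          omega
      have hlej : rk F w ≤ j := by
        by_contra h4; push_neg at h4
        obtain ⟨u, hu, hwu⟩ := le_ent_of_rk_ge hwF (show j + 1 ≤ rk F w by omega)
        obtain ⟨e₁, he⟩ := exists_ent_of_lt
          (show j + 1 < E.card by have := rk_lt_card hwF; omega)
        have h5 := sEF1 (j+1); rw [he, hu, oRel_some] at h5
        have h6 := cross2 j; rw [hg, he, oRel_some] at h6
        omega
      have h7 := cP j
      rw [hg, show ent F j = some w from by
        rw [show j = rk F w by omega]; exact ent_rk hwF, oRel_some] at h7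
      omega
  · -- x ∈ M₂ : moved from F to U
    have hxF : x ∈ F := (Finset.mem_sdiff.1 (hM2 hx2)).1
    have hxE : x ∉ E := (Finset.mem_sdiff.1 (hM2 hx2)).2
    obtain ⟨w, hw, hwx⟩ := top_moved hM2 hM1 hV hVc hx2
      (fun v hv => hmax v (by rwa [Finset.union_comm]))
    set k := rk F x with hkdef
    have hk : k < F.card := rk_lt_card hxF
    obtain ⟨h₁, hh⟩ := exists_ent_of_lt (show k + 1 < H.card by omega)
    have hwh : w ≥ h₁ := by have := slotV k; rw [hw, hh, oRel_some] at this; exact this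
    have hwV := (ent_eq_some_iff.1 hw).1
    rw [hV] at hwV
    rcases Finset.mem_union.1 hwV with h1 | h1
    · have hwF := (Finset.mem_sdiff.1 h1).1
      obtain ⟨u, hu, hwu⟩ := le_ent_of_rk_ge hwF
        (show k + 1 ≤ rk F w by have := rk_lt_rk hxF hwF hwx; omega)
      have h3 := cross4 (k+1); rw [hh, hu, oRel_some] at h3
      omega
    · have hwE : w ∈ E := (Finset.mem_sdiff.1 (hM1 h1)).1
      have hgek : k + 1 ≤ rk E w := by
        obtain ⟨u', hu'⟩ := exists_ent_of_lt (show k < E.card by omega)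
        have h3 := sEF1 k
        rw [hu', show ent F k = some x from ent_rk hxF, oRel_some] at h3
        have hu'E := (ent_eq_some_iff.1 hu').1
        have hne2 : u' ≠ x := fun h => hxE (h ▸ hu'E)
        have h4 := rk_lt_rk hu'E hwE (by omega)
        have h5 : rk E u' = k := (ent_eq_some_iff.1 hu').2
        omega
      have hlek : rk E w ≤ k + 1 := by
        by_contra h4; push_neg at h4
        obtain ⟨u, hu, hwu⟩ := le_ent_of_rk_ge hwE (show k + 2 ≤ rk E w by omega)
        obtain ⟨g₁, hg⟩ := exists_ent_of_lt
          (show k + 1 < G.card by have := rk_lt_card hwE; omega)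
        have h5 := cross2 (k+1); rw [hg, hu, oRel_some] at h5
        have h6 := sHG1 (k+1); rw [hh, hg, oRel_some] at h6
        omega
      have h7 := cQ (k+1)
      rw [hh, show ent E (k+1) = some w from by
        rw [show k + 1 = rk E w by omega]; exact ent_rk hwE, oRel_some] at h7
      omega

lemma lt_of_le_notmem {u g : ℕ} {H : Finset ℕ} (hle : u ≤ g) (hu : u ∈ H) (hg : g ∉ H) :
    u < g := lt_of_le_of_ne hle (fun h => hg (h ▸ hu))

def SwapHyp (E F G H : Finset ℕ) : Prop :=
  ∀ x y, x ∈ H → y ∈ G → x ∉ G → y ∉ H →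
    (∀ i, oRel (· ≥ ·) (ent E i) (ent (insert x (G.erase y)) i)) →
    (∀ i, oRel (· > ·) (ent (insert x (G.erase y)) i) (ent E (i+1))) →
    (∀ i, oRel (· ≥ ·) (ent F i) (ent (insert y (H.erase x)) (i+1))) →
    (∀ i, oRel (· > ·) (ent (insert y (H.erase x)) i) (ent F i)) → False

lemma swap1_false {E F G H : Finset ℕ}
    (sHG1 : ∀ i, oRel (· ≥ ·) (ent H i) (ent G i))
    (sHG2 : ∀ i, oRel (· ≥ ·) (ent G i) (ent H (i+1)))
    (cr1 : ∀ i, oRel (· ≥ ·) (ent E i) (ent G i))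
    (cr2 : ∀ i, oRel (· > ·) (ent G i) (ent E (i+1)))
    (cr3 : ∀ i, oRel (· ≥ ·) (ent F i) (ent H (i+1)))
    (cr4 : ∀ i, oRel (· > ·) (ent H i) (ent F i))
    (hdisj : Disjoint H G) (Hswap : SwapHyp E F G H)
    {i e h' g : ℕ} (he : ent E i = some e) (hh : ent H i = some h')
    (hg : ent G i = some g) (hq : e ≥ h')
    (hf : ∀ f, ent F i = some f → g > f) : False := by
  have hxH : h' ∈ H := (ent_eq_some_iff.1 hh).1
  have hyG : g ∈ G := (ent_eq_some_iff.1 hg).1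
  have hxnG : h' ∉ G := Finset.disjoint_left.1 hdisj hxH
  have hynH : g ∉ H := Finset.disjoint_right.1 hdisj hyG
  have hgh : g < h' := by
    have h1 := sHG1 i; rw [hh, hg, oRel_some] at h1
    exact lt_of_le_notmem h1 hyG hxnG
  have gapH : ∀ v ∈ H, v ≠ h' → (v < h' ↔ v < g) := by
    apply gap_down hh hgh
    intro u hu
    have h1 := sHG2 i; rw [hg, hu, oRel_some] at h1
    exact lt_of_le_notmem h1 (ent_eq_some_iff.1 hu).1 hynH
  have gapG : ∀ v ∈ G, v ≠ g → (v < g ↔ v < h') := by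
    apply gap_up hg hgh
    intro j u hj hu
    have h1 := sHG2 j; rw [hu, hj, hh, oRel_some] at h1
    exact h1
  have entH' := ent_swap hxH hynH gapH
  have entG' := ent_swap hyG hxnG gapG
  apply Hswap h' g hxH hyG hxnG hynH
  · intro k
    rw [entG' k]
    apply oRel_map_right (cr1 k)
    intro hk
    have hki : k = i := ent_inj hk hg
    rw [hki, he, oRel_some]
    exact hq
  · intro k
    rw [entG' k]
    apply oRel_map_left (cr2 k)
    intro hk
    have hki : k = i := ent_inj hk hg
    rw [hki]
    cases hu : ent E (i+1) with
    | none => exact oRel_none_right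
    | some u =>
      rw [oRel_some]
      have h1 := cr2 i; rw [hg, hu, oRel_some] at h1
      omega
  · intro k
    rw [entH' (k+1)]
    apply oRel_map_right (cr3 k)
    intro hk
    have : k + 1 = i := ent_inj hk hh
    cases hu : ent F k with
    | none => exact oRel_none_left
    | some f' =>
      rw [oRel_some]
      have h1 := cr3 k; rw [hu, this, hh, oRel_some] at h1
      omega
  · intro k
    rw [entH' k]
    apply oRel_map_left (cr4 k)
    intro hk
    have hki : k = i := ent_inj hk hh
    rw [hki]
    cases hu : ent F i with
    | none => exact oRel_none_right
    | some f =>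
      rw [oRel_some]
      exact hf f hu

lemma swap2_false {E F G H : Finset ℕ}
    (sHG1 : ∀ i, oRel (· ≥ ·) (ent H i) (ent G i))
    (sHG2 : ∀ i, oRel (· ≥ ·) (ent G i) (ent H (i+1)))
    (cr1 : ∀ i, oRel (· ≥ ·) (ent E i) (ent G i))
    (cr2 : ∀ i, oRel (· > ·) (ent G i) (ent E (i+1)))
    (cr3 : ∀ i, oRel (· ≥ ·) (ent F i) (ent H (i+1)))
    (cr4 : ∀ i, oRel (· > ·) (ent H i) (ent F i))
    (hdisj : Disjoint H G) (Hswap : SwapHyp E F G H)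
    {i f g h₁ : ℕ} (hf : ent F i = some f) (hg : ent G i = some g)
    (hh : ent H (i+1) = some h₁) (hp : f ≥ g)
    (hq' : ∀ e₁, ent E (i+1) = some e₁ → h₁ > e₁) : False := by
  have hxH : h₁ ∈ H := (ent_eq_some_iff.1 hh).1
  have hyG : g ∈ G := (ent_eq_some_iff.1 hg).1
  have hxnG : h₁ ∉ G := Finset.disjoint_left.1 hdisj hxH
  have hynH : g ∉ H := Finset.disjoint_right.1 hdisj hyG
  have hgh : h₁ < g := by
    have h1 := sHG2 i; rw [hg, hh, oRel_some] at h1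
    exact lt_of_le_notmem h1 hxH hynH
  have gapG : ∀ v ∈ G, v ≠ g → (v < g ↔ v < h₁) := by
    apply gap_down hg hgh
    intro u hu
    have h1 := sHG1 (i+1); rw [hh, hu, oRel_some] at h1
    exact lt_of_le_notmem h1 (ent_eq_some_iff.1 hu).1 hxnG
  have gapH : ∀ v ∈ H, v ≠ h₁ → (v < h₁ ↔ v < g) := by
    apply gap_up hh hgh
    intro j u hj hu
    have hji : j = i := by omega
    rw [hji] at hu
    have h1 := sHG1 i; rw [hu, hg, oRel_some] at h1
    exact h1
  have entH' := ent_swap hxH hynH gapH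
  have entG' := ent_swap hyG hxnG gapG
  apply Hswap h₁ g hxH hyG hxnG hynH
  · intro k
    rw [entG' k]
    apply oRel_map_right (cr1 k)
    intro hk
    have hki : k = i := ent_inj hk hg
    rw [hki]
    cases hu : ent E i with
    | none => exact oRel_none_left
    | some e =>
      rw [oRel_some]
      have h1 := cr1 i; rw [hu, hg, oRel_some] at h1
      omega
  · intro k
    rw [entG' k]
    apply oRel_map_left (cr2 k)
    intro hk
    have hki : k = i := ent_inj hk hg
    rw [hki]
    cases hu : ent E (i+1) with
    | none => exact oRel_none_right
    | some e₁ =>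
      rw [oRel_some]
      exact hq' e₁ hu
  · intro k
    rw [entH' (k+1)]
    apply oRel_map_right (cr3 k)
    intro hk
    have hki : k + 1 = i + 1 := ent_inj hk hh
    have hk2 : k = i := by omega
    rw [hk2, hf, oRel_some]
    exact hp
  · intro k
    rw [entH' k]
    apply oRel_map_left (cr4 k)
    intro hk
    have hki : k = i + 1 := ent_inj hk hh
    rw [hki]
    cases hu : ent F (i+1) with
    | none => exact oRel_none_right
    | some f₁ =>
      rw [oRel_some]
      have h1 := cr4 (i+1); rw [hh, hu, oRel_some] at h1
      omega

lemma chainNeg {E F G H : Finset ℕ}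
    (sHG1 : ∀ i, oRel (· ≥ ·) (ent H i) (ent G i))
    (sHG2 : ∀ i, oRel (· ≥ ·) (ent G i) (ent H (i+1)))
    (cr1 : ∀ i, oRel (· ≥ ·) (ent E i) (ent G i))
    (cr2 : ∀ i, oRel (· > ·) (ent G i) (ent E (i+1)))
    (cr3 : ∀ i, oRel (· ≥ ·) (ent F i) (ent H (i+1)))
    (cr4 : ∀ i, oRel (· > ·) (ent H i) (ent F i))
    (hdisj : Disjoint H G) (hGE : G.card = E.card) (hHF : H.card = F.card + 1)
    (hFH : F.card ≤ H.card) (Hswap : SwapHyp E F G H) :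
    (∀ i, oRel (· > ·) (ent H i) (ent E i)) ∧
    (∀ i, oRel (· > ·) (ent G i) (ent F i)) := by
  have key : ∀ k i e h', E.card - i ≤ k → ent E i = some e → ent H i = some h' →
      e ≥ h' → False := by
    intro k
    induction k with
    | zero =>
      intro i e h' hk he _ _
      obtain ⟨hm, hr⟩ := ent_eq_some_iff.1 he
      have := rk_lt_card hm
      omega
    | succ n ih =>
      intro i e h' hk he hh hq
      have hiE : i < E.card := by
        obtain ⟨hm, hr⟩ := ent_eq_some_iff.1 he
        have := rk_lt_card hm; omega
      obtain ⟨g, hg⟩ := exists_ent_of_lt (show i < G.card by omega)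
      by_cases hPf : ∃ f, ent F i = some f ∧ f ≥ g
      · obtain ⟨f, hf, hfg⟩ := hPf
        have hiF : i < F.card := by
          obtain ⟨hm, hr⟩ := ent_eq_some_iff.1 hf
          have := rk_lt_card hm; omega
        obtain ⟨h₁, hh1⟩ := exists_ent_of_lt (show i + 1 < H.card by omega)
        by_cases hQe : ∃ e₁, ent E (i+1) = some e₁ ∧ e₁ ≥ h₁
        · obtain ⟨e₁, he1, hq1⟩ := hQe
          exact ih (i+1) e₁ h₁ (by omega) he1 hh1 hq1
        · push_neg at hQe
          exact swap2_false sHG1 sHG2 cr1 cr2 cr3 cr4 hdisj Hswap hf hg hh1 hfg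
            (fun e₁ he₁ => hQe e₁ he₁)
      · push_neg at hPf
        exact swap1_false sHG1 sHG2 cr1 cr2 cr3 cr4 hdisj Hswap he hh hg hq
          (fun f hf => hPf f hf)
  constructor
  · intro i
    cases he : ent E i with
    | none => exact oRel_none_right
    | some e =>
      cases hh : ent H i with
      | none => exact oRel_none_left
      | some h' =>
        rw [oRel_some]
        by_contra hc
        push_neg at hc
        exact key E.card i e h' (by omega) he hh hc
  · intro i
    cases hf : ent F i with
    | none => exact oRel_none_right
    | some f =>
      cases hg : ent G i with
      | none => exact oRel_none_left
      | some g =>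
        rw [oRel_some]
        by_contra hc
        push_neg at hc
        have hiF : i < F.card := by
          obtain ⟨hm, hr⟩ := ent_eq_some_iff.1 hf
          have := rk_lt_card hm; omega
        obtain ⟨h₁, hh1⟩ := exists_ent_of_lt (show i + 1 < H.card by omega)
        by_cases hQe : ∃ e₁, ent E (i+1) = some e₁ ∧ e₁ ≥ h₁
        · obtain ⟨e₁, he1, hq1⟩ := hQe
          exact key E.card (i+1) e₁ h₁ (by omega) he1 hh1 hq1
        · push_neg at hQe
          exact swap2_false sHG1 sHG2 cr1 cr2 cr3 cr4 hdisj Hswap hf hg hh1 hc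
            (fun e₁ he₁ => hQe e₁ he₁)

lemma lam_empty (W : Symb) : lam W (∅, ∅) = W := by
  unfold lam
  simp

lemma self_mem_Sbar (W : Symb) : W ∈ Sbar W :=
  ⟨(∅, ∅), ⟨Finset.empty_subset _, Finset.empty_subset _⟩, (lam_empty W).symm⟩

lemma lam_single (W : Symb) (x y : ℕ) :
    lam W ({x}, {y}) = (insert y (W.1.erase x), insert x (W.2.erase y)) := by
  unfold lam
  have h1 : W.1 \ {x} = W.1.erase x := (Finset.erase_eq _ _).symm
  have h2 : W.2 \ {y} = W.2.erase y := (Finset.erase_eq _ _).symm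
  rw [h1, h2]
  have h3 : W.1.erase x ∪ {y} = insert y (W.1.erase x) := by
    rw [Finset.union_comm, Finset.insert_eq]
  have h4 : W.2.erase y ∪ {x} = insert x (W.2.erase y) := by
    rw [Finset.union_comm, Finset.insert_eq]
  rw [h3, h4]

theorem stmt10 (m m' : ℕ) (Z Z' : Symb) (hm : m' = m ∨ m' = m + 1)
    (hZ : IsSpecial1 Z m) (hZ' : IsSpecial0 Z' m') :
    (m' = m + 1 → Regular Z' → {Λ' | DRel Z Z' m m' Z Λ'} = {Z'} →
      {Λ | DRel Z Z' m m' Λ Z'} = {Z}) ∧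
    (m' = m → Regular Z → {Λ | DRel Z Z' m m' Λ Z'} = {Z} →
      {Λ' | DRel Z Z' m m' Z Λ'} = {Z'}) := by
  obtain ⟨hA, hB, sZ1, sZ2⟩ := hZ
  obtain ⟨hC, hD, sZ'1, sZ'2⟩ := hZ'
  constructor
  · -- case (i) : m' = m + 1
    intro h1 hreg hsing
    have hbase : DRel Z Z' m m' Z Z' := by
      have : Z' ∈ {Λ' | DRel Z Z' m m' Z Λ'} := by rw [hsing]; exact rfl
      exact this
    obtain ⟨⟨_, _, hdisj'⟩, _, _, _, _⟩ := hbase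
    have hB1 : Bm1 Z Z' := by
      rcases hdisj' with ⟨hmm, _⟩ | ⟨_, hB1⟩
      · omega
      · exact hB1
    obtain ⟨hb0, hb1, cr1, cr2, cr3, cr4⟩ := hB1
    -- E = Z.1, F = Z.2, G = Z'.2, H = Z'.1
    have hdisjHG : Disjoint Z'.1 Z'.2 := hreg
    have Hswap : SwapHyp Z.1 Z.2 Z'.2 Z'.1 := by
      intro x y hxH hyG hxnG hynH c1 c2 c3 c4
      set Λ' : Symb := (insert y (Z'.1.erase x), insert x (Z'.2.erase y)) with hΛ'
      have hmem : DRel Z Z' m m' Z Λ' := by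
        refine ⟨⟨self_mem_Sbar Z, ?_, Or.inr ⟨h1, ?_⟩⟩, hA, hB, ?_, ?_⟩
        · exact ⟨({x}, {y}), ⟨Finset.singleton_subset_iff.2 (Finset.mem_sdiff.2 ⟨hxH, hxnG⟩),
            Finset.singleton_subset_iff.2 (Finset.mem_sdiff.2 ⟨hyG, hynH⟩)⟩,
            (lam_single Z' x y).symm⟩
        · refine ⟨?_, ?_, c1, c2, c3, c4⟩
          · show (insert y (Z'.1.erase x)).card = Z.2.card + 1
            rw [card_swap hxH hynH]; omega
          · show (insert x (Z'.2.erase y)).card = Z.1.card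
            rw [card_swap hyG hxnG]; omega
        · show (insert y (Z'.1.erase x)).card = m'
          rw [card_swap hxH hynH]; omega
        · show (insert x (Z'.2.erase y)).card = m'
          rw [card_swap hyG hxnG]; omega
      have heq : Λ' = Z' := by
        have : Λ' ∈ {Λ' | DRel Z Z' m m' Z Λ'} := hmem
        rw [hsing] at this
        exact this
      apply hynH
      have : y ∈ Λ'.1 := Finset.mem_insert_self _ _
      rw [heq] at this
      exact this
    obtain ⟨cQ, cP⟩ := chainNeg sZ'1 sZ'2 cr1 cr2 cr3 cr4 hdisjHG
      (by omega) (by omega) (by omega) Hswap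
    apply Set.eq_of_subset_of_subset
    · intro Λ hΛ
      obtain ⟨⟨hSb, _, hdisj2⟩, hcA, hcB, _, _⟩ := hΛ
      obtain ⟨M, ⟨hM1, hM2⟩, hΛeq⟩ := hSb
      have hB1' : Bm1 Λ Z' := by
        rcases hdisj2 with ⟨hmm, _⟩ | ⟨_, hB1'⟩
        · omega
        · exact hB1'
      obtain ⟨_, _, slotU, _, slotV, _⟩ := hB1'
      have hres := uniqGeneric sZ1 sZ2 sZ'1 cr2 cr4 cP cQ
        (by omega) (by omega) (by omega) (by omega) hM1 hM2
        (show Λ.1 = (Z.1 \ M.1) ∪ M.2 by rw [hΛeq]; rfl)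
        (show Λ.2 = (Z.2 \ M.2) ∪ M.1 by rw [hΛeq]; rfl)
        (by omega) (by omega) slotU slotV
      have : Λ = Z := by
        rw [hΛeq, show M = (∅, ∅) from Prod.ext hres.1 hres.2, lam_empty]
      exact this
    · intro Λ hΛ
      rw [Set.mem_singleton_iff] at hΛ
      rw [Set.mem_setOf_eq, hΛ]
      exact ⟨⟨self_mem_Sbar Z, self_mem_Sbar Z', Or.inr ⟨h1, hb0, hb1, cr1, cr2, cr3, cr4⟩⟩,
        hA, hB, hC, hD⟩
  · -- case (ii) : m' = m
    intro h1 hreg hsing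
    have hbase : DRel Z Z' m m' Z Z' := by
      have : Z ∈ {Λ | DRel Z Z' m m' Λ Z'} := by rw [hsing]; exact rfl
      exact this
    obtain ⟨⟨_, _, hdisj'⟩, _, _, _, _⟩ := hbase
    have hB1 : Bm Z Z' := by
      rcases hdisj' with ⟨_, hB1⟩ | ⟨hmm, _⟩
      · exact hB1
      · omega
    obtain ⟨hb0, hb1, cr4, cr3, cr2, cr1⟩ := hB1
    -- E = Z'.1, F = Z'.2, G = Z.2, H = Z.1
    have hdisjHG : Disjoint Z.1 Z.2 := hreg
    have Hswap : SwapHyp Z'.1 Z'.2 Z.2 Z.1 := by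
      intro x y hxH hyG hxnG hynH c1 c2 c3 c4
      set Λ : Symb := (insert y (Z.1.erase x), insert x (Z.2.erase y)) with hΛ
      have hmem : DRel Z Z' m m' Λ Z' := by
        refine ⟨⟨?_, self_mem_Sbar Z', Or.inl ⟨h1, ?_⟩⟩, ?_, ?_, hC, hD⟩
        · exact ⟨({x}, {y}), ⟨Finset.singleton_subset_iff.2 (Finset.mem_sdiff.2 ⟨hxH, hxnG⟩),
            Finset.singleton_subset_iff.2 (Finset.mem_sdiff.2 ⟨hyG, hynH⟩)⟩,
            (lam_single Z x y).symm⟩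
        · refine ⟨?_, ?_, c4, c3, c2, c1⟩
          · show Z'.1.card = (insert x (Z.2.erase y)).card
            rw [card_swap hyG hxnG]; omega
          · show Z'.2.card + 1 = (insert y (Z.1.erase x)).card
            rw [card_swap hxH hynH]; omega
        · show (insert y (Z.1.erase x)).card = m + 1
          rw [card_swap hxH hynH]; omega
        · show (insert x (Z.2.erase y)).card = m
          rw [card_swap hyG hxnG]; omega
      have heq : Λ = Z := by
        have : Λ ∈ {Λ | DRel Z Z' m m' Λ Z'} := hmem
        rw [hsing] at this
        exact this
      apply hynH
      have : y ∈ Λ.1 := Finset.mem_insert_self _ _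
      rw [heq] at this
      exact this
    obtain ⟨cQ, cP⟩ := chainNeg sZ1 sZ2 cr1 cr2 cr3 cr4 hdisjHG
      (by omega) (by omega) (by omega) Hswap
    apply Set.eq_of_subset_of_subset
    · intro Λ' hΛ'
      obtain ⟨⟨_, hSb, hdisj2⟩, _, _, hcC, hcD⟩ := hΛ'
      obtain ⟨M, ⟨hM1, hM2⟩, hΛeq⟩ := hSb
      have hB1' : Bm Z Λ' := by
        rcases hdisj2 with ⟨_, hB1'⟩ | ⟨hmm, _⟩
        · exact hB1'
        · omega
      obtain ⟨_, _, _, slotV, _, slotU⟩ := hB1'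
      have hres := uniqGeneric sZ'1 sZ'2 sZ1 cr2 cr4 cP cQ
        (by omega) (by omega) (by omega) (by omega) hM1 hM2
        (show Λ'.1 = (Z'.1 \ M.1) ∪ M.2 by rw [hΛeq]; rfl)
        (show Λ'.2 = (Z'.2 \ M.2) ∪ M.1 by rw [hΛeq]; rfl)
        (by omega) (by omega) slotU slotV
      have : Λ' = Z' := by
        rw [hΛeq, show M = (∅, ∅) from Prod.ext hres.1 hres.2, lam_empty]
      exact this
    · intro Λ' hΛ'
      rw [Set.mem_singleton_iff] at hΛ'
      rw [Set.mem_setOf_eq, hΛ']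
      exact ⟨⟨self_mem_Sbar Z, self_mem_Sbar Z', Or.inl ⟨h1, hb0, hb1, cr4, cr3, cr2, cr1⟩⟩,
        hA, hB, hC, hD⟩
end

section
/- Let Z = (a_1,…,a_{m+1}; b_1,…,b_m) be a special symbol of defect 1 and Z' = (c_1,…,c_{m'}; d_1,…,d_{m'}) a special symbol of defect 0 with m' = m or m' = m+1. Suppose both Z and Z' are regular and D_{Z,Z'} is one-to-one. Then: (i) if m' = m+1, for Λ ∈ S̄_Z and Λ' ∈ S̄_{Z'} one has (Λ,Λ') ∈ B̄⁺_{Z,Z'} if and only if Λ' = θ⁺(Λ), where θ⁺(Λ_M) = Λ_{θ(M)} and θ: Z_I → Z'_I sends a_i ↦ d_i and b_i ↦ c_{i+1}; (ii) if m' = m, one has (Λ,Λ') ∈ B̄⁺_{Z,Z'} if and only if Λ = θ⁺(Λ'), where θ⁺(Λ_N) = Λ_{θ(N)} and θ: Z'_I → Z_I sends c_i ↦ b_i and d_i ↦ a_{i+1}. -/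
open scoped symmDiff

/-- `posImage s t u shift`: the set of entries of `t` whose (0-based) position in the
decreasing enumeration of `t` is `i + shift` for some position `i` in `s` occupied by
an element of `u`. -/
noncomputable def posImage (s t u : Finset ℕ) (shift : ℕ) : Finset ℕ := by
  classical
  exact t.filter fun y => ∃ i x, ent s i = some x ∧ x ∈ u ∧ ent t (i + shift) = some y

/-- `D_{Z,Z'}` is one-to-one: it is nonempty, `D_Z = {Z'}` and `D_{Z'} = {Z}`. -/
def OneToOne (Z Z' : Symb) (m m' : ℕ) : Prop :=
  (∃ A A' : Symb, DRel Z Z' m m' A A') ∧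
  {Λ' | DRel Z Z' m m' Z Λ'} = {Z'} ∧
  {Λ | DRel Z Z' m m' Λ Z'} = {Z}


namespace S14
open Finset

def cnt (s : Finset ℕ) (n : ℕ) : ℕ := (s.filter (fun x => n ≤ x)).card

lemma cnt_mono (s : Finset ℕ) {n k : ℕ} (h : n ≤ k) : cnt s k ≤ cnt s n :=
  Finset.card_le_card (Finset.monotone_filter_right s (fun _ _ hx => le_trans h hx))

lemma cnt_le_card (s : Finset ℕ) (n : ℕ) : cnt s n ≤ s.card :=
  Finset.card_le_card (Finset.filter_subset _ _)

lemma cnt_step (s : Finset ℕ) (n : ℕ) :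
    cnt s n = cnt s (n+1) + (if n ∈ s then 1 else 0) := by
  classical
  have hsplit : s.filter (fun x => n ≤ x)
      = s.filter (fun x => n+1 ≤ x) ∪ s.filter (fun x => x = n) := by
    ext a
    simp only [Finset.mem_filter, Finset.mem_union]
    constructor
    · rintro ⟨ha, h⟩
      rcases Nat.lt_or_ge n a with h' | h'
      · exact Or.inl ⟨ha, h'⟩
      · exact Or.inr ⟨ha, by omega⟩
    · rintro (⟨ha, h⟩ | ⟨ha, h⟩) <;> exact ⟨ha, by omega⟩
  have hdisj : Disjoint (s.filter (fun x => n+1 ≤ x)) (s.filter (fun x => x = n)) := by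
    rw [Finset.disjoint_left]
    intro a ha hb
    simp only [Finset.mem_filter] at ha hb
    omega
  rw [cnt, hsplit, Finset.card_union_of_disjoint hdisj, Finset.filter_eq']
  split_ifs <;> simp [cnt]

lemma cnt_zero (s : Finset ℕ) : cnt s 0 = s.card := by
  rw [cnt, Finset.filter_true_of_mem (fun _ _ => Nat.zero_le _)]

lemma cnt_ext {s t : Finset ℕ} (h : ∀ n, cnt s n = cnt t n) : s = t := by
  ext x
  have h1 := cnt_step s x
  have h2 := cnt_step t x
  rw [h x, h (x+1)] at h1
  by_cases hs : x ∈ s <;> by_cases ht : x ∈ t <;> simp [hs, ht] at h1 h2 ⊢ <;> omega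

lemma cnt_union_of_disjoint {s t : Finset ℕ} (h : Disjoint s t) (n : ℕ) :
    cnt (s ∪ t) n = cnt s n + cnt t n := by
  rw [cnt, Finset.filter_union,
    Finset.card_union_of_disjoint (Finset.disjoint_filter_filter h)]; rfl

lemma cnt_sdiff {s t : Finset ℕ} (h : t ⊆ s) (n : ℕ) :
    cnt (s \ t) n + cnt t n = cnt s n := by
  rw [← cnt_union_of_disjoint (Finset.sdiff_disjoint) n, Finset.sdiff_union_of_subset h]

lemma cnt_lam {X U V : Finset ℕ} (h1 : U ⊆ X) (h2 : Disjoint V X) (n : ℕ) :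
    cnt ((X \ U) ∪ V) n + cnt U n = cnt X n + cnt V n := by
  have hd : Disjoint (X \ U) V := (h2.symm.mono_left (Finset.sdiff_subset))
  rw [cnt_union_of_disjoint hd]
  have := cnt_sdiff h1 n
  omega

lemma cnt_subset {s t : Finset ℕ} (h : s ⊆ t) (n : ℕ) : cnt s n ≤ cnt t n :=
  Finset.card_le_card (Finset.filter_subset_filter _ h)

lemma cnt_singleton (a n : ℕ) : cnt {a} n = if n ≤ a then 1 else 0 := by
  rw [cnt, Finset.filter_singleton]
  split_ifs <;> simp

lemma length_rowList (s : Finset ℕ) : (rowList s).length = s.card := by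
  rw [rowList, List.length_reverse, Finset.length_sort]

lemma mem_rowList {s : Finset ℕ} {x : ℕ} : x ∈ rowList s ↔ x ∈ s := by
  rw [rowList, List.mem_reverse, Finset.mem_sort]

lemma sorted_rowList (s : Finset ℕ) : (rowList s).Pairwise (· > ·) := by
  rw [rowList]
  exact List.pairwise_reverse.mpr (List.sortedLT_iff_pairwise.mp (Finset.sortedLT_sort s))

lemma cnt_eq_countP (s : Finset ℕ) (n : ℕ) :
    cnt s n = (rowList s).countP (fun x => decide (n ≤ x)) := by
  classical
  rw [rowList, List.countP_reverse]
  have h1 : Multiset.countP (fun x => n ≤ x) ↑(s.sort (· ≤ ·))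
      = (s.sort (· ≤ ·)).countP (fun x => decide (n ≤ x)) := Multiset.coe_countP _ _
  rw [← h1, Finset.sort_eq, cnt]
  rw [Multiset.countP_eq_card_filter]
  rfl

lemma key_list (n : ℕ) : ∀ (l : List ℕ), l.Pairwise (· > ·) → ∀ i x, l[i]? = some x →
    (n ≤ x ↔ i < l.countP (fun y => decide (n ≤ y))) := by
  intro l
  induction l with
  | nil => intro _ i x h; simp at h
  | cons a l ih =>
    intro hs i x h
    rw [List.pairwise_cons] at hs
    rcases i with _ | i
    · simp only [List.getElem?_cons_zero, Option.some.injEq] at h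
      subst h
      rw [List.countP_cons]
      by_cases hna : n ≤ a
      · simp [hna]
      · have h0 : l.countP (fun y => decide (n ≤ y)) = 0 := by
          rw [List.countP_eq_zero]
          intro b hb
          have := hs.1 b hb
          simp only [decide_eq_true_eq]
          omega
        simp [hna, h0]
    · simp only [List.getElem?_cons_succ] at h
      rw [List.countP_cons]
      by_cases hna : n ≤ a
      · rw [ih hs.2 i x h]
        simp [hna]
      · have hxl : x ∈ l := List.mem_of_getElem? h
        have hxa := hs.1 x hxl
        have h0 : l.countP (fun y => decide (n ≤ y)) = 0 := by
          rw [List.countP_eq_zero]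
          intro b hb
          have := hs.1 b hb
          simp; omega
        simp [hna, h0]
        omega

lemma ent_key {s : Finset ℕ} {i x : ℕ} (h : ent s i = some x) (n : ℕ) :
    n ≤ x ↔ i < cnt s n := by
  rw [cnt_eq_countP]
  exact key_list n _ (sorted_rowList s) i x h

lemma ent_lt_card {s : Finset ℕ} {i x : ℕ} (h : ent s i = some x) : i < s.card := by
  rw [← length_rowList]
  exact (List.getElem?_eq_some_iff.mp h).1

lemma ent_some {s : Finset ℕ} {i : ℕ} (h : i < s.card) : ∃ x, ent s i = some x := by
  rw [← length_rowList] at h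
  exact ⟨_, List.getElem?_eq_getElem h⟩

lemma ent_mem {s : Finset ℕ} {i x : ℕ} (h : ent s i = some x) : x ∈ s :=
  mem_rowList.mp (List.mem_of_getElem? h)

lemma ent_of_mem {s : Finset ℕ} {x : ℕ} (h : x ∈ s) : ∃ i, ent s i = some x :=
  List.mem_iff_getElem?.mp (mem_rowList.mpr h)

lemma ent_inj {s : Finset ℕ} {i j x : ℕ} (h1 : ent s i = some x) (h2 : ent s j = some x) :
    i = j := by
  have k1 := (ent_key h1 x).mp le_rfl
  have k1' := ent_key h1 (x+1)
  have k2 := (ent_key h2 x).mp le_rfl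
  have k2' := ent_key h2 (x+1)
  have hst := cnt_step s x
  have hx : x ∈ s := ent_mem h1
  simp [hx] at hst
  omega

end S14

namespace S14

lemma oRel_none_left {r : ℕ → ℕ → Prop} {o : Option ℕ} : oRel r none o := by
  cases o <;> trivial

lemma oRel_none_right {r : ℕ → ℕ → Prop} {o : Option ℕ} : oRel r o none := by
  cases o <;> trivial

lemma oRel_some_some {r : ℕ → ℕ → Prop} {x y : ℕ} : oRel r (some x) (some y) ↔ r x y :=
  Iff.rfl

lemma orel_ge_iff (s t : Finset ℕ) (hc : t.card ≤ s.card) :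
    (∀ i, oRel (· ≥ ·) (ent s i) (ent t i)) ↔ ∀ n, cnt t n ≤ cnt s n := by
  constructor
  · intro h n
    by_cases h0 : cnt t n = 0
    · omega
    have hlt : cnt t n - 1 < t.card := lt_of_lt_of_le (by omega) (cnt_le_card t n)
    obtain ⟨y, hy⟩ := ent_some hlt
    have hyn : n ≤ y := (ent_key hy n).mpr (by omega)
    obtain ⟨x, hx⟩ := ent_some (lt_of_lt_of_le hlt hc)
    have hr := h (cnt t n - 1)
    rw [hx, hy] at hr
    have := (ent_key hx n).mp (le_trans hyn hr)
    omega
  · intro h i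
    rcases hx : ent s i with _ | x
    · exact oRel_none_left
    rcases hy : ent t i with _ | y
    · exact oRel_none_right
    rw [oRel_some_some]
    have h1 := (ent_key hy y).mp le_rfl
    have h2 := h y
    exact (ent_key hx y).mpr (by omega)

lemma orel_gt_iff (s t : Finset ℕ) (hc : t.card ≤ s.card) :
    (∀ i, oRel (· > ·) (ent s i) (ent t i)) ↔ ∀ n, cnt t n ≤ cnt s (n+1) := by
  constructor
  · intro h n
    by_cases h0 : cnt t n = 0
    · omega
    have hlt : cnt t n - 1 < t.card := lt_of_lt_of_le (by omega) (cnt_le_card t n)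
    obtain ⟨y, hy⟩ := ent_some hlt
    have hyn : n ≤ y := (ent_key hy n).mpr (by omega)
    obtain ⟨x, hx⟩ := ent_some (lt_of_lt_of_le hlt hc)
    have hr := h (cnt t n - 1)
    rw [hx, hy] at hr
    have hgt : x > y := hr
    have := (ent_key hx (n+1)).mp (by omega)
    omega
  · intro h i
    rcases hx : ent s i with _ | x
    · exact oRel_none_left
    rcases hy : ent t i with _ | y
    · exact oRel_none_right
    rw [oRel_some_some]
    have h1 := (ent_key hy y).mp le_rfl
    have h2 := h y
    have := (ent_key hx (y+1)).mpr (by omega)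
    omega

lemma orel_ge_shift_iff (s t : Finset ℕ) (hc : s.card ≤ t.card + 1) :
    (∀ i, oRel (· ≥ ·) (ent t i) (ent s (i+1))) ↔ ∀ n, cnt s n ≤ cnt t n + 1 := by
  constructor
  · intro h n
    by_cases h0 : cnt s n ≤ 1
    · omega
    have hlt : cnt s n - 1 < s.card := lt_of_lt_of_le (by omega) (cnt_le_card s n)
    obtain ⟨x, hx⟩ := ent_some hlt
    have hxn : n ≤ x := (ent_key hx n).mpr (by omega)
    have hlt2 : cnt s n - 2 < t.card := by omega
    obtain ⟨y, hy⟩ := ent_some hlt2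
    have hr := h (cnt s n - 2)
    have he : cnt s n - 2 + 1 = cnt s n - 1 := by omega
    rw [he, hx, hy] at hr
    have := (ent_key hy n).mp (le_trans hxn hr)
    omega
  · intro h i
    rcases hy : ent t i with _ | y
    · exact oRel_none_left
    rcases hx : ent s (i+1) with _ | x
    · exact oRel_none_right
    rw [oRel_some_some]
    have h1 := (ent_key hx x).mp le_rfl
    have h2 := h x
    exact (ent_key hy x).mpr (by omega)

lemma orel_gt_shift_iff (s t : Finset ℕ) (hc : s.card ≤ t.card + 1) :
    (∀ i, oRel (· > ·) (ent t i) (ent s (i+1))) ↔ ∀ n, cnt s n ≤ cnt t (n+1) + 1 := by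
  constructor
  · intro h n
    by_cases h0 : cnt s n ≤ 1
    · omega
    have hlt : cnt s n - 1 < s.card := lt_of_lt_of_le (by omega) (cnt_le_card s n)
    obtain ⟨x, hx⟩ := ent_some hlt
    have hxn : n ≤ x := (ent_key hx n).mpr (by omega)
    have hlt2 : cnt s n - 2 < t.card := by omega
    obtain ⟨y, hy⟩ := ent_some hlt2
    have hr := h (cnt s n - 2)
    have he : cnt s n - 2 + 1 = cnt s n - 1 := by omega
    rw [he, hx, hy] at hr
    have hgt : y > x := hr
    have := (ent_key hy (n+1)).mp (by omega)
    omega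
  · intro h i
    rcases hy : ent t i with _ | y
    · exact oRel_none_left
    rcases hx : ent s (i+1) with _ | x
    · exact oRel_none_right
    rw [oRel_some_some]
    have h1 := (ent_key hx x).mp le_rfl
    have h2 := h x
    have := (ent_key hy (x+1)).mpr (by omega)
    omega

end S14

namespace S14

def Bc (L L' : Symb) : Prop :=
  L'.1.card = L.2.card + 1 ∧ L'.2.card = L.1.card ∧
  (∀ n, cnt L'.2 n ≤ cnt L.1 n) ∧
  (∀ n, cnt L.1 n ≤ cnt L'.2 (n+1) + 1) ∧
  (∀ n, cnt L.2 n ≤ cnt L'.1 (n+1)) ∧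
  (∀ n, cnt L'.1 n ≤ cnt L.2 n + 1)

lemma bm1_iff_bc {L L' : Symb} : Bm1 L L' ↔ Bc L L' := by
  constructor
  · rintro ⟨h1, h2, h3, h4, h5, h6⟩
    exact ⟨h1, h2, (orel_ge_iff L.1 L'.2 (le_of_eq h2)).mp h3,
      (orel_gt_shift_iff L.1 L'.2 (by omega)).mp h4,
      (orel_gt_iff L'.1 L.2 (by omega)).mp h6,
      (orel_ge_shift_iff L'.1 L.2 (by omega)).mp h5⟩
  · rintro ⟨h1, h2, h3, h4, h5, h6⟩
    exact ⟨h1, h2, (orel_ge_iff L.1 L'.2 (le_of_eq h2)).mpr h3,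
      (orel_gt_shift_iff L.1 L'.2 (by omega)).mpr h4,
      (orel_ge_shift_iff L'.1 L.2 (by omega)).mpr h6,
      (orel_gt_iff L'.1 L.2 (by omega)).mpr h5⟩

lemma bm_iff_bm1 {L L' : Symb} : Bm L L' ↔ Bm1 L' L := by
  constructor
  · rintro ⟨h1, h2, h3, h4, h5, h6⟩
    exact ⟨h2.symm, h1.symm, h6, h5, h4, h3⟩
  · rintro ⟨h1, h2, h3, h4, h5, h6⟩
    exact ⟨h2.symm, h1.symm, h6, h5, h4, h3⟩

end S14

namespace S14
open Finset

open Classical in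
noncomputable def idxSet (X U : Finset ℕ) : Finset ℕ :=
  (Finset.range X.card).filter (fun i => ∃ x, ent X i = some x ∧ x ∈ U)

lemma mem_idxSet {X U : Finset ℕ} {i : ℕ} :
    i ∈ idxSet X U ↔ i < X.card ∧ ∃ x, ent X i = some x ∧ x ∈ U := by
  rw [idxSet, Finset.mem_filter, Finset.mem_range]

lemma mem_posImage {X Y U : Finset ℕ} {sh y : ℕ} :
    y ∈ posImage X Y U sh ↔ y ∈ Y ∧ ∃ i x, ent X i = some x ∧ x ∈ U ∧ ent Y (i + sh) = some y := by
  unfold posImage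
  exact @Finset.mem_filter _ _ (fun y => Classical.propDecidable _) _ _

lemma posImage_subset {X Y U : Finset ℕ} {sh : ℕ} : posImage X Y U sh ⊆ Y := by
  intro y hy
  exact (mem_posImage.mp hy).1

/-- index-count of a subset. -/
lemma cnt_sub_eq {X U : Finset ℕ} (hU : U ⊆ X) (n : ℕ) :
    cnt U n = ((idxSet X U).filter (fun i => i < cnt X n)).card := by
  classical
  rw [cnt]
  refine (Finset.card_nbij (fun i => (ent X i).getD 0) ?_ ?_ ?_).symm
  · intro i hi
    rw [Finset.mem_coe, Finset.mem_filter] at hi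
    obtain ⟨hidx, hlt⟩ := hi
    obtain ⟨_, x, hx, hxU⟩ := mem_idxSet.mp hidx
    show (ent X i).getD 0 ∈ _
    rw [hx]
    simp only [Option.getD_some, Finset.mem_coe, Finset.mem_filter]
    exact ⟨hxU, (ent_key hx n).mpr hlt⟩
  · intro i hi j hj hij
    simp only [Finset.coe_filter, Set.mem_setOf_eq] at hi hj
    obtain ⟨_, x, hx, _⟩ := mem_idxSet.mp hi.1
    obtain ⟨_, y, hy, _⟩ := mem_idxSet.mp hj.1
    have hij' : (ent X i).getD 0 = (ent X j).getD 0 := hij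
    rw [hx, hy] at hij'
    simp only [Option.getD_some] at hij'
    subst hij'
    exact ent_inj hx hy
  · intro x hx
    simp only [Finset.coe_filter, Set.mem_setOf_eq, Finset.mem_filter] at hx
    obtain ⟨hxU, hxn⟩ := hx
    obtain ⟨i, hi⟩ := ent_of_mem (hU hxU)
    refine ⟨i, ?_, ?_⟩
    · simp only [Finset.coe_filter, Set.mem_setOf_eq]
      exact ⟨mem_idxSet.mpr ⟨ent_lt_card hi, _, hi, hxU⟩, (ent_key hi n).mp hxn⟩
    · show (ent X i).getD 0 = x
      rw [hi]; rfl

lemma cnt_posImage {X Y U : Finset ℕ} (hU : U ⊆ X) (sh n : ℕ) :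
    cnt (posImage X Y U sh) n = ((idxSet X U).filter (fun i => i + sh < cnt Y n)).card := by
  classical
  rw [cnt]
  refine (Finset.card_nbij (fun i => (ent Y (i + sh)).getD 0) ?_ ?_ ?_).symm
  · intro i hi
    rw [Finset.mem_coe, Finset.mem_filter] at hi
    obtain ⟨hidx, hlt⟩ := hi
    obtain ⟨_, x, hx, hxU⟩ := mem_idxSet.mp hidx
    have hY : i + sh < Y.card := lt_of_lt_of_le hlt (cnt_le_card Y n)
    obtain ⟨y, hy⟩ := ent_some hY
    show (ent Y (i + sh)).getD 0 ∈ _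
    rw [hy]
    simp only [Option.getD_some, Finset.mem_coe, Finset.mem_filter]
    exact ⟨mem_posImage.mpr ⟨ent_mem hy, i, x, hx, hxU, hy⟩, (ent_key hy n).mpr hlt⟩
  · intro i hi j hj hij
    simp only [Finset.coe_filter, Set.mem_setOf_eq, Finset.mem_filter, Finset.mem_range] at hi hj
    obtain ⟨y, hy⟩ := ent_some (lt_of_lt_of_le hi.2 (cnt_le_card Y n))
    obtain ⟨y', hy'⟩ := ent_some (lt_of_lt_of_le hj.2 (cnt_le_card Y n))
    have hij' : (ent Y (i + sh)).getD 0 = (ent Y (j + sh)).getD 0 := hij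
    rw [hy, hy'] at hij'
    simp only [Option.getD_some] at hij'
    subst hij'
    have := ent_inj hy hy'
    omega
  · intro y hy
    simp only [Finset.coe_filter, Set.mem_setOf_eq, Finset.mem_filter] at hy
    obtain ⟨hyp, hyn⟩ := hy
    obtain ⟨hyY, i, x, hx, hxU, hiy⟩ := mem_posImage.mp hyp
    refine ⟨i, ?_, ?_⟩
    · simp only [Finset.coe_filter, Set.mem_setOf_eq]
      exact ⟨mem_idxSet.mpr ⟨ent_lt_card hx, _, hx, hxU⟩, (ent_key hiy n).mp hyn⟩
    · show (ent Y (i + sh)).getD 0 = y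
      rw [hiy]; rfl

lemma filt_mono (I : Finset ℕ) {t t' : ℕ} (h : t ≤ t') :
    (I.filter (fun i => i < t)).card ≤ (I.filter (fun i => i < t')).card :=
  Finset.card_le_card (Finset.monotone_filter_right _ (fun _ _ hi => lt_of_lt_of_le hi h))

lemma filt_lip (I : Finset ℕ) {t t' : ℕ} (h : t ≤ t') :
    (I.filter (fun i => i < t')).card + t ≤ (I.filter (fun i => i < t)).card + t' := by
  have hsub : I.filter (fun i => i < t') ⊆ I.filter (fun i => i < t) ∪ Finset.Ico t t' := by
    intro i hi
    rw [Finset.mem_filter] at hi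
    rw [Finset.mem_union, Finset.mem_filter, Finset.mem_Ico]
    by_cases h' : i < t
    · exact Or.inl ⟨hi.1, h'⟩
    · exact Or.inr ⟨by omega, hi.2⟩
  have h1 := Finset.card_le_card hsub
  have h2 := Finset.card_union_le (I.filter (fun i => i < t)) (Finset.Ico t t')
  have h3 := Nat.card_Ico t t'
  omega

lemma filt_shift (I : Finset ℕ) (sh t : ℕ) :
    (I.filter (fun i => i + sh < t)).card = (I.filter (fun i => i < t - sh)).card := by
  congr 1
  apply Finset.filter_congr
  intro i _
  constructor <;> intro <;> omega

lemma filt_all {I : Finset ℕ} {t : ℕ} (h : ∀ i ∈ I, i < t) :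
    (I.filter (fun i => i < t)).card = I.card := by
  rw [Finset.filter_true_of_mem h]

lemma idxSet_lt {X U : Finset ℕ} {i : ℕ} (h : i ∈ idxSet X U) : i < X.card :=
  (mem_idxSet.mp h).1

end S14

namespace S14
open Finset

lemma cnt_eq_zero_of {s : Finset ℕ} {n : ℕ} (h : ∀ x ∈ s, x < n) : cnt s n = 0 := by
  rw [cnt, Finset.filter_false_of_mem (fun x hx => by have := h x hx; omega), Finset.card_empty]

structure Chain (P Q R S : Finset ℕ) : Prop where
  ca : ∀ n, cnt S n ≤ cnt P n
  cb : ∀ n, cnt Q n ≤ cnt S (n+1)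
  cc : ∀ n, cnt P n ≤ cnt R (n+1)
  cd : ∀ n, cnt R n ≤ cnt Q n + 1

lemma core_forward {P Q R S : Finset ℕ} (hPQ : Disjoint P Q) (hRS : Disjoint R S)
    (hcS : S.card = P.card) (hcR : R.card = Q.card + 1)
    (ch : Chain P Q R S) {M1 M2 : Finset ℕ} (hM1 : M1 ⊆ P) (hM2 : M2 ⊆ Q) :
    Bc (lam (P, Q) (M1, M2)) (lam (R, S) (posImage Q R M2 1, posImage P S M1 0)) := by
  set N1 := posImage Q R M2 1 with hN1def
  set N2 := posImage P S M1 0 with hN2def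
  have hN1R : N1 ⊆ R := posImage_subset
  have hN2S : N2 ⊆ S := posImage_subset
  set I1 := idxSet P M1 with hI1def
  set I2 := idxSet Q M2 with hI2def
  have e1 : ∀ n, cnt ((P \ M1) ∪ M2) n + cnt M1 n = cnt P n + cnt M2 n :=
    fun n => cnt_lam hM1 (hPQ.symm.mono_left hM2) n
  have e2 : ∀ n, cnt ((Q \ M2) ∪ M1) n + cnt M2 n = cnt Q n + cnt M1 n :=
    fun n => cnt_lam hM2 (hPQ.mono_left hM1) n
  have e3 : ∀ n, cnt ((R \ N1) ∪ N2) n + cnt N1 n = cnt R n + cnt N2 n :=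
    fun n => cnt_lam hN1R (hRS.symm.mono_left hN2S) n
  have e4 : ∀ n, cnt ((S \ N2) ∪ N1) n + cnt N2 n = cnt S n + cnt N1 n :=
    fun n => cnt_lam hN2S (hRS.mono_left hN1R) n
  have m1 : ∀ n, cnt M1 n = (I1.filter (fun i => i < cnt P n)).card :=
    fun n => cnt_sub_eq hM1 n
  have m2 : ∀ n, cnt M2 n = (I2.filter (fun i => i < cnt Q n)).card :=
    fun n => cnt_sub_eq hM2 n
  have n2 : ∀ n, cnt N2 n = (I1.filter (fun i => i < cnt S n)).card := by
    intro n
    rw [hN2def, cnt_posImage hM1 0 n, filt_shift]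
    simp
    rfl
  have n1 : ∀ n, cnt N1 n = (I2.filter (fun i => i < cnt R n - 1)).card := by
    intro n
    rw [hN1def, cnt_posImage hM2 1 n, filt_shift]
  have hNM1 : N1.card = M2.card := by
    have hn1 := n1 0
    have hm2 := m2 0
    simp only [cnt_zero] at hn1 hm2
    have hbr : (I2.filter (fun i => i < R.card - 1)).card
        = (I2.filter (fun i => i < Q.card)).card := by
      congr 1
      apply Finset.filter_congr
      intro i _
      constructor <;> intro <;> omega
    omega
  have hNM2 : N2.card = M1.card := by
    have hn2 := n2 0
    have hm1 := m1 0
    simp only [cnt_zero] at hn2 hm1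
    rw [hcS] at hn2
    omega
  refine ⟨?_, ?_, ?_, ?_, ?_, ?_⟩
  · -- card Λ'1 = card Λ2 + 1
    have h3 := e3 0
    have h2 := e2 0
    simp only [cnt_zero] at h3 h2
    simp only [lam]
    omega
  · -- card Λ'2 = card Λ1
    have h4 := e4 0
    have h1 := e1 0
    simp only [cnt_zero] at h4 h1
    simp only [lam]
    omega
  · -- B3
    intro n
    have f1 := filt_lip I1 (ch.ca n)
    have f2 : (I2.filter (fun i => i < cnt R n - 1)).card
        ≤ (I2.filter (fun i => i < cnt Q n)).card :=
      filt_mono I2 (by have := ch.cd n; omega)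
    have g1 := e1 n; have g4 := e4 n
    have k1 := m1 n; have k2 := m2 n; have k3 := n1 n; have k4 := n2 n
    simp only [lam]
    omega
  · -- B4
    intro n
    have f1 : (I1.filter (fun i => i < cnt S (n+1))).card
        ≤ (I1.filter (fun i => i < cnt P n)).card :=
      filt_mono I1 (le_trans (cnt_mono S (by omega : n ≤ n+1)) (ch.ca n))
    have f2 : (I2.filter (fun i => i < cnt Q n)).card + (cnt R (n+1) - 1)
        ≤ (I2.filter (fun i => i < cnt R (n+1) - 1)).card + cnt Q n := by
      apply filt_lip I2
      have h1 := ch.cd (n+1)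
      have h2 := cnt_mono Q (by omega : n ≤ n+1)
      omega
    have hc := ch.cc n
    have hb := ch.cb n
    have g1 := e1 n; have g4 := e4 (n+1)
    have k1 := m1 n; have k2 := m2 n; have k3 := n1 (n+1); have k4 := n2 (n+1)
    simp only [lam]
    omega
  · -- B5
    intro n
    have f1 : (I1.filter (fun i => i < cnt P n)).card + cnt S (n+1)
        ≤ (I1.filter (fun i => i < cnt S (n+1))).card + cnt P n := by
      apply filt_lip I1
      exact le_trans (cnt_mono S (by omega : n ≤ n+1)) (ch.ca n)
    have f2 : (I2.filter (fun i => i < cnt R (n+1) - 1)).card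
        ≤ (I2.filter (fun i => i < cnt Q n)).card := by
      apply filt_mono I2
      have h1 := ch.cd (n+1)
      have h2 := cnt_mono Q (by omega : n ≤ n+1)
      omega
    have hc := ch.cc n
    have hb := ch.cb n
    have g2 := e2 n; have g3 := e3 (n+1)
    have k1 := m1 n; have k2 := m2 n; have k3 := n1 (n+1); have k4 := n2 (n+1)
    simp only [lam]
    omega
  · -- B6
    intro n
    have f1 : (I1.filter (fun i => i < cnt S n)).card
        ≤ (I1.filter (fun i => i < cnt P n)).card := filt_mono I1 (ch.ca n)
    have f2 : (I2.filter (fun i => i < cnt Q n)).card + (cnt R n - 1)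
        ≤ (I2.filter (fun i => i < cnt R n - 1)).card + cnt Q n := by
      apply filt_lip I2
      have := ch.cd n
      omega
    have hd := ch.cd n
    have g2 := e2 n; have g3 := e3 n
    have k1 := m1 n; have k2 := m2 n; have k3 := n1 n; have k4 := n2 n
    simp only [lam]
    omega

lemma core_unique {P Q R S : Finset ℕ} (hPQ : Disjoint P Q) (hRS : Disjoint R S)
    (ch : Chain P Q R S) {M1 M2 N1 N2 N1' N2' : Finset ℕ}
    (hM1 : M1 ⊆ P) (hM2 : M2 ⊆ Q) (hN1 : N1 ⊆ R) (hN2 : N2 ⊆ S)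
    (hN1' : N1' ⊆ R) (hN2' : N2' ⊆ S)
    (h : Bc (lam (P, Q) (M1, M2)) (lam (R, S) (N1, N2)))
    (h' : Bc (lam (P, Q) (M1, M2)) (lam (R, S) (N1', N2'))) :
    lam (R, S) (N1, N2) = lam (R, S) (N1', N2') := by
  obtain ⟨_, _, hb3, _, _, hb6⟩ := h
  obtain ⟨_, _, hb3', _, _, hb6'⟩ := h'
  simp only [lam] at hb3 hb6 hb3' hb6' ⊢
  have e1 : ∀ n, cnt ((P \ M1) ∪ M2) n + cnt M1 n = cnt P n + cnt M2 n :=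
    fun n => cnt_lam hM1 (hPQ.symm.mono_left hM2) n
  have e2 : ∀ n, cnt ((Q \ M2) ∪ M1) n + cnt M2 n = cnt Q n + cnt M1 n :=
    fun n => cnt_lam hM2 (hPQ.mono_left hM1) n
  have e3 : ∀ n, cnt ((R \ N1) ∪ N2) n + cnt N1 n = cnt R n + cnt N2 n :=
    fun n => cnt_lam hN1 (hRS.symm.mono_left hN2) n
  have e4 : ∀ n, cnt ((S \ N2) ∪ N1) n + cnt N2 n = cnt S n + cnt N1 n :=
    fun n => cnt_lam hN2 (hRS.mono_left hN1) n
  have e3' : ∀ n, cnt ((R \ N1') ∪ N2') n + cnt N1' n = cnt R n + cnt N2' n :=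
    fun n => cnt_lam hN1' (hRS.symm.mono_left hN2') n
  have e4' : ∀ n, cnt ((S \ N2') ∪ N1') n + cnt N2' n = cnt S n + cnt N1' n :=
    fun n => cnt_lam hN2' (hRS.mono_left hN1') n
  have sub2 : (S \ N2) ∪ N1 ⊆ R ∪ S :=
    Finset.union_subset ((Finset.sdiff_subset).trans Finset.subset_union_right)
      (hN1.trans Finset.subset_union_left)
  have sub2' : (S \ N2') ∪ N1' ⊆ R ∪ S :=
    Finset.union_subset ((Finset.sdiff_subset).trans Finset.subset_union_right)
      (hN1'.trans Finset.subset_union_left)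
  set V := (R ∪ S).sup id + 1 with hV
  have hVtop : ∀ n, V ≤ n → cnt (R ∪ S) n = 0 := by
    intro n hn
    apply cnt_eq_zero_of
    intro x hx
    have := Finset.le_sup (f := id) hx
    simp only [id] at this
    omega
  have main : ∀ d n, V ≤ n + d → cnt ((S \ N2) ∪ N1) n = cnt ((S \ N2') ∪ N1') n := by
    intro d
    induction d with
    | zero =>
      intro n hn
      simp only [Nat.add_zero] at hn
      have z1 := le_trans (cnt_subset sub2 n) (le_of_eq (hVtop n hn))
      have z2 := le_trans (cnt_subset sub2' n) (le_of_eq (hVtop n hn))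
      omega
    | succ d ih =>
      intro n hn
      have hnext := ih (n+1) (by omega)
      by_cases hT : cnt R n + cnt S n = cnt P n + cnt Q n + 1
      · -- pinned
        have p1 := hb3 n
        have p2 := hb6 n
        have p1' := hb3' n
        have p2' := hb6' n
        have := e1 n; have := e2 n; have := e3 n; have := e4 n
        have := e3' n; have := e4' n
        omega
      · -- T = S level, no element of R ∪ S at n
        have hca := ch.ca n
        have hcb := ch.cb n
        have hcc := ch.cc n
        have hcd := ch.cd n
        have hmR := cnt_mono R (by omega : n ≤ n+1)
        have hmS := cnt_mono S (by omega : n ≤ n+1)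
        have hR : n ∉ R := by
          intro hmem
          have hst := cnt_step R n
          simp only [hmem, if_true] at hst
          omega
        have hS : n ∉ S := by
          intro hmem
          have hst := cnt_step S n
          simp only [hmem, if_true] at hst
          omega
        have hnot : n ∉ (S \ N2) ∪ N1 := by
          intro hmem
          rcases Finset.mem_union.mp (sub2 hmem) with h | h
          · exact hR h
          · exact hS h
        have hnot' : n ∉ (S \ N2') ∪ N1' := by
          intro hmem
          rcases Finset.mem_union.mp (sub2' hmem) with h | h
          · exact hR h
          · exact hS h
        have hst := cnt_step ((S \ N2) ∪ N1) n
        have hst' := cnt_step ((S \ N2') ∪ N1') n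
        simp only [hnot, hnot', if_false] at hst hst'
        omega
  have h2eq : (S \ N2) ∪ N1 = (S \ N2') ∪ N1' := by
    apply cnt_ext
    intro n
    exact main V n (by omega)
  have h1eq : (R \ N1) ∪ N2 = (R \ N1') ∪ N2' := by
    apply cnt_ext
    intro n
    have q1 := e3 n; have q2 := e4 n; have q3 := e3' n; have q4 := e4' n
    have q5 : cnt ((S \ N2) ∪ N1) n = cnt ((S \ N2') ∪ N1') n := by rw [h2eq]
    omega
  exact Prod.ext h1eq h2eq

end S14

namespace S14
open Finset

lemma ent_none {s : Finset ℕ} {i : ℕ} (h : ent s i = none) : s.card ≤ i := by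
  by_contra hcon
  push_neg at hcon
  obtain ⟨x, hx⟩ := ent_some hcon
  rw [hx] at h
  cases h

section Swap

variable {P Q R S : Finset ℕ}
variable (k1c : ∀ n, cnt S n ≤ cnt P n) (k2c : ∀ n, cnt P n ≤ cnt S (n+1) + 1)
variable (k3c : ∀ n, cnt Q n ≤ cnt R (n+1)) (k4c : ∀ n, cnt R n ≤ cnt Q n + 1)
variable (hRS : Disjoint R S)
variable (hcS : S.card = P.card) (hcR : R.card = Q.card + 1)

include k1c k2c k3c k4c hRS hcS hcR

lemma swapA {i p r s : ℕ}
    (hp : ent P i = some p) (hr : ent R i = some r) (hs : ent S i = some s)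
    (hsr : s < r) (hpr : r ≤ p) (hPsi : ∀ q, ent Q i = some q → q < s) :
    Bc (P, Q) ((R \ {r}) ∪ {s}, (S \ {s}) ∪ {r}) := by
  have hrR : r ∈ R := ent_mem hr
  have hsS : s ∈ S := ent_mem hs
  have hsnR : s ∉ R := fun hmem => (Finset.disjoint_left.mp hRS) hmem hsS
  have hrnS : r ∉ S := fun hmem => (Finset.disjoint_left.mp hRS) hrR hmem
  have eR : ∀ n, cnt ((R \ {r}) ∪ {s}) n + (if n ≤ r then 1 else 0)
      = cnt R n + (if n ≤ s then 1 else 0) := by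
    intro n
    have := cnt_lam (Finset.singleton_subset_iff.mpr hrR)
      (Finset.disjoint_singleton_left.mpr hsnR) n
    rwa [cnt_singleton, cnt_singleton] at this
  have eS : ∀ n, cnt ((S \ {s}) ∪ {r}) n + (if n ≤ s then 1 else 0)
      = cnt S n + (if n ≤ r then 1 else 0) := by
    intro n
    have := cnt_lam (Finset.singleton_subset_iff.mpr hsS)
      (Finset.disjoint_singleton_left.mpr hrnS) n
    rwa [cnt_singleton, cnt_singleton] at this
  have hQtop : ∀ n, s ≤ n → cnt Q n ≤ i := by
    intro n hn
    rcases hq : ent Q i with _ | q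
    · exact le_trans (cnt_le_card Q n) (ent_none hq)
    · have hqs := hPsi q hq
      have := ent_key hq n
      omega
  have c1 : ((R \ {r}) ∪ {s}).card = Q.card + 1 := by
    have h1 := eR 0
    simp only [Nat.zero_le, if_true] at h1
    rw [cnt_zero, cnt_zero] at h1
    omega
  have c2 : ((S \ {s}) ∪ {r}).card = P.card := by
    have h1 := eS 0
    simp only [Nat.zero_le, if_true] at h1
    rw [cnt_zero, cnt_zero] at h1
    omega
  have b3 : ∀ n, cnt ((S \ {s}) ∪ {r}) n ≤ cnt P n := by
    intro n
    have es := eS n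
    have h1 := k1c n
    rcases le_or_gt n s with hc1 | hc1
    · rw [if_pos hc1, if_pos (by omega)] at es
      omega
    rcases le_or_gt n r with hc2 | hc2
    · rw [if_neg (by omega), if_pos hc2] at es
      have hP := (ent_key hp n).mp (by omega)
      have hS := ent_key hs n
      omega
    · rw [if_neg (by omega), if_neg (by omega)] at es
      omega
  have b4 : ∀ n, cnt P n ≤ cnt ((S \ {s}) ∪ {r}) (n+1) + 1 := by
    intro n
    have es := eS (n+1)
    have h1 := k2c n
    rcases le_or_gt (n+1) s with hc1 | hc1
    · rw [if_pos hc1, if_pos (by omega)] at es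
      omega
    rcases le_or_gt (n+1) r with hc2 | hc2
    · rw [if_neg (by omega), if_pos hc2] at es
      omega
    · rw [if_neg (by omega), if_neg (by omega)] at es
      omega
  have b5 : ∀ n, cnt Q n ≤ cnt ((R \ {r}) ∪ {s}) (n+1) := by
    intro n
    have er := eR (n+1)
    have h1 := k3c n
    rcases le_or_gt (n+1) s with hc1 | hc1
    · rw [if_pos (by omega), if_pos hc1] at er
      omega
    rcases le_or_gt (n+1) r with hc2 | hc2
    · rw [if_pos hc2, if_neg (by omega)] at er
      have hRk := (ent_key hr (n+1)).mp (by omega)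
      have hQk := hQtop n (by omega)
      omega
    · rw [if_neg (by omega), if_neg (by omega)] at er
      omega
  have b6 : ∀ n, cnt ((R \ {r}) ∪ {s}) n ≤ cnt Q n + 1 := by
    intro n
    have er := eR n
    have h1 := k4c n
    rcases le_or_gt n s with hc1 | hc1
    · rw [if_pos (by omega), if_pos hc1] at er
      omega
    rcases le_or_gt n r with hc2 | hc2
    · rw [if_pos hc2, if_neg (by omega)] at er
      omega
    · rw [if_neg (by omega), if_neg (by omega)] at er
      omega
  exact ⟨c1, c2, b3, b4, b5, b6⟩

lemma swapB {i q s r' ri : ℕ}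
    (hq : ent Q i = some q) (hs : ent S i = some s) (hr' : ent R (i+1) = some r')
    (hri : ent R i = some ri) (hsri : s < ri)
    (hr's : r' < s) (hqs : s ≤ q) (hPtop : ∀ p', ent P (i+1) = some p' → p' < r') :
    Bc (P, Q) ((R \ {r'}) ∪ {s}, (S \ {s}) ∪ {r'}) := by
  have hrR : r' ∈ R := ent_mem hr'
  have hsS : s ∈ S := ent_mem hs
  have hsnR : s ∉ R := fun hmem => (Finset.disjoint_left.mp hRS) hmem hsS
  have hrnS : r' ∉ S := fun hmem => (Finset.disjoint_left.mp hRS) hrR hmem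
  have eR : ∀ n, cnt ((R \ {r'}) ∪ {s}) n + (if n ≤ r' then 1 else 0)
      = cnt R n + (if n ≤ s then 1 else 0) := by
    intro n
    have := cnt_lam (Finset.singleton_subset_iff.mpr hrR)
      (Finset.disjoint_singleton_left.mpr hsnR) n
    rwa [cnt_singleton, cnt_singleton] at this
  have eS : ∀ n, cnt ((S \ {s}) ∪ {r'}) n + (if n ≤ s then 1 else 0)
      = cnt S n + (if n ≤ r' then 1 else 0) := by
    intro n
    have := cnt_lam (Finset.singleton_subset_iff.mpr hsS)
      (Finset.disjoint_singleton_left.mpr hrnS) n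
    rwa [cnt_singleton, cnt_singleton] at this
  have hPtop' : ∀ n, r' ≤ n → cnt P n ≤ i + 1 := by
    intro n hn
    rcases hp : ent P (i+1) with _ | p'
    · exact le_trans (cnt_le_card P n) (ent_none hp)
    · have hplt := hPtop p' hp
      have := ent_key hp n
      omega
  have c1 : ((R \ {r'}) ∪ {s}).card = Q.card + 1 := by
    have h1 := eR 0
    simp only [Nat.zero_le, if_true] at h1
    rw [cnt_zero, cnt_zero] at h1
    omega
  have c2 : ((S \ {s}) ∪ {r'}).card = P.card := by
    have h1 := eS 0
    simp only [Nat.zero_le, if_true] at h1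
    rw [cnt_zero, cnt_zero] at h1
    omega
  have b3 : ∀ n, cnt ((S \ {s}) ∪ {r'}) n ≤ cnt P n := by
    intro n
    have es := eS n
    have h1 := k1c n
    rcases le_or_gt n r' with hc1 | hc1
    · rw [if_pos (by omega), if_pos hc1] at es
      omega
    rcases le_or_gt n s with hc2 | hc2
    · rw [if_pos hc2, if_neg (by omega)] at es
      omega
    · rw [if_neg (by omega), if_neg (by omega)] at es
      omega
  have b4 : ∀ n, cnt P n ≤ cnt ((S \ {s}) ∪ {r'}) (n+1) + 1 := by
    intro n
    have es := eS (n+1)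
    have h1 := k2c n
    rcases le_or_gt (n+1) r' with hc1 | hc1
    · rw [if_pos (by omega), if_pos hc1] at es
      omega
    rcases le_or_gt (n+1) s with hc2 | hc2
    · rw [if_pos hc2, if_neg (by omega)] at es
      have hSk2 := ent_key hs (n+1)
      have hPk := hPtop' n (by omega)
      omega
    · rw [if_neg (by omega), if_neg (by omega)] at es
      omega
  have b5 : ∀ n, cnt Q n ≤ cnt ((R \ {r'}) ∪ {s}) (n+1) := by
    intro n
    have er := eR (n+1)
    have h1 := k3c n
    rcases le_or_gt (n+1) r' with hc1 | hc1
    · rw [if_pos hc1, if_pos (by omega)] at er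
      omega
    rcases le_or_gt (n+1) s with hc2 | hc2
    · rw [if_neg (by omega), if_pos hc2] at er
      omega
    · rw [if_neg (by omega), if_neg (by omega)] at er
      omega
  have b6 : ∀ n, cnt ((R \ {r'}) ∪ {s}) n ≤ cnt Q n + 1 := by
    intro n
    have er := eR n
    have h1 := k4c n
    rcases le_or_gt n r' with hc1 | hc1
    · rw [if_pos hc1, if_pos (by omega)] at er
      omega
    rcases le_or_gt n s with hc2 | hc2
    · rw [if_neg (by omega), if_pos hc2] at er
      have hRk := ent_key hri n
      have hRk2 := ent_key hr' n
      have hQk := ent_key hq n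
      omega
    · rw [if_neg (by omega), if_neg (by omega)] at er
      omega
  exact ⟨c1, c2, b3, b4, b5, b6⟩

lemma chain_of_unique
    (sRS : ∀ i r s, ent R i = some r → ent S i = some s → s < r)
    (sSR : ∀ i s r', ent S i = some s → ent R (i+1) = some r' → r' < s)
    (hQP : Q.card ≤ P.card) (hPQc : P.card ≤ Q.card + 1)
    (GU : ∀ N1 N2 : Finset ℕ, N1 ⊆ R → N2 ⊆ S → N1.card = N2.card →
      Bc (P, Q) ((R \ N1) ∪ N2, (S \ N2) ∪ N1) → N1 = ∅) :
    Chain P Q R S := by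
  have main : ∀ d i, R.card ≤ i + d →
      (∀ p r, ent P i = some p → ent R i = some r → p < r) ∧
      (∀ q s, ent Q i = some q → ent S i = some s → q < s) := by
    intro d
    induction d with
    | zero =>
      intro i hi
      constructor
      · intro p r hp hr
        have := ent_lt_card hr
        omega
      · intro q s hq hs
        have := ent_lt_card hq
        omega
    | succ d ih =>
      intro i hi
      have hPsi : ∀ q s, ent Q i = some q → ent S i = some s → q < s := by
        intro q s hq hs
        by_contra hcon
        push_neg at hcon
        have hiQ := ent_lt_card hq
        obtain ⟨r', hr'⟩ := ent_some (show i + 1 < R.card by omega)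
        obtain ⟨ri, hri⟩ := ent_some (show i < R.card by omega)
        have hbc := swapB k1c k2c k3c k4c hRS hcS hcR hq hs hr' hri
          (sRS i ri s hri hs) (sSR i s r' hs hr') hcon
          (fun p' hp' => (ih (i+1) (by omega)).1 p' r' hp' hr')
        have hGU := GU {r'} {s} (Finset.singleton_subset_iff.mpr (ent_mem hr'))
          (Finset.singleton_subset_iff.mpr (ent_mem hs)) (by simp) hbc
        simp at hGU
      have hPhi : ∀ p r, ent P i = some p → ent R i = some r → p < r := by
        intro p r hp hr
        by_contra hcon
        push_neg at hcon
        have hiP := ent_lt_card hp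
        obtain ⟨s, hs⟩ := ent_some (show i < S.card by omega)
        have hbc := swapA k1c k2c k3c k4c hRS hcS hcR hp hr hs
          (sRS i r s hr hs) hcon (fun qq hqq => hPsi qq s hqq hs)
        have hGU := GU {r} {s} (Finset.singleton_subset_iff.mpr (ent_mem hr))
          (Finset.singleton_subset_iff.mpr (ent_mem hs)) (by simp) hbc
        simp at hGU
      exact ⟨hPhi, hPsi⟩
  refine ⟨k1c, ?_, ?_, k4c⟩
  · -- cb
    apply (orel_gt_iff S Q (by omega)).mp
    intro i
    rcases hS : ent S i with _ | s
    · exact oRel_none_left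
    rcases hQ : ent Q i with _ | q
    · exact oRel_none_right
    rw [oRel_some_some]
    exact (main R.card i (by omega)).2 q s hQ hS
  · -- cc
    apply (orel_gt_iff R P (by omega)).mp
    intro i
    rcases hR : ent R i with _ | r
    · exact oRel_none_left
    rcases hP : ent P i with _ | p
    · exact oRel_none_right
    rw [oRel_some_some]
    exact (main R.card i (by omega)).1 p r hP hR

end Swap
end S14

namespace S14
open Finset

lemma card_lam_eq {X : Finset ℕ} {N1 N2 : Finset ℕ} (h1 : N1 ⊆ X) (h2 : Disjoint N2 X)
    (hc : N1.card = N2.card) : ((X \ N1) ∪ N2).card = X.card := by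
  have h := cnt_lam h1 h2 0
  simp only [cnt_zero] at h
  omega

lemma lam_empty (Z : Symb) : lam Z (∅, ∅) = Z := by
  simp [lam]

lemma self_mem_sbar (Z : Symb) : Z ∈ Sbar Z :=
  ⟨(∅, ∅), ⟨Finset.empty_subset _, Finset.empty_subset _⟩, (lam_empty Z).symm⟩

lemma strict_same {X Y : Finset ℕ} (hd : Disjoint X Y)
    (h : ∀ i, oRel (· ≥ ·) (ent X i) (ent Y i)) :
    ∀ i x y, ent X i = some x → ent Y i = some y → y < x := by
  intro i x y hx hy
  have h1 := h i
  rw [hx, hy, oRel_some_some] at h1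
  have hne : x ≠ y := fun he => Finset.disjoint_left.mp hd (ent_mem hx) (he ▸ ent_mem hy)
  omega

lemma strict_shift {X Y : Finset ℕ} (hd : Disjoint X Y)
    (h : ∀ i, oRel (· ≥ ·) (ent Y i) (ent X (i+1))) :
    ∀ i y x, ent Y i = some y → ent X (i+1) = some x → x < y := by
  intro i y x hy hx
  have h1 := h i
  rw [hx, hy, oRel_some_some] at h1
  have hne : y ≠ x := by
    intro he
    exact Finset.disjoint_left.mp hd (ent_mem hx) (he ▸ ent_mem hy)
  omega

end S14


open S14 in
theorem stmt14 (m m' : ℕ) (Z Z' : Symb) (hm : m' = m ∨ m' = m + 1)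
    (hZ : IsSpecial1 Z m) (hZ' : IsSpecial0 Z' m')
    (hregZ : Regular Z) (hregZ' : Regular Z') (h11 : OneToOne Z Z' m m') :
    (m' = m + 1 → ∀ M : Symb, SubZI M Z → ∀ Λ' ∈ Sbar Z',
      (BbarPlus Z Z' m m' (lam Z M) Λ' ↔
       Λ' = lam Z' (posImage Z.2 Z'.1 M.2 1, posImage Z.1 Z'.2 M.1 0))) ∧
    (m' = m → ∀ N : Symb, SubZI N Z' → ∀ Λ ∈ Sbar Z,
      (BbarPlus Z Z' m m' Λ (lam Z' N) ↔
       Λ = lam Z (posImage Z'.2 Z.1 N.2 1, posImage Z'.1 Z.2 N.1 0))) := by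
  obtain ⟨hA, hB, hZ1, hZ2⟩ := hZ
  obtain ⟨hC, hD, hZ'1, hZ'2⟩ := hZ'
  have hZZ' : DRel Z Z' m m' Z Z' := by
    have hmem : Z' ∈ ({Z'} : Set Symb) := rfl
    rw [← h11.2.1] at hmem
    exact hmem
  have hsd1 : Z.1 \ Z.2 = Z.1 := Finset.sdiff_eq_self_of_disjoint hregZ
  have hsd2 : Z.2 \ Z.1 = Z.2 := Finset.sdiff_eq_self_of_disjoint hregZ.symm
  have hsd1' : Z'.1 \ Z'.2 = Z'.1 := Finset.sdiff_eq_self_of_disjoint hregZ'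
  have hsd2' : Z'.2 \ Z'.1 = Z'.2 := Finset.sdiff_eq_self_of_disjoint hregZ'.symm
  constructor
  · -- case m' = m + 1
    intro hm' M hM Λ' hΛ'
    have hBm1ZZ' : Bm1 Z Z' := by
      rcases hZZ'.1.2.2 with ⟨he, _⟩ | ⟨_, hb⟩
      · omega
      · exact hb
    obtain ⟨c1, c2, k1c, k2c, k3c, k4c⟩ := bm1_iff_bc.mp hBm1ZZ'
    have sRS : ∀ i r s, ent Z'.1 i = some r → ent Z'.2 i = some s → s < r :=
      fun i r s hr hs => strict_same hregZ' hZ'1 i r s hr hs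
    have sSR : ∀ i s r', ent Z'.2 i = some s → ent Z'.1 (i+1) = some r' → r' < s :=
      fun i s r' hs hr' => strict_shift hregZ' hZ'2 i s r' hs hr'
    have hGU : ∀ N1 N2 : Finset ℕ, N1 ⊆ Z'.1 → N2 ⊆ Z'.2 → N1.card = N2.card →
        Bc (Z.1, Z.2) ((Z'.1 \ N1) ∪ N2, (Z'.2 \ N2) ∪ N1) → N1 = ∅ := by
      intro N1 N2 hN1 hN2 hcard hbc
      have hBm1 : Bm1 Z (lam Z' (N1, N2)) := bm1_iff_bc.mpr hbc
      have hdrel : DRel Z Z' m m' Z (lam Z' (N1, N2)) := by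
        refine ⟨⟨self_mem_sbar Z, ⟨(N1, N2), ⟨by rw [hsd1']; exact hN1,
          by rw [hsd2']; exact hN2⟩, rfl⟩, Or.inr ⟨hm', hBm1⟩⟩, hA, hB, ?_, ?_⟩
        · exact (card_lam_eq hN1 (hregZ'.symm.mono_left hN2) hcard).trans hC
        · exact (card_lam_eq hN2 (hregZ'.mono_left hN1) hcard.symm).trans hD
      have hmem : lam Z' (N1, N2) ∈ {Λ'' | DRel Z Z' m m' Z Λ''} := hdrel
      rw [h11.2.1] at hmem
      have heq : lam Z' (N1, N2) = Z' := hmem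
      have hsub : N1 ⊆ Z'.2 := by
        intro x hx
        have : x ∈ (Z'.2 \ N2) ∪ N1 := Finset.mem_union_right _ hx
        have h2 : (Z'.2 \ N2) ∪ N1 = Z'.2 := congrArg Prod.snd heq
        rwa [h2] at this
      exact Finset.eq_empty_iff_forall_notMem.mpr
        (fun x hx => Finset.disjoint_left.mp hregZ' (hN1 hx) (hsub hx))
    have hch : Chain Z.1 Z.2 Z'.1 Z'.2 :=
      chain_of_unique k1c k2c k3c k4c hregZ' c2 c1 sRS sSR (by omega) (by omega) hGU
    have hM1 : M.1 ⊆ Z.1 := hM.1.trans Finset.sdiff_subset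
    have hM2 : M.2 ⊆ Z.2 := hM.2.trans Finset.sdiff_subset
    have hbcT : Bc (lam Z M) (lam Z' (posImage Z.2 Z'.1 M.2 1, posImage Z.1 Z'.2 M.1 0)) :=
      core_forward hregZ hregZ' c2 c1 hch hM1 hM2
    constructor
    · intro hB'
      obtain ⟨_, _, hor⟩ := hB'
      have hBm1 : Bm1 (lam Z M) Λ' := by
        rcases hor with ⟨he, _⟩ | ⟨_, hb⟩
        · omega
        · exact hb
      obtain ⟨N, hNsub, rfl⟩ := hΛ'
      have hN1 : N.1 ⊆ Z'.1 := hNsub.1.trans Finset.sdiff_subset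
      have hN2 : N.2 ⊆ Z'.2 := hNsub.2.trans Finset.sdiff_subset
      exact core_unique hregZ hregZ' hch hM1 hM2 hN1 hN2
        posImage_subset posImage_subset (bm1_iff_bc.mp hBm1) hbcT
    · rintro rfl
      refine ⟨⟨M, hM, rfl⟩, ⟨(posImage Z.2 Z'.1 M.2 1, posImage Z.1 Z'.2 M.1 0),
        ⟨by rw [hsd1']; exact posImage_subset, by rw [hsd2']; exact posImage_subset⟩, rfl⟩,
        Or.inr ⟨hm', bm1_iff_bc.mpr hbcT⟩⟩
  · -- case m' = m
    intro hm' N hN Λ hΛ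
    have hBmZZ' : Bm Z Z' := by
      rcases hZZ'.1.2.2 with ⟨_, hb⟩ | ⟨he, _⟩
      · exact hb
      · omega
    obtain ⟨c1, c2, k1c, k2c, k3c, k4c⟩ := bm1_iff_bc.mp (bm_iff_bm1.mp hBmZZ')
    have sRS : ∀ i r s, ent Z.1 i = some r → ent Z.2 i = some s → s < r :=
      fun i r s hr hs => strict_same hregZ hZ1 i r s hr hs
    have sSR : ∀ i s r', ent Z.2 i = some s → ent Z.1 (i+1) = some r' → r' < s :=
      fun i s r' hs hr' => strict_shift hregZ hZ2 i s r' hs hr'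
    have hGU : ∀ N1 N2 : Finset ℕ, N1 ⊆ Z.1 → N2 ⊆ Z.2 → N1.card = N2.card →
        Bc (Z'.1, Z'.2) ((Z.1 \ N1) ∪ N2, (Z.2 \ N2) ∪ N1) → N1 = ∅ := by
      intro N1 N2 hN1 hN2 hcard hbc
      have hBm : Bm (lam Z (N1, N2)) Z' := bm_iff_bm1.mpr (bm1_iff_bc.mpr hbc)
      have hdrel : DRel Z Z' m m' (lam Z (N1, N2)) Z' := by
        refine ⟨⟨⟨(N1, N2), ⟨by rw [hsd1]; exact hN1, by rw [hsd2]; exact hN2⟩, rfl⟩,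
          self_mem_sbar Z', Or.inl ⟨hm', hBm⟩⟩, ?_, ?_, hC, hD⟩
        · exact (card_lam_eq hN1 (hregZ.symm.mono_left hN2) hcard).trans hA
        · exact (card_lam_eq hN2 (hregZ.mono_left hN1) hcard.symm).trans hB
      have hmem : lam Z (N1, N2) ∈ {Λ'' | DRel Z Z' m m' Λ'' Z'} := hdrel
      rw [h11.2.2] at hmem
      have heq : lam Z (N1, N2) = Z := hmem
      have hsub : N1 ⊆ Z.2 := by
        intro x hx
        have : x ∈ (Z.2 \ N2) ∪ N1 := Finset.mem_union_right _ hx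
        have h2 : (Z.2 \ N2) ∪ N1 = Z.2 := congrArg Prod.snd heq
        rwa [h2] at this
      exact Finset.eq_empty_iff_forall_notMem.mpr
        (fun x hx => Finset.disjoint_left.mp hregZ (hN1 hx) (hsub hx))
    have hch : Chain Z'.1 Z'.2 Z.1 Z.2 :=
      chain_of_unique k1c k2c k3c k4c hregZ c2 c1 sRS sSR (by omega) (by omega) hGU
    have hN1 : N.1 ⊆ Z'.1 := hN.1.trans Finset.sdiff_subset
    have hN2 : N.2 ⊆ Z'.2 := hN.2.trans Finset.sdiff_subset
    have hbcT : Bc (lam Z' N) (lam Z (posImage Z'.2 Z.1 N.2 1, posImage Z'.1 Z.2 N.1 0)) :=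
      core_forward hregZ' hregZ c2 c1 hch hN1 hN2
    constructor
    · intro hB'
      obtain ⟨_, _, hor⟩ := hB'
      have hBm : Bm Λ (lam Z' N) := by
        rcases hor with ⟨_, hb⟩ | ⟨he, _⟩
        · exact hb
        · omega
      obtain ⟨M, hMsub, rfl⟩ := hΛ
      have hM1 : M.1 ⊆ Z.1 := hMsub.1.trans Finset.sdiff_subset
      have hM2 : M.2 ⊆ Z.2 := hMsub.2.trans Finset.sdiff_subset
      exact core_unique hregZ' hregZ hch hN1 hN2 hM1 hM2
        posImage_subset posImage_subset (bm1_iff_bc.mp (bm_iff_bm1.mp hBm)) hbcT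
    · rintro rfl
      refine ⟨⟨(posImage Z'.2 Z.1 N.2 1, posImage Z'.1 Z.2 N.1 0),
        ⟨by rw [hsd1]; exact posImage_subset, by rw [hsd2]; exact posImage_subset⟩, rfl⟩,
        ⟨N, hN, rfl⟩, Or.inl ⟨hm', bm_iff_bm1.mpr (bm1_iff_bc.mpr hbcT)⟩⟩
end

section
/- Let Z = (a_1,…,a_{m+1}; b_1,…,b_m) be a special symbol of defect 1 and Z' = (c_1,…,c_{m'}; d_1,…,d_{m'}) a special symbol of defect 0 with m' = m or m' = m+1. Suppose both Z and Z' are regular and D_{Z,Z'} is one-to-one. Let Z_(m) := (2m, 2m−2, …, 0; 2m−1, 2m−3, …, 1) and Z'_(m') := (2m'−1, 2m'−3, …, 1; 2m'−2, 2m'−4, …, 0), which are regular special symbols of defects 1 and 0 respectively. Define bijections h (on the entries of Z) by a_i ↦ 2m+2−2i, b_i ↦ 2m+1−2i, and h' (on the entries of Z') by c_i ↦ 2m'+1−2i, d_i ↦ 2m'−2i, and the induced bijections h̄: S̄_Z → S̄_{Z_(m)}, Λ_M ↦ Λ_{h(M)}, and h̄': S̄_{Z'} → S̄_{Z'_(m')},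 Λ_N ↦ Λ_{h'(N)}. Then for all Λ ∈ S̄_Z and Λ' ∈ S̄_{Z'}, (Λ,Λ') ∈ B̄⁺_{Z,Z'} if and only if (h̄(Λ), h̄'(Λ')) ∈ B̄⁺_{Z_(m),Z'_(m')}. -/
open scoped symmDiff

/-- The regular special symbol `Z_(m) = (2m, 2m-2, …, 0; 2m-1, 2m-3, …, 1)`. -/
def Zreg1 (m : ℕ) : Symb :=
  ((Finset.range (m + 1)).image fun j => 2 * j, (Finset.range m).image fun j => 2 * j + 1)

/-- The regular special symbol `Z'_(m') = (2m'-1, 2m'-3, …, 1; 2m'-2, 2m'-4, …, 0)`. -/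
def Zreg0 (m' : ℕ) : Symb :=
  ((Finset.range m').image fun j => 2 * j + 1, (Finset.range m').image fun j => 2 * j)

namespace Tool

lemma rowList_sorted (s : Finset ℕ) : (rowList s).Pairwise (· > ·) := by
  rw [rowList, List.pairwise_reverse]
  exact s.sortedLT_sort.pairwise

lemma length_rowList (s : Finset ℕ) : (rowList s).length = s.card := by
  simp [rowList]

lemma mem_rowList {s : Finset ℕ} {x : ℕ} : x ∈ rowList s ↔ x ∈ s := by
  simp [rowList]

lemma nodup_rowList (s : Finset ℕ) : (rowList s).Nodup := by
  simp [rowList, Finset.sort_nodup]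

lemma ent_mem {s : Finset ℕ} {i x} (h : ent s i = some x) : x ∈ s := by
  rw [← mem_rowList]
  exact List.mem_of_getElem? h

lemma ent_eq_none_iff {s : Finset ℕ} {i} : ent s i = none ↔ s.card ≤ i := by
  rw [ent, List.getElem?_eq_none_iff, length_rowList]

lemma ent_isSome_iff {s : Finset ℕ} {i} : (∃ x, ent s i = some x) ↔ i < s.card := by
  rw [← length_rowList, ent]
  constructor
  · rintro ⟨x, hx⟩; exact (List.getElem?_eq_some_iff.mp hx).1
  · intro h; exact ⟨_, List.getElem?_eq_getElem h⟩

lemma ent_lt {s : Finset ℕ} {i j x y} (hij : i < j)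
    (hi : ent s i = some x) (hj : ent s j = some y) : y < x := by
  have hs := rowList_sorted s
  rw [List.pairwise_iff_getElem] at hs
  obtain ⟨hi', rfl⟩ := List.getElem?_eq_some_iff.mp hi
  obtain ⟨hj', rfl⟩ := List.getElem?_eq_some_iff.mp hj
  exact hs i j hi' hj' hij

lemma ent_le {s : Finset ℕ} {i j x y} (hij : i ≤ j)
    (hi : ent s i = some x) (hj : ent s j = some y) : y ≤ x := by
  rcases eq_or_lt_of_le hij with rfl | h
  · rw [hi] at hj; exact le_of_eq (Option.some_injective _ hj).symm
  · exact le_of_lt (ent_lt h hi hj)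

lemma ent_pos_inj {s : Finset ℕ} {i j x} (hi : ent s i = some x)
    (hj : ent s j = some x) : i = j := by
  rcases lt_trichotomy i j with h | h | h
  · exact absurd (ent_lt h hi hj) (lt_irrefl x)
  · exact h
  · exact absurd (ent_lt h hj hi) (lt_irrefl x)

lemma mem_iff_ent {s : Finset ℕ} {x : ℕ} : x ∈ s ↔ ∃ i, ent s i = some x := by
  rw [← mem_rowList]
  constructor
  · intro h
    obtain ⟨i, hi, hx⟩ := List.getElem_of_mem h
    exact ⟨i, by rw [ent]; exact List.getElem?_eq_some_iff.mpr ⟨hi, hx⟩⟩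
  · rintro ⟨i, hi⟩; exact List.mem_of_getElem? hi

/-- Sorting an image under a strictly monotone (on `s`) map. -/
lemma rowList_image {s : Finset ℕ} {f : ℕ → ℕ} (hf : ∀ x ∈ s, ∀ y ∈ s, x < y → f x < f y) :
    rowList (s.image f) = (rowList s).map f := by
  have key : (s.image f).sort (· ≤ ·) = (s.sort (· ≤ ·)).map f := by
    refine List.Perm.eq_of_pairwise' (r := (· ≤ ·)) ?_ ?_ ?_
    rotate_right
    · apply List.perm_of_nodup_nodup_toFinset_eq
      · exact Finset.sort_nodup _ _
      · apply List.Nodup.map_on _ (Finset.sort_nodup _ _)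
        intro x hx y hy hxy
        rw [Finset.mem_sort] at hx hy
        rcases lt_trichotomy x y with h | h | h
        · exact absurd hxy (ne_of_lt (hf x hx y hy h))
        · exact h
        · exact absurd hxy.symm (ne_of_lt (hf y hy x hx h))
      · ext y
        simp only [List.mem_toFinset, Finset.mem_sort, List.mem_map, Finset.mem_image]
    · exact Finset.pairwise_sort _ _
    · rw [List.pairwise_map]
      apply List.Pairwise.imp_of_mem _ (s.sortedLT_sort.pairwise)
      intro a b ha hb hab
      rw [Finset.mem_sort] at ha hb
      exact le_of_lt (hf a ha b hb hab)
  rw [rowList, rowList, key, List.map_reverse]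

lemma ent_image {s : Finset ℕ} {f : ℕ → ℕ} (hf : ∀ x ∈ s, ∀ y ∈ s, x < y → f x < f y) (i : ℕ) :
    ent (s.image f) i = (ent s i).map f := by
  rw [ent, ent, rowList_image hf, List.getElem?_map]


lemma ent_lt_card {s : Finset ℕ} {i x} (h : ent s i = some x) : i < s.card := by
  rw [← length_rowList]; exact (List.getElem?_eq_some_iff.mp h).1

lemma ent_some_of_lt {s : Finset ℕ} {i} (h : i < s.card) : ∃ x, ent s i = some x :=
  ent_isSome_iff.mpr h

/-- position of an element in the decreasing enumeration -/
def pidx (s : Finset ℕ) (x : ℕ) : ℕ := (rowList s).idxOf x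

lemma ent_pidx {s : Finset ℕ} {x : ℕ} (h : x ∈ s) : ent s (pidx s x) = some x := by
  rw [← mem_rowList] at h
  rw [ent, pidx]
  rw [List.getElem?_eq_getElem (List.idxOf_lt_length_iff.mpr h)]
  simp [List.getElem_idxOf]

lemma pidx_of_ent {s : Finset ℕ} {x : ℕ} {p : ℕ} (h : ent s p = some x) : pidx s x = p :=
  ent_pos_inj (ent_pidx (ent_mem h)) h

lemma oRel_none_right {r} {x : Option ℕ} : oRel r x none := by
  cases x <;> trivial

lemma oRel_none_left {r} {x : Option ℕ} : oRel r none x := by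
  cases x <;> trivial

lemma oRel_some {r} {x y : ℕ} : oRel r (some x) (some y) ↔ r x y := Iff.rfl

lemma oRel_strict {A B : Finset ℕ} {i j : ℕ} (hd : Disjoint A B)
    (h : oRel (· ≥ ·) (ent A i) (ent B j)) : oRel (· > ·) (ent A i) (ent B j) := by
  rcases hA : ent A i with _ | x
  · exact oRel_none_left
  rcases hB : ent B j with _ | y
  · exact oRel_none_right
  rw [hA, hB] at h
  have hxy : x ≠ y := fun hxy =>
    Finset.disjoint_left.mp hd (ent_mem hA) (hxy ▸ ent_mem hB)
  exact lt_of_le_of_ne h (Ne.symm hxy)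

lemma oRel_map_iff {r r' : ℕ → ℕ → Prop} {o o' : Option ℕ} {g g' : ℕ → ℕ}
    (ho : ∀ x y, o = some x → o' = some y → (r x y ↔ r' (g x) (g' y))) :
    (oRel r o o' ↔ oRel r' (o.map g) (o'.map g')) := by
  cases o with
  | none => simp [oRel_none_left]
  | some x =>
    cases o' with
    | none => simp [oRel_none_right]
    | some y => simpa [oRel_some] using ho x y rfl rfl

/-- interlacing of type V1: `A i > B i ≥ A (i+1)` gives position comparison. -/
lemma posV1 {A B : Finset ℕ} {p q x y : ℕ}
    (h1 : ∀ i, oRel (· > ·) (ent A i) (ent B i))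
    (h2 : ∀ i, oRel (· ≥ ·) (ent B i) (ent A (i + 1)))
    (hx : ent A p = some x) (hy : ent B q = some y) : y < x ↔ p ≤ q := by
  constructor
  · intro hxy
    by_contra hpq
    push_neg at hpq
    obtain ⟨w, hw⟩ := ent_some_of_lt (s := A) (i := q + 1) (lt_of_le_of_lt hpq (ent_lt_card hx))
    have h2q := h2 q
    rw [hy, hw, oRel_some] at h2q
    have : x ≤ w := ent_le hpq hw hx
    omega
  · intro hpq
    obtain ⟨w, hw⟩ := ent_some_of_lt (s := B) (i := p) (lt_of_le_of_lt hpq (ent_lt_card hy))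
    have h1p := h1 p
    rw [hx, hw, oRel_some] at h1p
    have : y ≤ w := ent_le hpq hw hy
    omega

/-- interlacing of type V2: `A i ≥ B i > A (i+1)` gives position comparison. -/
lemma posV2 {A B : Finset ℕ} {p q x y : ℕ}
    (h1 : ∀ i, oRel (· ≥ ·) (ent A i) (ent B i))
    (h2 : ∀ i, oRel (· > ·) (ent B i) (ent A (i + 1)))
    (hx : ent A p = some x) (hy : ent B q = some y) : y ≤ x ↔ p ≤ q := by
  constructor
  · intro hxy
    by_contra hpq
    push_neg at hpq
    obtain ⟨w, hw⟩ := ent_some_of_lt (s := A) (i := q + 1) (lt_of_le_of_lt hpq (ent_lt_card hx))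
    have h2q := h2 q
    rw [hy, hw, oRel_some] at h2q
    have : x ≤ w := ent_le hpq hw hx
    omega
  · intro hpq
    obtain ⟨w, hw⟩ := ent_some_of_lt (s := B) (i := p) (lt_of_le_of_lt hpq (ent_lt_card hy))
    have h1p := h1 p
    rw [hx, hw, oRel_some] at h1p
    have : y ≤ w := ent_le hpq hw hy
    omega

lemma strictMonoOn_injOn {s : Finset ℕ} {f : ℕ → ℕ}
    (hf : ∀ x ∈ s, ∀ y ∈ s, x < y → f x < f y) :
    ∀ x ∈ s, ∀ y ∈ s, f x = f y → x = y := by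
  intro x hx y hy hxy
  rcases lt_trichotomy x y with h | h | h
  · exact absurd hxy (ne_of_lt (hf x hx y hy h))
  · exact h
  · exact absurd hxy.symm (ne_of_lt (hf y hy x hx h))

lemma image_sdiff' {s t : Finset ℕ} {f : ℕ → ℕ} (hts : t ⊆ s)
    (hinj : ∀ x ∈ s, ∀ y ∈ s, f x = f y → x = y) :
    (s \ t).image f = s.image f \ t.image f := by
  ext y
  simp only [Finset.mem_image, Finset.mem_sdiff]
  constructor
  · rintro ⟨x, ⟨hxs, hxt⟩, rfl⟩
    refine ⟨⟨x, hxs, rfl⟩, ?_⟩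
    rintro ⟨x', hx't, hx'⟩
    exact hxt (hinj x' (hts hx't) x hxs hx' ▸ hx't)
  · rintro ⟨⟨x, hxs, rfl⟩, hy⟩
    exact ⟨x, ⟨hxs, fun hxt => hy ⟨x, hxt, rfl⟩⟩, rfl⟩

lemma gap_of_nbrs {s : Finset ℕ} {x y p} (hx : ent s p = some x)
    (h1 : ∀ w j, ent s j = some w → j + 1 = p → y < w)
    (h2 : ∀ w, ent s (p + 1) = some w → w < y) :
    ∀ z ∈ s, z ≠ x → (x < z ↔ y < z) := by
  intro z hz hzx
  obtain ⟨j, hj⟩ := mem_iff_ent.mp hz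
  have hjp : j ≠ p := fun h => hzx (by rw [h, hx] at hj; exact (Option.some_injective _ hj).symm)
  rcases lt_or_gt_of_ne hjp with h | h
  · have hp1 : p - 1 < s.card := lt_of_le_of_lt (Nat.sub_le p 1) (ent_lt_card hx)
    obtain ⟨w, hw⟩ := ent_some_of_lt hp1
    have hyw : y < w := h1 w (p - 1) hw (by omega)
    have hwz : w ≤ z := ent_le (by omega) hj hw
    have hxz : x < z := ent_lt h hj hx
    constructor <;> intro <;> omega
  · obtain ⟨w, hw⟩ := ent_some_of_lt (s := s) (i := p + 1) (lt_of_le_of_lt h (ent_lt_card hj))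
    have hwy : w < y := h2 w hw
    have hzw : z ≤ w := ent_le h hw hj
    have hzx' : z < x := ent_lt h hx hj
    constructor <;> intro <;> omega

/-- Replacing the element at position `p` by a new element fitting the same gap. -/
lemma replace_spec {s : Finset ℕ} {x y p} (hx : ent s p = some x) (hy : y ∉ s)
    (gap : ∀ z ∈ s, z ≠ x → (x < z ↔ y < z)) :
    (s \ {x} ∪ {y}).card = s.card ∧ ent (s \ {x} ∪ {y}) p = some y ∧
      ∀ j, j ≠ p → ent (s \ {x} ∪ {y}) j = ent s j := by
  classical
  set upd : ℕ → ℕ := fun z => if z = x then y else z with hupd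
  have hxs : x ∈ s := ent_mem hx
  have hmono : ∀ z₁ ∈ s, ∀ z₂ ∈ s, z₁ < z₂ → upd z₁ < upd z₂ := by
    intro z₁ h₁ z₂ h₂ h12
    by_cases e1 : z₁ = x
    · have e2 : z₂ ≠ x := by omega
      simp only [hupd, if_pos e1, if_neg e2]
      exact (gap z₂ h₂ e2).mp (by omega)
    · by_cases e2 : z₂ = x
      · simp only [hupd, if_neg e1, if_pos e2]
        have hx1 : ¬ x < z₁ := by omega
        have h1' : ¬ y < z₁ := fun h => hx1 ((gap z₁ h₁ e1).mpr h)
        have h2' : z₁ ≠ y := fun h => hy (h ▸ h₁)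
        omega
      · simpa [hupd, if_neg e1, if_neg e2] using h12
  have himg : s \ {x} ∪ {y} = s.image upd := by
    ext z
    simp only [Finset.mem_union, Finset.mem_sdiff, Finset.mem_singleton, Finset.mem_image]
    constructor
    · rintro (⟨hzs, hzx⟩ | rfl)
      · exact ⟨z, hzs, if_neg hzx⟩
      · exact ⟨x, hxs, if_pos rfl⟩
    · rintro ⟨w, hws, rfl⟩
      by_cases e : w = x
      · subst e; right; simp [hupd]
      · left
        constructor
        · simpa [hupd, if_neg e] using hws
        · simp only [hupd, if_neg e]; exact e
  have hinj : Set.InjOn upd ↑s := fun a ha b hb hab =>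
    strictMonoOn_injOn hmono a (by simpa using ha) b (by simpa using hb) hab
  have hent : ∀ j, ent (s \ {x} ∪ {y}) j = (ent s j).map upd := by
    intro j; rw [himg, ent_image hmono]
  refine ⟨?_, ?_, ?_⟩
  · rw [himg, Finset.card_image_of_injOn hinj]
  · rw [hent p, hx]; simp [hupd]
  · intro j hj
    rw [hent j]
    rcases h : ent s j with _ | z
    · rfl
    · have hzx : z ≠ x := fun e => hj (ent_pos_inj (e ▸ h) hx)
      simp [hupd, if_neg hzx]

lemma ent_range_image {n i : ℕ} {f : ℕ → ℕ} (hf : StrictMono f) (hi : i < n) :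
    ent ((Finset.range n).image f) i = some (f (n - 1 - i)) := by
  have hmono : ∀ x ∈ Finset.range n, ∀ y ∈ Finset.range n, x < y → f x < f y :=
    fun x _ y _ h => hf h
  rw [ent, rowList_image hmono, List.getElem?_map, rowList, Finset.sort_range]
  have h1 : i < (List.range n).reverse.length := by simpa using hi
  rw [List.getElem?_eq_getElem h1, List.getElem_reverse]
  simp only [List.length_range, List.getElem_range, Option.map_some]

lemma image_eq_of_val {s t : Finset ℕ} {gg : ℕ → ℕ} (hcard : s.card = t.card)
    (hval : ∀ i x, ent s i = some x → ent t i = some (gg x)) : s.image gg = t := by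
  ext y
  simp only [Finset.mem_image]
  constructor
  · rintro ⟨x, hx, rfl⟩
    obtain ⟨i, hi⟩ := mem_iff_ent.mp hx
    exact ent_mem (hval i x hi)
  · intro hy
    obtain ⟨j, hj⟩ := mem_iff_ent.mp hy
    obtain ⟨x, hx⟩ := ent_some_of_lt (s := s) (i := j) (by rw [hcard]; exact ent_lt_card hj)
    have := hval j x hx
    rw [hj] at this
    exact ⟨x, ent_mem hx, (Option.some_injective _ this).symm⟩

lemma posImage_eq {s t u : Finset ℕ} {gg : ℕ → ℕ} (hu : u ⊆ s)
    (hval : ∀ i x, ent s i = some x → ent t i = some (gg x)) :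
    posImage s t u 0 = u.image gg := by
  ext y
  simp only [posImage, Finset.mem_filter, Finset.mem_image, Nat.add_zero]
  constructor
  · rintro ⟨hyt, i, x, hsx, hxu, hty⟩
    have := hval i x hsx
    rw [hty] at this
    exact ⟨x, hxu, (Option.some_injective _ this).symm⟩
  · rintro ⟨x, hxu, rfl⟩
    obtain ⟨i, hi⟩ := mem_iff_ent.mp (hu hxu)
    have h2 := hval i x hi
    exact ⟨ent_mem h2, i, x, hi, hxu, h2⟩


lemma oRel_some_left {r : ℕ → ℕ → Prop} {u : ℕ} {o : Option ℕ}
    (h : ∀ v, o = some v → r u v) : oRel r (some u) o := by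
  cases o with
  | none => exact oRel_none_right
  | some v => exact h v rfl

lemma oRel_some_right {r : ℕ → ℕ → Prop} {v : ℕ} {o : Option ℕ}
    (h : ∀ u, o = some u → r u v) : oRel r o (some v) := by
  cases o with
  | none => exact oRel_none_left
  | some u => exact h u rfl

lemma Sbar_self (Z : Symb) : Z ∈ Sbar Z :=
  ⟨(∅, ∅), ⟨Finset.empty_subset _, Finset.empty_subset _⟩, by simp [lam]⟩

lemma PQ_m {m : ℕ} {Z Z' : Symb}
    (hZ : IsSpecial1 Z m) (hZ' : IsSpecial0 Z' m)
    (hregZ : Regular Z) (hregZ' : Regular Z')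
    (hBm : Bm Z Z')
    (huniqL : {Λ' | DRel Z Z' m m Z Λ'} = {Z'})
    (huniqR : {Λ | DRel Z Z' m m Λ Z'} = {Z}) :
    ∀ i, oRel (· > ·) (ent Z.1 i) (ent Z'.1 i) ∧
         oRel (· > ·) (ent Z.2 i) (ent Z'.2 i) := by
  obtain ⟨hZ1, hZ2, zs1, zs2⟩ := hZ
  obtain ⟨hZ'1, hZ'2, zt1, zt2⟩ := hZ'
  have hdZ : Disjoint Z.1 Z.2 := hregZ
  have hdZ' : Disjoint Z'.1 Z'.2 := hregZ'
  have s1 : ∀ i, oRel (· > ·) (ent Z.1 i) (ent Z.2 i) := fun i => oRel_strict hdZ (zs1 i)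
  have s2 : ∀ i, oRel (· > ·) (ent Z.2 i) (ent Z.1 (i + 1)) :=
    fun i => oRel_strict hdZ.symm (zs2 i)
  have t1 : ∀ i, oRel (· > ·) (ent Z'.1 i) (ent Z'.2 i) := fun i => oRel_strict hdZ' (zt1 i)
  have t2 : ∀ i, oRel (· > ·) (ent Z'.2 i) (ent Z'.1 (i + 1)) :=
    fun i => oRel_strict hdZ'.symm (zt2 i)
  obtain ⟨bc1, bc2, d1, d2, d3, d4⟩ := hBm
  have key : ∀ k i, m ≤ i + k →
      oRel (· > ·) (ent Z.1 i) (ent Z'.1 i) ∧ oRel (· > ·) (ent Z.2 i) (ent Z'.2 i) := by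
    intro k
    induction k with
    | zero =>
      intro i hi
      constructor
      · rw [ent_eq_none_iff.mpr (show Z'.1.card ≤ i by omega)]; exact oRel_none_right
      · rw [ent_eq_none_iff.mpr (show Z'.2.card ≤ i by omega)]; exact oRel_none_right
    | succ k ih =>
      intro i hi
      by_cases him : m ≤ i
      · constructor
        · rw [ent_eq_none_iff.mpr (show Z'.1.card ≤ i by omega)]; exact oRel_none_right
        · rw [ent_eq_none_iff.mpr (show Z'.2.card ≤ i by omega)]; exact oRel_none_right
      push_neg at him
      have IH := ih (i + 1) (by omega)
      obtain ⟨a, ha⟩ := ent_some_of_lt (show i < Z.1.card by omega)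
      obtain ⟨b, hb⟩ := ent_some_of_lt (show i < Z.2.card by omega)
      obtain ⟨c, hc⟩ := ent_some_of_lt (show i < Z'.1.card by omega)
      obtain ⟨d, hd⟩ := ent_some_of_lt (show i < Z'.2.card by omega)
      rw [ha, hb, hc, hd]
      have hcm : c ∈ Z'.1 := ent_mem hc
      have hdm : d ∈ Z'.2 := ent_mem hd
      have ham : a ∈ Z.1 := ent_mem ha
      have hbm : b ∈ Z.2 := ent_mem hb
      have hdn : d ∉ Z'.1 := fun h => Finset.disjoint_left.mp hdZ' h hdm
      have hcn : c ∉ Z'.2 := Finset.disjoint_left.mp hdZ' hcm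
      have hbn : b ∉ Z.1 := fun h => Finset.disjoint_left.mp hdZ h hbm
      have han : a ∉ Z.2 := Finset.disjoint_left.mp hdZ ham
      have hab : b < a := by have := s1 i; rwa [ha, hb, oRel_some] at this
      have hcd : d < c := by have := t1 i; rwa [hc, hd, oRel_some] at this
      have had : d < a := by have := d1 i; rwa [ha, hd, oRel_some] at this
      have hcb : b ≤ c := by have := d4 i; rwa [hc, hb, oRel_some] at this
      rcases lt_or_ge c a with hP | hP
      · rcases lt_or_ge d b with hQ | hQ
        · exact ⟨hP, hQ⟩
        · -- subcase A : a > c, d ≥ b : swap {c, d} in Z'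
          exfalso
          have gap1 : ∀ z ∈ Z'.1, z ≠ c → (c < z ↔ d < z) := by
            refine gap_of_nbrs hc ?_ ?_
            · intro w j hw hji
              have : c < w := ent_lt (show j < i by omega) hw hc
              omega
            · intro w hw
              have := t2 i; rwa [hd, hw, oRel_some] at this
          have gap2 : ∀ z ∈ Z'.2, z ≠ d → (d < z ↔ c < z) := by
            refine gap_of_nbrs hd ?_ ?_
            · intro w j hw hji
              have := t2 j; rw [hw, hji, hc, oRel_some] at this
              omega
            · intro w hw
              obtain ⟨c', hc'⟩ := ent_some_of_lt
                (show i + 1 < Z'.1.card from lt_of_lt_of_le (ent_lt_card hw) (by omega))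
              have h1 := t1 (i + 1); rw [hc', hw, oRel_some] at h1
              have h2 : c' < c := ent_lt (by omega) hc hc'
              omega
          obtain ⟨W1card, W1i, W1o⟩ := replace_spec hc hdn gap1
          obtain ⟨W2card, W2i, W2o⟩ := replace_spec hd hcn gap2
          set W : Symb := (Z'.1 \ {c} ∪ {d}, Z'.2 \ {d} ∪ {c}) with hW
          have hBmW : Bm Z W := by
            refine ⟨by rw [show W.1 = Z'.1 \ {c} ∪ {d} from rfl]; omega,
                    by rw [show W.2 = Z'.2 \ {d} ∪ {c} from rfl]; omega, ?_, ?_, ?_, ?_⟩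
            · intro j
              by_cases hj : j = i
              · subst hj; rw [show ent W.2 j = some c from W2i, ha]
                exact hP
              · rw [show ent W.2 j = ent Z'.2 j from W2o j hj]; exact d1 j
            · intro j
              by_cases hj : j = i
              · subst hj; rw [show ent W.2 j = some c from W2i]
                apply oRel_some_left
                intro v hv
                have h1 := s2 j; rw [hb, hv, oRel_some] at h1
                omega
              · rw [show ent W.2 j = ent Z'.2 j from W2o j hj]; exact d2 j
            · intro j
              by_cases hj : j + 1 = i
              · rw [show ent W.1 (j + 1) = some d from hj ▸ W1i]
                apply oRel_some_right
                intro u hu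
                have h1 := s2 j; rw [hu, hj, ha, oRel_some] at h1
                omega
              · rw [show ent W.1 (j + 1) = ent Z'.1 (j + 1) from W1o (j + 1) hj]; exact d3 j
            · intro j
              by_cases hj : j = i
              · subst hj; rw [show ent W.1 j = some d from W1i, hb]
                exact hQ
              · rw [show ent W.1 j = ent Z'.1 j from W1o j hj]; exact d4 j
          have hDW : DRel Z Z' m m Z W := by
            refine ⟨⟨Sbar_self Z, ⟨({c}, {d}), ⟨?_, ?_⟩, rfl⟩, Or.inl ⟨rfl, hBmW⟩⟩,
              hZ1, hZ2,
              by rw [show W.1 = Z'.1 \ {c} ∪ {d} from rfl, W1card]; exact hZ'1,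
              by rw [show W.2 = Z'.2 \ {d} ∪ {c} from rfl, W2card]; exact hZ'2⟩
            · rw [Finset.singleton_subset_iff, Finset.mem_sdiff]; exact ⟨hcm, hcn⟩
            · rw [Finset.singleton_subset_iff, Finset.mem_sdiff]; exact ⟨hdm, hdn⟩
          have hWZ : W = Z' := by
            have hmem : W ∈ {Λ' | DRel Z Z' m m Z Λ'} := hDW
            rw [huniqL] at hmem
            exact hmem
          have : d ∈ Z'.1 := by
            rw [← hWZ]
            exact Finset.mem_union_right _ (Finset.mem_singleton_self d)
          exact hdn this
      · rcases lt_or_ge d b with hQ | hQ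
        · -- subcase B : c >= a, b > d : swap {a, b} in Z
          exfalso
          have gap1 : ∀ z ∈ Z.1, z ≠ a → (a < z ↔ b < z) := by
            refine gap_of_nbrs ha ?_ ?_
            · intro w j hw hji
              have : a < w := ent_lt (show j < i by omega) hw ha
              omega
            · intro w hw
              have := s2 i; rwa [hb, hw, oRel_some] at this
          have gap2 : ∀ z ∈ Z.2, z ≠ b → (b < z ↔ a < z) := by
            refine gap_of_nbrs hb ?_ ?_
            · intro w j hw hji
              have := s2 j; rw [hw, hji, ha, oRel_some] at this
              omega
            · intro w hw
              obtain ⟨a2, ha2⟩ := ent_some_of_lt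
                (show i + 1 < Z.1.card from by have := ent_lt_card hw; omega)
              have h1 := s1 (i + 1); rw [ha2, hw, oRel_some] at h1
              have h2 : a2 < a := ent_lt (by omega) ha ha2
              omega
          obtain ⟨W1card, W1i, W1o⟩ := replace_spec ha hbn gap1
          obtain ⟨W2card, W2i, W2o⟩ := replace_spec hb han gap2
          set W : Symb := (Z.1 \ {a} ∪ {b}, Z.2 \ {b} ∪ {a}) with hW
          have hBmW : Bm W Z' := by
            refine ⟨by rw [show W.2 = Z.2 \ {b} ∪ {a} from rfl]; omega,
                    by rw [show W.1 = Z.1 \ {a} ∪ {b} from rfl]; omega, ?_, ?_, ?_, ?_⟩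
            · intro j
              by_cases hj : j = i
              · subst hj; rw [show ent W.1 j = some b from W1i, hd]
                exact hQ
              · rw [show ent W.1 j = ent Z.1 j from W1o j hj]; exact d1 j
            · intro j
              by_cases hj : j + 1 = i
              · rw [show ent W.1 (j + 1) = some b from hj ▸ W1i]
                apply oRel_some_right
                intro u hu
                have h1 := d2 j; rw [hu, hj, ha, oRel_some] at h1
                omega
              · rw [show ent W.1 (j + 1) = ent Z.1 (j + 1) from W1o (j + 1) hj]; exact d2 j
            · intro j
              by_cases hj : j = i
              · subst hj; rw [show ent W.2 j = some a from W2i]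
                apply oRel_some_left
                intro v hv
                have h1 := d3 j; rw [hb, hv, oRel_some] at h1
                omega
              · rw [show ent W.2 j = ent Z.2 j from W2o j hj]; exact d3 j
            · intro j
              by_cases hj : j = i
              · subst hj; rw [show ent W.2 j = some a from W2i, hc]
                exact hP
              · rw [show ent W.2 j = ent Z.2 j from W2o j hj]; exact d4 j
          have hDW : DRel Z Z' m m W Z' := by
            refine ⟨⟨⟨({a}, {b}), ⟨?_, ?_⟩, rfl⟩, Sbar_self Z', Or.inl ⟨rfl, hBmW⟩⟩,
              by rw [show W.1 = Z.1 \ {a} ∪ {b} from rfl, W1card]; exact hZ1,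
              by rw [show W.2 = Z.2 \ {b} ∪ {a} from rfl, W2card]; exact hZ2,
              hZ'1, hZ'2⟩
            · rw [Finset.singleton_subset_iff, Finset.mem_sdiff]; exact ⟨ham, han⟩
            · rw [Finset.singleton_subset_iff, Finset.mem_sdiff]; exact ⟨hbm, hbn⟩
          have hWZ : W = Z := by
            have hmem : W ∈ {Λ | DRel Z Z' m m Λ Z'} := hDW
            rw [huniqR] at hmem
            exact hmem
          have : b ∈ Z.1 := by
            rw [← hWZ]
            exact Finset.mem_union_right _ (Finset.mem_singleton_self b)
          exact hbn this
        · -- subcase C : c >= a, d >= b : swap {a', b} in Z where a' is at position i+1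
          exfalso
          obtain ⟨a', ha'⟩ := ent_some_of_lt (show i + 1 < Z.1.card by omega)
          have haa' : a' < a := ent_lt (by omega) ha ha'
          have hba' : a' < b := by have := s2 i; rwa [hb, ha', oRel_some] at this
          have ha'm : a' ∈ Z.1 := ent_mem ha'
          have ha'n : a' ∉ Z.2 := Finset.disjoint_left.mp hdZ ha'm
          have gap1 : ∀ z ∈ Z.1, z ≠ a' → (a' < z ↔ b < z) := by
            refine gap_of_nbrs ha' ?_ ?_
            · intro w j hw hji
              have hj : j = i := by omega
              rw [hj, ha] at hw
              have : a = w := Option.some_injective _ hw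
              omega
            · intro w hw
              obtain ⟨b2, hb2⟩ := ent_some_of_lt
                (show i + 1 < Z.2.card from by have := ent_lt_card hw; omega)
              have h1 := s2 (i + 1); rw [hb2, hw, oRel_some] at h1
              have h2 : b2 < b := ent_lt (by omega) hb hb2
              omega
          have gap2 : ∀ z ∈ Z.2, z ≠ b → (b < z ↔ a' < z) := by
            refine gap_of_nbrs hb ?_ ?_
            · intro w j hw hji
              have := s2 j; rw [hw, hji, ha, oRel_some] at this
              omega
            · intro w hw
              have := s1 (i + 1); rwa [ha', hw, oRel_some] at this
          obtain ⟨W1card, W1i, W1o⟩ := replace_spec ha' hbn gap1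
          obtain ⟨W2card, W2i, W2o⟩ := replace_spec hb ha'n gap2
          set W : Symb := (Z.1 \ {a'} ∪ {b}, Z.2 \ {b} ∪ {a'}) with hW
          have hBmW : Bm W Z' := by
            refine ⟨by rw [show W.2 = Z.2 \ {b} ∪ {a'} from rfl]; omega,
                    by rw [show W.1 = Z.1 \ {a'} ∪ {b} from rfl]; omega, ?_, ?_, ?_, ?_⟩
            · intro j
              by_cases hj : j = i + 1
              · subst hj; rw [show ent W.1 (i + 1) = some b from W1i]
                apply oRel_some_left
                intro v hv
                obtain ⟨c2, hc2⟩ := ent_some_of_lt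
                  (show i + 1 < Z'.1.card from by have := ent_lt_card hv; omega)
                have h1 := t1 (i + 1); rw [hc2, hv, oRel_some] at h1
                have h2 := d3 i; rw [hb, hc2, oRel_some] at h2
                omega
              · rw [show ent W.1 j = ent Z.1 j from W1o j hj]; exact d1 j
            · intro j
              by_cases hj : j = i
              · subst hj; rw [show ent W.1 (j + 1) = some b from W1i, hd]
                exact hQ
              · rw [show ent W.1 (j + 1) = ent Z.1 (j + 1) from W1o (j + 1) (by omega)]
                exact d2 j
            · intro j
              by_cases hj : j = i
              · subst hj; rw [show ent W.2 j = some a' from W2i]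
                apply oRel_some_left
                intro v hv
                have h1 := IH.1; rw [ha', hv, oRel_some] at h1
                exact h1
              · rw [show ent W.2 j = ent Z.2 j from W2o j hj]; exact d3 j
            · intro j
              by_cases hj : j = i
              · subst hj; rw [show ent W.2 j = some a' from W2i, hc, oRel_some]
                omega
              · rw [show ent W.2 j = ent Z.2 j from W2o j hj]; exact d4 j
          have hDW : DRel Z Z' m m W Z' := by
            refine ⟨⟨⟨({a'}, {b}), ⟨?_, ?_⟩, rfl⟩, Sbar_self Z', Or.inl ⟨rfl, hBmW⟩⟩,
              by rw [show W.1 = Z.1 \ {a'} ∪ {b} from rfl, W1card]; exact hZ1,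
              by rw [show W.2 = Z.2 \ {b} ∪ {a'} from rfl, W2card]; exact hZ2,
              hZ'1, hZ'2⟩
            · rw [Finset.singleton_subset_iff, Finset.mem_sdiff]; exact ⟨ha'm, ha'n⟩
            · rw [Finset.singleton_subset_iff, Finset.mem_sdiff]; exact ⟨hbm, hbn⟩
          have hWZ : W = Z := by
            have hmem : W ∈ {Λ | DRel Z Z' m m Λ Z'} := hDW
            rw [huniqR] at hmem
            exact hmem
          have : b ∈ Z.1 := by
            rw [← hWZ]
            exact Finset.mem_union_right _ (Finset.mem_singleton_self b)
          exact hbn this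
  intro i
  exact key m i (by omega)

lemma PQ_m1 {m : ℕ} {Z Z' : Symb}
    (hZ : IsSpecial1 Z m) (hZ' : IsSpecial0 Z' (m + 1))
    (hregZ : Regular Z) (hregZ' : Regular Z')
    (hBm1 : Bm1 Z Z')
    (huniqL : {Λ' | DRel Z Z' m (m + 1) Z Λ'} = {Z'})
    (huniqR : {Λ | DRel Z Z' m (m + 1) Λ Z'} = {Z}) :
    ∀ i, oRel (· > ·) (ent Z'.1 i) (ent Z.1 i) ∧
         oRel (· > ·) (ent Z'.2 i) (ent Z.2 i) := by
  obtain ⟨hZ1, hZ2, zs1, zs2⟩ := hZ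
  obtain ⟨hZ'1, hZ'2, zt1, zt2⟩ := hZ'
  have hdZ : Disjoint Z.1 Z.2 := hregZ
  have hdZ' : Disjoint Z'.1 Z'.2 := hregZ'
  have s1 : ∀ i, oRel (· > ·) (ent Z.1 i) (ent Z.2 i) := fun i => oRel_strict hdZ (zs1 i)
  have s2 : ∀ i, oRel (· > ·) (ent Z.2 i) (ent Z.1 (i + 1)) :=
    fun i => oRel_strict hdZ.symm (zs2 i)
  have t1 : ∀ i, oRel (· > ·) (ent Z'.1 i) (ent Z'.2 i) := fun i => oRel_strict hdZ' (zt1 i)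
  have t2 : ∀ i, oRel (· > ·) (ent Z'.2 i) (ent Z'.1 (i + 1)) :=
    fun i => oRel_strict hdZ'.symm (zt2 i)
  obtain ⟨ec1, ec2, e1, e2, e3, e4⟩ := hBm1
  have key : ∀ k i, m + 1 ≤ i + k →
      oRel (· > ·) (ent Z'.1 i) (ent Z.1 i) ∧ oRel (· > ·) (ent Z'.2 i) (ent Z.2 i) := by
    intro k
    induction k with
    | zero =>
      intro i hi
      constructor
      · rw [ent_eq_none_iff.mpr (show Z.1.card ≤ i by omega)]; exact oRel_none_right
      · rw [ent_eq_none_iff.mpr (show Z.2.card ≤ i by omega)]; exact oRel_none_right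
    | succ k ih =>
      intro i hi
      by_cases him : m + 1 ≤ i
      · constructor
        · rw [ent_eq_none_iff.mpr (show Z.1.card ≤ i by omega)]; exact oRel_none_right
        · rw [ent_eq_none_iff.mpr (show Z.2.card ≤ i by omega)]; exact oRel_none_right
      push_neg at him
      have IH := ih (i + 1) (by omega)
      obtain ⟨a, ha⟩ := ent_some_of_lt (show i < Z.1.card by omega)
      obtain ⟨c, hc⟩ := ent_some_of_lt (show i < Z'.1.card by omega)
      obtain ⟨d, hd⟩ := ent_some_of_lt (show i < Z'.2.card by omega)
      rw [ha, hc, hd]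
      have hcm : c ∈ Z'.1 := ent_mem hc
      have hdm : d ∈ Z'.2 := ent_mem hd
      have ham : a ∈ Z.1 := ent_mem ha
      have hdn : d ∉ Z'.1 := fun h => Finset.disjoint_left.mp hdZ' h hdm
      have hcn : c ∉ Z'.2 := Finset.disjoint_left.mp hdZ' hcm
      have han : a ∉ Z.2 := Finset.disjoint_left.mp hdZ ham
      have hcd : d < c := by have := t1 i; rwa [hc, hd, oRel_some] at this
      have had : d ≤ a := by have := e1 i; rwa [ha, hd, oRel_some] at this
      rcases lt_or_ge a c with hP | hP
      · -- P' holds at i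
        rcases hbb : ent Z.2 i with _ | b
        · exact ⟨hP, oRel_none_right⟩
        · rcases lt_or_ge b d with hQ | hQ
          · exact ⟨hP, hQ⟩
          · -- subcase A' : c > a, d ≤ b : swap {a, b} in Z
            exfalso
            have hbm : b ∈ Z.2 := ent_mem hbb
            have hbn : b ∉ Z.1 := fun h => Finset.disjoint_left.mp hdZ h hbm
            have hab : b < a := by have := s1 i; rwa [ha, hbb, oRel_some] at this
            have gap1 : ∀ z ∈ Z.1, z ≠ a → (a < z ↔ b < z) := by
              refine gap_of_nbrs ha ?_ ?_
              · intro w j hw hji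
                have : a < w := ent_lt (show j < i by omega) hw ha
                omega
              · intro w hw
                have := s2 i; rwa [hbb, hw, oRel_some] at this
            have gap2 : ∀ z ∈ Z.2, z ≠ b → (b < z ↔ a < z) := by
              refine gap_of_nbrs hbb ?_ ?_
              · intro w j hw hji
                have := s2 j; rw [hw, hji, ha, oRel_some] at this
                omega
              · intro w hw
                obtain ⟨a2, ha2⟩ := ent_some_of_lt
                  (show i + 1 < Z.1.card from by have := ent_lt_card hw; omega)
                have h1 := s1 (i + 1); rw [ha2, hw, oRel_some] at h1
                have h2 : a2 < a := ent_lt (by omega) ha ha2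
                omega
            obtain ⟨W1card, W1i, W1o⟩ := replace_spec ha hbn gap1
            obtain ⟨W2card, W2i, W2o⟩ := replace_spec hbb han gap2
            set W : Symb := (Z.1 \ {a} ∪ {b}, Z.2 \ {b} ∪ {a}) with hW
            have hBmW : Bm1 W Z' := by
              refine ⟨by rw [show W.2 = Z.2 \ {b} ∪ {a} from rfl]; omega,
                      by rw [show W.1 = Z.1 \ {a} ∪ {b} from rfl]; omega, ?_, ?_, ?_, ?_⟩
              · intro j
                by_cases hj : j = i
                · subst hj; rw [show ent W.1 j = some b from W1i, hd]
                  exact hQ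
                · rw [show ent W.1 j = ent Z.1 j from W1o j hj]; exact e1 j
              · intro j
                by_cases hj : j + 1 = i
                · rw [show ent W.1 (j + 1) = some b from hj ▸ W1i]
                  apply oRel_some_right
                  intro u hu
                  have h1 := e2 j; rw [hu, hj, ha, oRel_some] at h1
                  omega
                · rw [show ent W.1 (j + 1) = ent Z.1 (j + 1) from W1o (j + 1) hj]; exact e2 j
              · intro j
                by_cases hj : j = i
                · subst hj; rw [show ent W.2 j = some a from W2i]
                  apply oRel_some_left
                  intro v hv
                  have h1 := e3 j; rw [hbb, hv, oRel_some] at h1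
                  omega
                · rw [show ent W.2 j = ent Z.2 j from W2o j hj]; exact e3 j
              · intro j
                by_cases hj : j = i
                · subst hj; rw [show ent W.2 j = some a from W2i, hc]
                  exact hP
                · rw [show ent W.2 j = ent Z.2 j from W2o j hj]; exact e4 j
            have hDW : DRel Z Z' m (m + 1) W Z' := by
              refine ⟨⟨⟨({a}, {b}), ⟨?_, ?_⟩, rfl⟩, Sbar_self Z', Or.inr ⟨rfl, hBmW⟩⟩,
                by rw [show W.1 = Z.1 \ {a} ∪ {b} from rfl, W1card]; exact hZ1,
                by rw [show W.2 = Z.2 \ {b} ∪ {a} from rfl, W2card]; exact hZ2,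
                hZ'1, hZ'2⟩
              · rw [Finset.singleton_subset_iff, Finset.mem_sdiff]; exact ⟨ham, han⟩
              · rw [Finset.singleton_subset_iff, Finset.mem_sdiff]; exact ⟨hbm, hbn⟩
            have hWZ : W = Z := by
              have hmem : W ∈ {Λ | DRel Z Z' m (m + 1) Λ Z'} := hDW
              rw [huniqR] at hmem
              exact hmem
            have : b ∈ Z.1 := by
              rw [← hWZ]
              exact Finset.mem_union_right _ (Finset.mem_singleton_self b)
            exact hbn this
      · -- hP : c ≤ a
        exfalso
        have doB : oRel (· > ·) (some d) (ent Z.2 i) → False := by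
          intro hQ'
          -- subcase B' : a ≥ c : swap {c, d} in Z'
          have gap1 : ∀ z ∈ Z'.1, z ≠ c → (c < z ↔ d < z) := by
            refine gap_of_nbrs hc ?_ ?_
            · intro w j hw hji
              have : c < w := ent_lt (show j < i by omega) hw hc
              omega
            · intro w hw
              have := t2 i; rwa [hd, hw, oRel_some] at this
          have gap2 : ∀ z ∈ Z'.2, z ≠ d → (d < z ↔ c < z) := by
            refine gap_of_nbrs hd ?_ ?_
            · intro w j hw hji
              have := t2 j; rw [hw, hji, hc, oRel_some] at this
              omega
            · intro w hw
              obtain ⟨c2, hc2⟩ := ent_some_of_lt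
                (show i + 1 < Z'.1.card from lt_of_lt_of_le (ent_lt_card hw) (by omega))
              have h1 := t1 (i + 1); rw [hc2, hw, oRel_some] at h1
              have h2 : c2 < c := ent_lt (by omega) hc hc2
              omega
          obtain ⟨W1card, W1i, W1o⟩ := replace_spec hc hdn gap1
          obtain ⟨W2card, W2i, W2o⟩ := replace_spec hd hcn gap2
          set W : Symb := (Z'.1 \ {c} ∪ {d}, Z'.2 \ {d} ∪ {c}) with hW
          have hBmW : Bm1 Z W := by
            refine ⟨by rw [show W.1 = Z'.1 \ {c} ∪ {d} from rfl]; omega,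
                    by rw [show W.2 = Z'.2 \ {d} ∪ {c} from rfl]; omega, ?_, ?_, ?_, ?_⟩
            · intro j
              by_cases hj : j = i
              · subst hj; rw [show ent W.2 j = some c from W2i, ha]
                exact hP
              · rw [show ent W.2 j = ent Z'.2 j from W2o j hj]; exact e1 j
            · intro j
              by_cases hj : j = i
              · subst hj; rw [show ent W.2 j = some c from W2i]
                apply oRel_some_left
                intro v hv
                obtain ⟨b2, hb2⟩ := ent_some_of_lt
                  (show j < Z.2.card from by have := ent_lt_card hv; omega)
                have h1 := e4 j; rw [hc, hb2, oRel_some] at h1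
                have h2 := s2 j; rw [hb2, hv, oRel_some] at h2
                omega
              · rw [show ent W.2 j = ent Z'.2 j from W2o j hj]; exact e2 j
            · intro j
              by_cases hj : j + 1 = i
              · rw [show ent W.1 (j + 1) = some d from hj ▸ W1i]
                apply oRel_some_right
                intro u hu
                have h1 := e3 j; rw [hu, hj, hc, oRel_some] at h1
                omega
              · rw [show ent W.1 (j + 1) = ent Z'.1 (j + 1) from W1o (j + 1) hj]; exact e3 j
            · intro j
              by_cases hj : j = i
              · subst hj; rw [show ent W.1 j = some d from W1i]
                exact hQ'
              · rw [show ent W.1 j = ent Z'.1 j from W1o j hj]; exact e4 j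
          have hDW : DRel Z Z' m (m + 1) Z W := by
            refine ⟨⟨Sbar_self Z, ⟨({c}, {d}), ⟨?_, ?_⟩, rfl⟩, Or.inr ⟨rfl, hBmW⟩⟩,
              hZ1, hZ2,
              by rw [show W.1 = Z'.1 \ {c} ∪ {d} from rfl, W1card]; exact hZ'1,
              by rw [show W.2 = Z'.2 \ {d} ∪ {c} from rfl, W2card]; exact hZ'2⟩
            · rw [Finset.singleton_subset_iff, Finset.mem_sdiff]; exact ⟨hcm, hcn⟩
            · rw [Finset.singleton_subset_iff, Finset.mem_sdiff]; exact ⟨hdm, hdn⟩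
          have hWZ : W = Z' := by
            have hmem : W ∈ {Λ' | DRel Z Z' m (m + 1) Z Λ'} := hDW
            rw [huniqL] at hmem
            exact hmem
          have : d ∈ Z'.1 := by
            rw [← hWZ]
            exact Finset.mem_union_right _ (Finset.mem_singleton_self d)
          exact hdn this
        rcases hbb : ent Z.2 i with _ | b
        · exact doB (by rw [hbb]; exact oRel_none_right)
        rcases lt_or_ge b d with hQ | hQ
        · exact doB (by rw [hbb]; exact hQ)
        -- subcase C' : c ≤ a, d ≤ b : swap {c', d} in Z' with c' at position i+1
        have hbm : b ∈ Z.2 := ent_mem hbb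
        have him2 : i < m := by have := ent_lt_card hbb; omega
        obtain ⟨c', hc'⟩ := ent_some_of_lt (show i + 1 < Z'.1.card by omega)
        have hcc' : c' < c := ent_lt (by omega) hc hc'
        have hdc' : c' < d := by have := t2 i; rwa [hd, hc', oRel_some] at this
        have hc'm : c' ∈ Z'.1 := ent_mem hc'
        have hc'n : c' ∉ Z'.2 := Finset.disjoint_left.mp hdZ' hc'm
        have gap1 : ∀ z ∈ Z'.1, z ≠ c' → (c' < z ↔ d < z) := by
          refine gap_of_nbrs hc' ?_ ?_
          · intro w j hw hji
            have hj : j = i := by omega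
            rw [hj, hc] at hw
            have : c = w := Option.some_injective _ hw
            omega
          · intro w hw
            obtain ⟨d2, hd2⟩ := ent_some_of_lt
              (show i + 1 < Z'.2.card from by have := ent_lt_card hw; omega)
            have h1 := t2 (i + 1); rw [hd2, hw, oRel_some] at h1
            have h2 : d2 < d := ent_lt (by omega) hd hd2
            omega
        have gap2 : ∀ z ∈ Z'.2, z ≠ d → (d < z ↔ c' < z) := by
          refine gap_of_nbrs hd ?_ ?_
          · intro w j hw hji
            have : d < w := ent_lt (show j < i by omega) hw hd
            omega
          · intro w hw
            have := t1 (i + 1); rwa [hc', hw, oRel_some] at this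
        obtain ⟨W1card, W1i, W1o⟩ := replace_spec hc' hdn gap1
        obtain ⟨W2card, W2i, W2o⟩ := replace_spec hd hc'n gap2
        set W : Symb := (Z'.1 \ {c'} ∪ {d}, Z'.2 \ {d} ∪ {c'}) with hW
        have hBmW : Bm1 Z W := by
          refine ⟨by rw [show W.1 = Z'.1 \ {c'} ∪ {d} from rfl]; omega,
                  by rw [show W.2 = Z'.2 \ {d} ∪ {c'} from rfl]; omega, ?_, ?_, ?_, ?_⟩
          · intro j
            by_cases hj : j = i
            · subst hj; rw [show ent W.2 j = some c' from W2i, ha, oRel_some]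
              omega
            · rw [show ent W.2 j = ent Z'.2 j from W2o j hj]; exact e1 j
          · intro j
            by_cases hj : j = i
            · subst hj; rw [show ent W.2 j = some c' from W2i]
              apply oRel_some_left
              intro v hv
              have h1 := IH.1; rw [hc', hv, oRel_some] at h1
              exact h1
            · rw [show ent W.2 j = ent Z'.2 j from W2o j hj]; exact e2 j
          · intro j
            by_cases hj : j = i
            · subst hj; rw [show ent W.1 (j + 1) = some d from W1i, hbb]
              exact hQ
            · rw [show ent W.1 (j + 1) = ent Z'.1 (j + 1) from W1o (j + 1) (by omega)]
              exact e3 j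
          · intro j
            by_cases hj : j = i + 1
            · subst hj; rw [show ent W.1 (i + 1) = some d from W1i]
              apply oRel_some_left
              intro u hu
              obtain ⟨a2, ha2⟩ := ent_some_of_lt
                (show i + 1 < Z.1.card from by have := ent_lt_card hu; omega)
              have h1 := e2 i; rw [hd, ha2, oRel_some] at h1
              have h2 := s1 (i + 1); rw [ha2, hu, oRel_some] at h2
              omega
            · rw [show ent W.1 j = ent Z'.1 j from W1o j hj]; exact e4 j
        have hDW : DRel Z Z' m (m + 1) Z W := by
          refine ⟨⟨Sbar_self Z, ⟨({c'}, {d}), ⟨?_, ?_⟩, rfl⟩, Or.inr ⟨rfl, hBmW⟩⟩,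
            hZ1, hZ2,
            by rw [show W.1 = Z'.1 \ {c'} ∪ {d} from rfl, W1card]; exact hZ'1,
            by rw [show W.2 = Z'.2 \ {d} ∪ {c'} from rfl, W2card]; exact hZ'2⟩
          · rw [Finset.singleton_subset_iff, Finset.mem_sdiff]; exact ⟨hc'm, hc'n⟩
          · rw [Finset.singleton_subset_iff, Finset.mem_sdiff]; exact ⟨hdm, hdn⟩
        have hWZ : W = Z' := by
          have hmem : W ∈ {Λ' | DRel Z Z' m (m + 1) Z Λ'} := hDW
          rw [huniqL] at hmem
          exact hmem
        have : d ∈ Z'.1 := by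
          rw [← hWZ]
          exact Finset.mem_union_right _ (Finset.mem_singleton_self d)
        exact hdn this
  intro i
  exact key (m + 1) i (by omega)

lemma oRel_mono_ge {o o' : Option ℕ} (h : oRel (· > ·) o o') : oRel (· ≥ ·) o o' := by
  cases o with
  | none => exact oRel_none_left
  | some x =>
    cases o' with
    | none => exact oRel_none_right
    | some y => exact le_of_lt h

def gfun (A B : Finset ℕ) (u : ℕ) (x : ℕ) : ℕ :=
  if x ∈ A then u - 2 * pidx A x else u - 1 - 2 * pidx B x

lemma gfun_A {A B : Finset ℕ} {u x p : ℕ} (hx : ent A p = some x) :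
    gfun A B u x = u - 2 * p := by
  rw [gfun, if_pos (ent_mem hx), pidx_of_ent hx]

lemma gfun_B {A B : Finset ℕ} {u x p : ℕ} (hd : Disjoint A B) (hx : ent B p = some x) :
    gfun A B u x = u - 1 - 2 * p := by
  rw [gfun, if_neg (fun h => Finset.disjoint_left.mp hd h (ent_mem hx)), pidx_of_ent hx]

lemma gfun_mono {A B : Finset ℕ} {u : ℕ} (hd : Disjoint A B)
    (h1 : ∀ i, oRel (· > ·) (ent A i) (ent B i))
    (h2 : ∀ i, oRel (· > ·) (ent B i) (ent A (i + 1)))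
    (hu1 : ∀ p, p < A.card → 2 * p ≤ u)
    (hu2 : ∀ q, q < B.card → 2 * q + 1 ≤ u) :
    ∀ x ∈ A ∪ B, ∀ y ∈ A ∪ B, x < y → gfun A B u x < gfun A B u y := by
  intro x hx y hy hxy
  rcases Finset.mem_union.mp hx with hxA | hxB <;>
    rcases Finset.mem_union.mp hy with hyA | hyB
  · obtain ⟨p, hp⟩ := mem_iff_ent.mp hxA
    obtain ⟨q, hq⟩ := mem_iff_ent.mp hyA
    rw [gfun_A hp, gfun_A hq]
    have hqp : q < p := by
      by_contra hc
      push_neg at hc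
      have := ent_le hc hp hq
      omega
    have b1 := hu1 p (ent_lt_card hp)
    omega
  · obtain ⟨p, hp⟩ := mem_iff_ent.mp hxA
    obtain ⟨q, hq⟩ := mem_iff_ent.mp hyB
    rw [gfun_A hp, gfun_B hd hq]
    have hiff := posV1 h1 (fun i => oRel_mono_ge (h2 i)) hp hq
    have hqp : q < p := by
      by_contra hc
      push_neg at hc
      have := hiff.mpr hc
      omega
    have b1 := hu1 p (ent_lt_card hp)
    have b2 := hu2 q (ent_lt_card hq)
    omega
  · obtain ⟨p, hp⟩ := mem_iff_ent.mp hxB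
    obtain ⟨q, hq⟩ := mem_iff_ent.mp hyA
    rw [gfun_B hd hp, gfun_A hq]
    have hiff := posV1 h1 (fun i => oRel_mono_ge (h2 i)) hq hp
    have hqp : q ≤ p := hiff.mp hxy
    have b1 := hu1 q (ent_lt_card hq)
    have b2 := hu2 p (ent_lt_card hp)
    omega
  · obtain ⟨p, hp⟩ := mem_iff_ent.mp hxB
    obtain ⟨q, hq⟩ := mem_iff_ent.mp hyB
    rw [gfun_B hd hp, gfun_B hd hq]
    have hqp : q < p := by
      by_contra hc
      push_neg at hc
      have := ent_le hc hp hq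
      omega
    have b1 := hu2 p (ent_lt_card hp)
    omega

lemma cross_m {m : ℕ} {Z Z' : Symb}
    (hZ1 : Z.1.card = m + 1) (hZ2 : Z.2.card = m)
    (hZ'1 : Z'.1.card = m) (hZ'2 : Z'.2.card = m)
    (hdZ : Disjoint Z.1 Z.2) (hdZ' : Disjoint Z'.1 Z'.2)
    (s1 : ∀ i, oRel (· > ·) (ent Z.1 i) (ent Z.2 i))
    (s2 : ∀ i, oRel (· > ·) (ent Z.2 i) (ent Z.1 (i + 1)))
    (d1 : ∀ i, oRel (· > ·) (ent Z.1 i) (ent Z'.2 i))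
    (d2 : ∀ i, oRel (· ≥ ·) (ent Z'.2 i) (ent Z.1 (i + 1)))
    (d3 : ∀ i, oRel (· > ·) (ent Z.2 i) (ent Z'.1 (i + 1)))
    (d4 : ∀ i, oRel (· ≥ ·) (ent Z'.1 i) (ent Z.2 i))
    (hPQ : ∀ i, oRel (· > ·) (ent Z.1 i) (ent Z'.1 i) ∧
                oRel (· > ·) (ent Z.2 i) (ent Z'.2 i)) :
    ∀ u ∈ Z.1 ∪ Z.2, ∀ v ∈ Z'.1 ∪ Z'.2,
      (v < u ↔ gfun Z'.1 Z'.2 (2 * m - 1) v < gfun Z.1 Z.2 (2 * m) u) := by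
  have ch1 : ∀ i, oRel (· ≥ ·) (ent Z'.1 i) (ent Z.1 (i + 1)) := by
    intro i
    rcases hci : ent Z'.1 i with _ | cc
    · exact oRel_none_left
    rcases hai : ent Z.1 (i + 1) with _ | aa
    · exact oRel_none_right
    obtain ⟨bb, hbi⟩ := ent_some_of_lt
      (show i < Z.2.card by have := ent_lt_card hci; omega)
    have x1 := d4 i; rw [hci, hbi, oRel_some] at x1
    have x2 := s2 i; rw [hbi, hai, oRel_some] at x2
    rw [oRel_some]; omega
  have ch2 : ∀ i, oRel (· ≥ ·) (ent Z'.2 i) (ent Z.2 (i + 1)) := by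
    intro i
    rcases hdi : ent Z'.2 i with _ | dd
    · exact oRel_none_left
    rcases hbi : ent Z.2 (i + 1) with _ | bb
    · exact oRel_none_right
    obtain ⟨aa, hai⟩ := ent_some_of_lt
      (show i + 1 < Z.1.card by have := ent_lt_card hbi; omega)
    have x1 := d2 i; rw [hdi, hai, oRel_some] at x1
    have x2 := s1 (i + 1); rw [hai, hbi, oRel_some] at x2
    rw [oRel_some]; omega
  intro u hu v hv
  rcases Finset.mem_union.mp hu with huA | huB <;>
    rcases Finset.mem_union.mp hv with hvA | hvB
  · obtain ⟨p, hp⟩ := mem_iff_ent.mp huA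
    obtain ⟨q, hq⟩ := mem_iff_ent.mp hvA
    rw [gfun_A hp, gfun_A hq,
      posV1 (fun i => (hPQ i).1) ch1 hp hq]
    have b1 := ent_lt_card hp
    have b2 := ent_lt_card hq
    omega
  · obtain ⟨p, hp⟩ := mem_iff_ent.mp huA
    obtain ⟨q, hq⟩ := mem_iff_ent.mp hvB
    rw [gfun_A hp, gfun_B hdZ' hq,
      posV1 d1 d2 hp hq]
    have b1 := ent_lt_card hp
    have b2 := ent_lt_card hq
    omega
  · obtain ⟨p, hp⟩ := mem_iff_ent.mp huB
    obtain ⟨q, hq⟩ := mem_iff_ent.mp hvA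
    rw [gfun_B hdZ hp, gfun_A hq]
    have hiff := posV2 d4 d3 hq hp
    have b1 := ent_lt_card hp
    have b2 := ent_lt_card hq
    rcases le_or_gt q p with h | h
    · have huv : u ≤ v := hiff.mpr h
      constructor
      · intro hvu; omega
      · intro hR; exfalso; omega
    · have hvu : v < u := by
        have : ¬ u ≤ v := fun hc => absurd (hiff.mp hc) (by omega)
        omega
      constructor
      · intro _; omega
      · intro _; exact hvu
  · obtain ⟨p, hp⟩ := mem_iff_ent.mp huB
    obtain ⟨q, hq⟩ := mem_iff_ent.mp hvB
    rw [gfun_B hdZ hp, gfun_B hdZ' hq,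
      posV1 (fun i => (hPQ i).2) ch2 hp hq]
    have b1 := ent_lt_card hp
    have b2 := ent_lt_card hq
    omega

lemma cross_m1 {m : ℕ} {Z Z' : Symb}
    (hZ1 : Z.1.card = m + 1) (hZ2 : Z.2.card = m)
    (hZ'1 : Z'.1.card = m + 1) (hZ'2 : Z'.2.card = m + 1)
    (hdZ : Disjoint Z.1 Z.2) (hdZ' : Disjoint Z'.1 Z'.2)
    (s1 : ∀ i, oRel (· > ·) (ent Z.1 i) (ent Z.2 i))
    (t1 : ∀ i, oRel (· > ·) (ent Z'.1 i) (ent Z'.2 i))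
    (e1 : ∀ i, oRel (· ≥ ·) (ent Z.1 i) (ent Z'.2 i))
    (e2 : ∀ i, oRel (· > ·) (ent Z'.2 i) (ent Z.1 (i + 1)))
    (e3 : ∀ i, oRel (· ≥ ·) (ent Z.2 i) (ent Z'.1 (i + 1)))
    (e4 : ∀ i, oRel (· > ·) (ent Z'.1 i) (ent Z.2 i))
    (hPQ : ∀ i, oRel (· > ·) (ent Z'.1 i) (ent Z.1 i) ∧
                oRel (· > ·) (ent Z'.2 i) (ent Z.2 i)) :
    ∀ u ∈ Z.1 ∪ Z.2, ∀ v ∈ Z'.1 ∪ Z'.2,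
      (u < v ↔ gfun Z.1 Z.2 (2 * m) u < gfun Z'.1 Z'.2 (2 * m + 1) v) := by
  have ch1 : ∀ i, oRel (· ≥ ·) (ent Z.1 i) (ent Z'.1 (i + 1)) := by
    intro i
    rcases hai : ent Z.1 i with _ | aa
    · exact oRel_none_left
    rcases hci : ent Z'.1 (i + 1) with _ | cc
    · exact oRel_none_right
    obtain ⟨bb, hbi⟩ := ent_some_of_lt
      (show i < Z.2.card by have := ent_lt_card hci; omega)
    have x1 := s1 i; rw [hai, hbi, oRel_some] at x1
    have x2 := e3 i; rw [hbi, hci, oRel_some] at x2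
    rw [oRel_some]; omega
  have ch2 : ∀ i, oRel (· ≥ ·) (ent Z.2 i) (ent Z'.2 (i + 1)) := by
    intro i
    rcases hbi : ent Z.2 i with _ | bb
    · exact oRel_none_left
    rcases hdi : ent Z'.2 (i + 1) with _ | dd
    · exact oRel_none_right
    obtain ⟨cc, hci⟩ := ent_some_of_lt
      (show i + 1 < Z'.1.card by have := ent_lt_card hdi; omega)
    have x1 := e3 i; rw [hbi, hci, oRel_some] at x1
    have x2 := t1 (i + 1); rw [hci, hdi, oRel_some] at x2
    rw [oRel_some]; omega
  intro u hu v hv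
  rcases Finset.mem_union.mp hu with huA | huB <;>
    rcases Finset.mem_union.mp hv with hvA | hvB
  · obtain ⟨p, hp⟩ := mem_iff_ent.mp huA
    obtain ⟨q, hq⟩ := mem_iff_ent.mp hvA
    rw [gfun_A hp, gfun_A hq,
      posV1 (fun i => (hPQ i).1) ch1 hq hp]
    have b1 := ent_lt_card hp
    have b2 := ent_lt_card hq
    omega
  · obtain ⟨p, hp⟩ := mem_iff_ent.mp huA
    obtain ⟨q, hq⟩ := mem_iff_ent.mp hvB
    rw [gfun_A hp, gfun_B hdZ' hq]
    have hiff := posV2 e1 e2 hp hq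
    have b1 := ent_lt_card hp
    have b2 := ent_lt_card hq
    rcases le_or_gt p q with h | h
    · have hvu : v ≤ u := hiff.mpr h
      constructor
      · intro huv; omega
      · intro hR; exfalso; omega
    · have huv : u < v := by
        have : ¬ v ≤ u := fun hc => absurd (hiff.mp hc) (by omega)
        omega
      constructor
      · intro _; omega
      · intro _; exact huv
  · obtain ⟨p, hp⟩ := mem_iff_ent.mp huB
    obtain ⟨q, hq⟩ := mem_iff_ent.mp hvA
    rw [gfun_B hdZ hp, gfun_A hq,
      posV1 e4 e3 hq hp]
    have b1 := ent_lt_card hp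
    have b2 := ent_lt_card hq
    omega
  · obtain ⟨p, hp⟩ := mem_iff_ent.mp huB
    obtain ⟨q, hq⟩ := mem_iff_ent.mp hvB
    rw [gfun_B hdZ hp, gfun_B hdZ' hq,
      posV1 (fun i => (hPQ i).2) ch2 hq hp]
    have b1 := ent_lt_card hp
    have b2 := ent_lt_card hq
    omega

lemma Bm_transfer {Z Z' L L' : Symb} {g g' : ℕ → ℕ}
    (hsub1 : L.1 ⊆ Z.1 ∪ Z.2) (hsub2 : L.2 ⊆ Z.1 ∪ Z.2)
    (hsub1' : L'.1 ⊆ Z'.1 ∪ Z'.2) (hsub2' : L'.2 ⊆ Z'.1 ∪ Z'.2)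
    (hg : ∀ x ∈ Z.1 ∪ Z.2, ∀ y ∈ Z.1 ∪ Z.2, x < y → g x < g y)
    (hg' : ∀ x ∈ Z'.1 ∪ Z'.2, ∀ y ∈ Z'.1 ∪ Z'.2, x < y → g' x < g' y)
    (cross : ∀ u ∈ Z.1 ∪ Z.2, ∀ v ∈ Z'.1 ∪ Z'.2, (v < u ↔ g' v < g u)) :
    Bm L L' ↔ Bm (L.1.image g, L.2.image g) (L'.1.image g', L'.2.image g') := by
  have m1 : ∀ x ∈ L.1, ∀ y ∈ L.1, x < y → g x < g y :=
    fun x hx y hy h => hg x (hsub1 hx) y (hsub1 hy) h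
  have m2 : ∀ x ∈ L.2, ∀ y ∈ L.2, x < y → g x < g y :=
    fun x hx y hy h => hg x (hsub2 hx) y (hsub2 hy) h
  have m1' : ∀ x ∈ L'.1, ∀ y ∈ L'.1, x < y → g' x < g' y :=
    fun x hx y hy h => hg' x (hsub1' hx) y (hsub1' hy) h
  have m2' : ∀ x ∈ L'.2, ∀ y ∈ L'.2, x < y → g' x < g' y :=
    fun x hx y hy h => hg' x (hsub2' hx) y (hsub2' hy) h
  have c1 : (L.1.image g).card = L.1.card :=
    Finset.card_image_of_injOn fun a ha b hb h =>
      strictMonoOn_injOn m1 a (Finset.mem_coe.mp ha) b (Finset.mem_coe.mp hb) h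
  have c2 : (L.2.image g).card = L.2.card :=
    Finset.card_image_of_injOn fun a ha b hb h =>
      strictMonoOn_injOn m2 a (Finset.mem_coe.mp ha) b (Finset.mem_coe.mp hb) h
  have c1' : (L'.1.image g').card = L'.1.card :=
    Finset.card_image_of_injOn fun a ha b hb h =>
      strictMonoOn_injOn m1' a (Finset.mem_coe.mp ha) b (Finset.mem_coe.mp hb) h
  have c2' : (L'.2.image g').card = L'.2.card :=
    Finset.card_image_of_injOn fun a ha b hb h =>
      strictMonoOn_injOn m2' a (Finset.mem_coe.mp ha) b (Finset.mem_coe.mp hb) h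
  show _ ↔
    ((L'.1.image g').card = (L.2.image g).card ∧
     (L'.2.image g').card + 1 = (L.1.image g).card ∧
     (∀ i, oRel (· > ·) (ent (L.1.image g) i) (ent (L'.2.image g') i)) ∧
     (∀ i, oRel (· ≥ ·) (ent (L'.2.image g') i) (ent (L.1.image g) (i + 1))) ∧
     (∀ i, oRel (· > ·) (ent (L.2.image g) i) (ent (L'.1.image g') (i + 1))) ∧
     (∀ i, oRel (· ≥ ·) (ent (L'.1.image g') i) (ent (L.2.image g) i)))
  rw [c1, c2, c1', c2']
  refine and_congr Iff.rfl (and_congr Iff.rfl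
    (and_congr ?_ (and_congr ?_ (and_congr ?_ ?_))))
  · refine forall_congr' fun i => ?_
    rw [ent_image m1 i, ent_image m2' i]
    refine oRel_map_iff fun x y hx hy => ?_
    exact cross x (hsub1 (ent_mem hx)) y (hsub2' (ent_mem hy))
  · refine forall_congr' fun i => ?_
    rw [ent_image m2' i, ent_image m1 (i + 1)]
    refine oRel_map_iff fun x y hx hy => ?_
    have hcr := cross y (hsub1 (ent_mem hy)) x (hsub2' (ent_mem hx))
    constructor
    · intro h; by_contra hcon; push_neg at hcon
      have := hcr.mpr hcon; omega
    · intro h; by_contra hcon; push_neg at hcon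
      have := hcr.mp hcon; omega
  · refine forall_congr' fun i => ?_
    rw [ent_image m2 i, ent_image m1' (i + 1)]
    refine oRel_map_iff fun x y hx hy => ?_
    exact cross x (hsub2 (ent_mem hx)) y (hsub1' (ent_mem hy))
  · refine forall_congr' fun i => ?_
    rw [ent_image m1' i, ent_image m2 i]
    refine oRel_map_iff fun x y hx hy => ?_
    have hcr := cross y (hsub2 (ent_mem hy)) x (hsub1' (ent_mem hx))
    constructor
    · intro h; by_contra hcon; push_neg at hcon
      have := hcr.mpr hcon; omega
    · intro h; by_contra hcon; push_neg at hcon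
      have := hcr.mp hcon; omega

lemma Bm1_transfer {Z Z' L L' : Symb} {g g' : ℕ → ℕ}
    (hsub1 : L.1 ⊆ Z.1 ∪ Z.2) (hsub2 : L.2 ⊆ Z.1 ∪ Z.2)
    (hsub1' : L'.1 ⊆ Z'.1 ∪ Z'.2) (hsub2' : L'.2 ⊆ Z'.1 ∪ Z'.2)
    (hg : ∀ x ∈ Z.1 ∪ Z.2, ∀ y ∈ Z.1 ∪ Z.2, x < y → g x < g y)
    (hg' : ∀ x ∈ Z'.1 ∪ Z'.2, ∀ y ∈ Z'.1 ∪ Z'.2, x < y → g' x < g' y)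
    (cross : ∀ u ∈ Z.1 ∪ Z.2, ∀ v ∈ Z'.1 ∪ Z'.2, (u < v ↔ g u < g' v)) :
    Bm1 L L' ↔ Bm1 (L.1.image g, L.2.image g) (L'.1.image g', L'.2.image g') := by
  have m1 : ∀ x ∈ L.1, ∀ y ∈ L.1, x < y → g x < g y :=
    fun x hx y hy h => hg x (hsub1 hx) y (hsub1 hy) h
  have m2 : ∀ x ∈ L.2, ∀ y ∈ L.2, x < y → g x < g y :=
    fun x hx y hy h => hg x (hsub2 hx) y (hsub2 hy) h
  have m1' : ∀ x ∈ L'.1, ∀ y ∈ L'.1, x < y → g' x < g' y :=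
    fun x hx y hy h => hg' x (hsub1' hx) y (hsub1' hy) h
  have m2' : ∀ x ∈ L'.2, ∀ y ∈ L'.2, x < y → g' x < g' y :=
    fun x hx y hy h => hg' x (hsub2' hx) y (hsub2' hy) h
  have c1 : (L.1.image g).card = L.1.card :=
    Finset.card_image_of_injOn fun a ha b hb h =>
      strictMonoOn_injOn m1 a (Finset.mem_coe.mp ha) b (Finset.mem_coe.mp hb) h
  have c2 : (L.2.image g).card = L.2.card :=
    Finset.card_image_of_injOn fun a ha b hb h =>
      strictMonoOn_injOn m2 a (Finset.mem_coe.mp ha) b (Finset.mem_coe.mp hb) h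
  have c1' : (L'.1.image g').card = L'.1.card :=
    Finset.card_image_of_injOn fun a ha b hb h =>
      strictMonoOn_injOn m1' a (Finset.mem_coe.mp ha) b (Finset.mem_coe.mp hb) h
  have c2' : (L'.2.image g').card = L'.2.card :=
    Finset.card_image_of_injOn fun a ha b hb h =>
      strictMonoOn_injOn m2' a (Finset.mem_coe.mp ha) b (Finset.mem_coe.mp hb) h
  show _ ↔
    ((L'.1.image g').card = (L.2.image g).card + 1 ∧
     (L'.2.image g').card = (L.1.image g).card ∧
     (∀ i, oRel (· ≥ ·) (ent (L.1.image g) i) (ent (L'.2.image g') i)) ∧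
     (∀ i, oRel (· > ·) (ent (L'.2.image g') i) (ent (L.1.image g) (i + 1))) ∧
     (∀ i, oRel (· ≥ ·) (ent (L.2.image g) i) (ent (L'.1.image g') (i + 1))) ∧
     (∀ i, oRel (· > ·) (ent (L'.1.image g') i) (ent (L.2.image g) i)))
  rw [c1, c2, c1', c2']
  refine and_congr Iff.rfl (and_congr Iff.rfl
    (and_congr ?_ (and_congr ?_ (and_congr ?_ ?_))))
  · refine forall_congr' fun i => ?_
    rw [ent_image m1 i, ent_image m2' i]
    refine oRel_map_iff fun x y hx hy => ?_
    have hcr := cross x (hsub1 (ent_mem hx)) y (hsub2' (ent_mem hy))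
    constructor
    · intro h; by_contra hcon; push_neg at hcon
      have := hcr.mpr hcon; omega
    · intro h; by_contra hcon; push_neg at hcon
      have := hcr.mp hcon; omega
  · refine forall_congr' fun i => ?_
    rw [ent_image m2' i, ent_image m1 (i + 1)]
    refine oRel_map_iff fun x y hx hy => ?_
    exact cross y (hsub1 (ent_mem hy)) x (hsub2' (ent_mem hx))
  · refine forall_congr' fun i => ?_
    rw [ent_image m2 i, ent_image m1' (i + 1)]
    refine oRel_map_iff fun x y hx hy => ?_
    have hcr := cross x (hsub2 (ent_mem hx)) y (hsub1' (ent_mem hy))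
    constructor
    · intro h; by_contra hcon; push_neg at hcon
      have := hcr.mpr hcon; omega
    · intro h; by_contra hcon; push_neg at hcon
      have := hcr.mp hcon; omega
  · refine forall_congr' fun i => ?_
    rw [ent_image m1' i, ent_image m2 i]
    refine oRel_map_iff fun x y hx hy => ?_
    exact cross y (hsub2 (ent_mem hy)) x (hsub1' (ent_mem hx))

end Tool

open Tool in
theorem stmt15 (m m' : ℕ) (Z Z' : Symb) (hm : m' = m ∨ m' = m + 1)
    (hZ : IsSpecial1 Z m) (hZ' : IsSpecial0 Z' m')
    (hregZ : Regular Z) (hregZ' : Regular Z') (h11 : OneToOne Z Z' m m') :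
    ∀ M : Symb, SubZI M Z → ∀ N : Symb, SubZI N Z' →
      (BbarPlus Z Z' m m' (lam Z M) (lam Z' N) ↔
       BbarPlus (Zreg1 m) (Zreg0 m') m m'
         (lam (Zreg1 m) (posImage Z.1 (Zreg1 m).1 M.1 0, posImage Z.2 (Zreg1 m).2 M.2 0))
         (lam (Zreg0 m') (posImage Z'.1 (Zreg0 m').1 N.1 0, posImage Z'.2 (Zreg0 m').2 N.2 0))) := by
  intro M hM N hN
  obtain ⟨hZ1, hZ2, zs1, zs2⟩ := hZ
  obtain ⟨hZ'1, hZ'2, zt1, zt2⟩ := hZ'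
  have hdZ : Disjoint Z.1 Z.2 := hregZ
  have hdZ' : Disjoint Z'.1 Z'.2 := hregZ'
  have s1 : ∀ i, oRel (· > ·) (ent Z.1 i) (ent Z.2 i) := fun i => oRel_strict hdZ (zs1 i)
  have s2 : ∀ i, oRel (· > ·) (ent Z.2 i) (ent Z.1 (i + 1)) :=
    fun i => oRel_strict hdZ.symm (zs2 i)
  have t1 : ∀ i, oRel (· > ·) (ent Z'.1 i) (ent Z'.2 i) := fun i => oRel_strict hdZ' (zt1 i)
  have t2 : ∀ i, oRel (· > ·) (ent Z'.2 i) (ent Z'.1 (i + 1)) :=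
    fun i => oRel_strict hdZ'.symm (zt2 i)
  have hDZZ : DRel Z Z' m m' Z Z' := by
    have h := h11.2.1
    have hmem : Z' ∈ {Λ' | DRel Z Z' m m' Z Λ'} := by rw [h]; rfl
    exact hmem
  have hM1 : M.1 ⊆ Z.1 := hM.1.trans Finset.sdiff_subset
  have hM2 : M.2 ⊆ Z.2 := hM.2.trans Finset.sdiff_subset
  have hN1 : N.1 ⊆ Z'.1 := hN.1.trans Finset.sdiff_subset
  have hN2 : N.2 ⊆ Z'.2 := hN.2.trans Finset.sdiff_subset
  have hsub1 : (lam Z M).1 ⊆ Z.1 ∪ Z.2 := by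
    intro x hx
    rcases Finset.mem_union.mp hx with h | h
    · exact Finset.mem_union_left _ (Finset.mem_sdiff.mp h).1
    · exact Finset.mem_union_right _ (hM2 h)
  have hsub2 : (lam Z M).2 ⊆ Z.1 ∪ Z.2 := by
    intro x hx
    rcases Finset.mem_union.mp hx with h | h
    · exact Finset.mem_union_right _ (Finset.mem_sdiff.mp h).1
    · exact Finset.mem_union_left _ (hM1 h)
  have hsub1' : (lam Z' N).1 ⊆ Z'.1 ∪ Z'.2 := by
    intro x hx
    rcases Finset.mem_union.mp hx with h | h
    · exact Finset.mem_union_left _ (Finset.mem_sdiff.mp h).1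
    · exact Finset.mem_union_right _ (hN2 h)
  have hsub2' : (lam Z' N).2 ⊆ Z'.1 ∪ Z'.2 := by
    intro x hx
    rcases Finset.mem_union.mp hx with h | h
    · exact Finset.mem_union_right _ (Finset.mem_sdiff.mp h).1
    · exact Finset.mem_union_left _ (hN1 h)
  rcases hm with hmm | hmm
  · -- case m' = m
    subst hmm
    have hBm : Bm Z Z' := by
      rcases hDZZ.1.2.2 with ⟨_, h⟩ | ⟨h, _⟩
      · exact h
      · exact absurd h (by omega)
    have hPQ := PQ_m ⟨hZ1, hZ2, zs1, zs2⟩ ⟨hZ'1, hZ'2, zt1, zt2⟩ hregZ hregZ' hBm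
      h11.2.1 h11.2.2
    obtain ⟨bc1, bc2, d1, d2, d3, d4⟩ := hBm
    have cross := cross_m hZ1 hZ2 hZ'1 hZ'2 hdZ hdZ' s1 s2 d1 d2 d3 d4 hPQ
    have hgm : ∀ x ∈ Z.1 ∪ Z.2, ∀ y ∈ Z.1 ∪ Z.2, x < y →
        gfun Z.1 Z.2 (2 * m') x < gfun Z.1 Z.2 (2 * m') y :=
      gfun_mono hdZ s1 s2 (fun p hp => by omega) (fun q hq => by omega)
    have hg'm : ∀ x ∈ Z'.1 ∪ Z'.2, ∀ y ∈ Z'.1 ∪ Z'.2, x < y →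
        gfun Z'.1 Z'.2 (2 * m' - 1) x < gfun Z'.1 Z'.2 (2 * m' - 1) y :=
      gfun_mono hdZ' t1 t2 (fun p hp => by omega) (fun q hq => by omega)
    have hval1 : ∀ i x, ent Z.1 i = some x →
        ent (Zreg1 m').1 i = some (gfun Z.1 Z.2 (2 * m') x) := by
      intro i x hx
      have hi : i < m' + 1 := by have := ent_lt_card hx; omega
      rw [show (Zreg1 m').1 = (Finset.range (m' + 1)).image (fun j => 2 * j) from rfl,
        ent_range_image (fun a b hab => by omega) hi, gfun_A hx]
      congr 1
      omega
    have hval2 : ∀ i x, ent Z.2 i = some x →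
        ent (Zreg1 m').2 i = some (gfun Z.1 Z.2 (2 * m') x) := by
      intro i x hx
      have hi : i < m' := by have := ent_lt_card hx; omega
      rw [show (Zreg1 m').2 = (Finset.range m').image (fun j => 2 * j + 1) from rfl,
        ent_range_image (fun a b hab => by omega) hi, gfun_B hdZ hx]
      congr 1
      omega
    have hval1' : ∀ i x, ent Z'.1 i = some x →
        ent (Zreg0 m').1 i = some (gfun Z'.1 Z'.2 (2 * m' - 1) x) := by
      intro i x hx
      have hi : i < m' := by have := ent_lt_card hx; omega
      rw [show (Zreg0 m').1 = (Finset.range m').image (fun j => 2 * j + 1) from rfl,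
        ent_range_image (fun a b hab => by omega) hi, gfun_A hx]
      congr 1
      omega
    have hval2' : ∀ i x, ent Z'.2 i = some x →
        ent (Zreg0 m').2 i = some (gfun Z'.1 Z'.2 (2 * m' - 1) x) := by
      intro i x hx
      have hi : i < m' := by have := ent_lt_card hx; omega
      rw [show (Zreg0 m').2 = (Finset.range m').image (fun j => 2 * j) from rfl,
        ent_range_image (fun a b hab => by omega) hi, gfun_B hdZ' hx]
      congr 1
      omega
    have hpos1 := posImage_eq hM1 hval1
    have hpos2 := posImage_eq hM2 hval2
    have hpos1' := posImage_eq hN1 hval1'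
    have hpos2' := posImage_eq hN2 hval2'
    have himg1 : Z.1.image (gfun Z.1 Z.2 (2 * m')) = (Zreg1 m').1 := by
      refine image_eq_of_val ?_ hval1
      rw [show (Zreg1 m').1 = (Finset.range (m' + 1)).image (fun j => 2 * j) from rfl,
        Finset.card_image_of_injOn (fun a _ b _ h => by omega), Finset.card_range, hZ1]
    have himg2 : Z.2.image (gfun Z.1 Z.2 (2 * m')) = (Zreg1 m').2 := by
      refine image_eq_of_val ?_ hval2
      rw [show (Zreg1 m').2 = (Finset.range m').image (fun j => 2 * j + 1) from rfl,
        Finset.card_image_of_injOn (fun a _ b _ h => by omega), Finset.card_range, hZ2]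
    have himg1' : Z'.1.image (gfun Z'.1 Z'.2 (2 * m' - 1)) = (Zreg0 m').1 := by
      refine image_eq_of_val ?_ hval1'
      rw [show (Zreg0 m').1 = (Finset.range m').image (fun j => 2 * j + 1) from rfl,
        Finset.card_image_of_injOn (fun a _ b _ h => by omega), Finset.card_range, hZ'1]
    have himg2' : Z'.2.image (gfun Z'.1 Z'.2 (2 * m' - 1)) = (Zreg0 m').2 := by
      refine image_eq_of_val ?_ hval2'
      rw [show (Zreg0 m').2 = (Finset.range m').image (fun j => 2 * j) from rfl,
        Finset.card_image_of_injOn (fun a _ b _ h => by omega), Finset.card_range, hZ'2]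
    have hinjZ1 : ∀ x ∈ Z.1, ∀ y ∈ Z.1, gfun Z.1 Z.2 (2 * m') x = gfun Z.1 Z.2 (2 * m') y → x = y :=
      fun x hx y hy h => strictMonoOn_injOn hgm x (Finset.mem_union_left _ hx)
        y (Finset.mem_union_left _ hy) h
    have hinjZ2 : ∀ x ∈ Z.2, ∀ y ∈ Z.2, gfun Z.1 Z.2 (2 * m') x = gfun Z.1 Z.2 (2 * m') y → x = y :=
      fun x hx y hy h => strictMonoOn_injOn hgm x (Finset.mem_union_right _ hx)
        y (Finset.mem_union_right _ hy) h
    have hinjZ1' : ∀ x ∈ Z'.1, ∀ y ∈ Z'.1,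
        gfun Z'.1 Z'.2 (2 * m' - 1) x = gfun Z'.1 Z'.2 (2 * m' - 1) y → x = y :=
      fun x hx y hy h => strictMonoOn_injOn hg'm x (Finset.mem_union_left _ hx)
        y (Finset.mem_union_left _ hy) h
    have hinjZ2' : ∀ x ∈ Z'.2, ∀ y ∈ Z'.2,
        gfun Z'.1 Z'.2 (2 * m' - 1) x = gfun Z'.1 Z'.2 (2 * m' - 1) y → x = y :=
      fun x hx y hy h => strictMonoOn_injOn hg'm x (Finset.mem_union_right _ hx)
        y (Finset.mem_union_right _ hy) h
    have hlam : lam (Zreg1 m') (posImage Z.1 (Zreg1 m').1 M.1 0, posImage Z.2 (Zreg1 m').2 M.2 0)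
        = ((lam Z M).1.image (gfun Z.1 Z.2 (2 * m')), (lam Z M).2.image (gfun Z.1 Z.2 (2 * m'))) := by
      show ((Zreg1 m').1 \ posImage Z.1 (Zreg1 m').1 M.1 0 ∪ posImage Z.2 (Zreg1 m').2 M.2 0,
            (Zreg1 m').2 \ posImage Z.2 (Zreg1 m').2 M.2 0 ∪ posImage Z.1 (Zreg1 m').1 M.1 0)
          = ((Z.1 \ M.1 ∪ M.2).image (gfun Z.1 Z.2 (2 * m')),
             (Z.2 \ M.2 ∪ M.1).image (gfun Z.1 Z.2 (2 * m')))
      rw [hpos1, hpos2, ← himg1, ← himg2, ← image_sdiff' hM1 hinjZ1,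
        ← image_sdiff' hM2 hinjZ2, ← Finset.image_union, ← Finset.image_union]
    have hlam' : lam (Zreg0 m') (posImage Z'.1 (Zreg0 m').1 N.1 0, posImage Z'.2 (Zreg0 m').2 N.2 0)
        = ((lam Z' N).1.image (gfun Z'.1 Z'.2 (2 * m' - 1)),
           (lam Z' N).2.image (gfun Z'.1 Z'.2 (2 * m' - 1))) := by
      show ((Zreg0 m').1 \ posImage Z'.1 (Zreg0 m').1 N.1 0 ∪ posImage Z'.2 (Zreg0 m').2 N.2 0,
            (Zreg0 m').2 \ posImage Z'.2 (Zreg0 m').2 N.2 0 ∪ posImage Z'.1 (Zreg0 m').1 N.1 0)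
          = ((Z'.1 \ N.1 ∪ N.2).image (gfun Z'.1 Z'.2 (2 * m' - 1)),
             (Z'.2 \ N.2 ∪ N.1).image (gfun Z'.1 Z'.2 (2 * m' - 1)))
      rw [hpos1', hpos2', ← himg1', ← himg2', ← image_sdiff' hN1 hinjZ1',
        ← image_sdiff' hN2 hinjZ2', ← Finset.image_union, ← Finset.image_union]
    have hdreg1 : Disjoint (Zreg1 m').1 (Zreg1 m').2 := by
      simp only [Zreg1, Finset.disjoint_left, Finset.mem_image, Finset.mem_range]
      rintro a ⟨j, hj, rfl⟩ ⟨k, hk, hak⟩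
      omega
    have hdreg0 : Disjoint (Zreg0 m').1 (Zreg0 m').2 := by
      simp only [Zreg0, Finset.disjoint_left, Finset.mem_image, Finset.mem_range]
      rintro a ⟨j, hj, rfl⟩ ⟨k, hk, hak⟩
      omega
    have hSubR : SubZI (posImage Z.1 (Zreg1 m').1 M.1 0, posImage Z.2 (Zreg1 m').2 M.2 0)
        (Zreg1 m') := by
      constructor
      · intro y hy
        rw [show (posImage Z.1 (Zreg1 m').1 M.1 0, posImage Z.2 (Zreg1 m').2 M.2 0).1
            = posImage Z.1 (Zreg1 m').1 M.1 0 from rfl, hpos1] at hy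
        obtain ⟨x, hxM, rfl⟩ := Finset.mem_image.mp hy
        have hy1 : gfun Z.1 Z.2 (2 * m') x ∈ (Zreg1 m').1 := by
          rw [← himg1]; exact Finset.mem_image_of_mem _ (hM1 hxM)
        exact Finset.mem_sdiff.mpr ⟨hy1, Finset.disjoint_left.mp hdreg1 hy1⟩
      · intro y hy
        rw [show (posImage Z.1 (Zreg1 m').1 M.1 0, posImage Z.2 (Zreg1 m').2 M.2 0).2
            = posImage Z.2 (Zreg1 m').2 M.2 0 from rfl, hpos2] at hy
        obtain ⟨x, hxM, rfl⟩ := Finset.mem_image.mp hy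
        have hy1 : gfun Z.1 Z.2 (2 * m') x ∈ (Zreg1 m').2 := by
          rw [← himg2]; exact Finset.mem_image_of_mem _ (hM2 hxM)
        exact Finset.mem_sdiff.mpr ⟨hy1, fun hc => Finset.disjoint_left.mp hdreg1 hc hy1⟩
    have hSubR' : SubZI (posImage Z'.1 (Zreg0 m').1 N.1 0, posImage Z'.2 (Zreg0 m').2 N.2 0)
        (Zreg0 m') := by
      constructor
      · intro y hy
        rw [show (posImage Z'.1 (Zreg0 m').1 N.1 0, posImage Z'.2 (Zreg0 m').2 N.2 0).1
            = posImage Z'.1 (Zreg0 m').1 N.1 0 from rfl, hpos1'] at hy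
        obtain ⟨x, hxN, rfl⟩ := Finset.mem_image.mp hy
        have hy1 : gfun Z'.1 Z'.2 (2 * m' - 1) x ∈ (Zreg0 m').1 := by
          rw [← himg1']; exact Finset.mem_image_of_mem _ (hN1 hxN)
        exact Finset.mem_sdiff.mpr ⟨hy1, Finset.disjoint_left.mp hdreg0 hy1⟩
      · intro y hy
        rw [show (posImage Z'.1 (Zreg0 m').1 N.1 0, posImage Z'.2 (Zreg0 m').2 N.2 0).2
            = posImage Z'.2 (Zreg0 m').2 N.2 0 from rfl, hpos2'] at hy
        obtain ⟨x, hxN, rfl⟩ := Finset.mem_image.mp hy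
        have hy1 : gfun Z'.1 Z'.2 (2 * m' - 1) x ∈ (Zreg0 m').2 := by
          rw [← himg2']; exact Finset.mem_image_of_mem _ (hN2 hxN)
        exact Finset.mem_sdiff.mpr ⟨hy1, fun hc => Finset.disjoint_left.mp hdreg0 hc hy1⟩
    have hT := Bm_transfer hsub1 hsub2 hsub1' hsub2' hgm hg'm
      (cross · · · ·)
    rw [hlam, hlam']
    constructor
    · rintro ⟨_, _, hD⟩
      refine ⟨⟨_, hSubR, hlam.symm⟩, ⟨_, hSubR', hlam'.symm⟩, ?_⟩
      rcases hD with ⟨_, hB⟩ | ⟨habs, _⟩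
      · exact Or.inl ⟨rfl, hT.mp hB⟩
      · exact absurd habs (by omega)
    · rintro ⟨_, _, hD⟩
      refine ⟨⟨M, hM, rfl⟩, ⟨N, hN, rfl⟩, ?_⟩
      rcases hD with ⟨_, hB⟩ | ⟨habs, _⟩
      · exact Or.inl ⟨rfl, hT.mpr hB⟩
      · exact absurd habs (by omega)
  · subst hmm
    have hBm1 : Bm1 Z Z' := by
      rcases hDZZ.1.2.2 with ⟨h, _⟩ | ⟨_, h⟩
      · exact absurd h (by omega)
      · exact h
    have hPQ := PQ_m1 ⟨hZ1, hZ2, zs1, zs2⟩ ⟨hZ'1, hZ'2, zt1, zt2⟩ hregZ hregZ' hBm1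
      h11.2.1 h11.2.2
    obtain ⟨ec1, ec2, e1, e2, e3, e4⟩ := hBm1
    have cross := cross_m1 hZ1 hZ2 hZ'1 hZ'2 hdZ hdZ' s1 t1 e1 e2 e3 e4 hPQ
    have hgm : ∀ x ∈ Z.1 ∪ Z.2, ∀ y ∈ Z.1 ∪ Z.2, x < y →
        gfun Z.1 Z.2 (2 * m) x < gfun Z.1 Z.2 (2 * m) y :=
      gfun_mono hdZ s1 s2 (fun p hp => by omega) (fun q hq => by omega)
    have hg'm : ∀ x ∈ Z'.1 ∪ Z'.2, ∀ y ∈ Z'.1 ∪ Z'.2, x < y →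
        gfun Z'.1 Z'.2 (2 * m + 1) x < gfun Z'.1 Z'.2 (2 * m + 1) y :=
      gfun_mono hdZ' t1 t2 (fun p hp => by omega) (fun q hq => by omega)
    have hval1 : ∀ i x, ent Z.1 i = some x →
        ent (Zreg1 m).1 i = some (gfun Z.1 Z.2 (2 * m) x) := by
      intro i x hx
      have hi : i < m + 1 := by have := ent_lt_card hx; omega
      rw [show (Zreg1 m).1 = (Finset.range (m + 1)).image (fun j => 2 * j) from rfl,
        ent_range_image (fun a b hab => by omega) hi, gfun_A hx]
      congr 1
      omega
    have hval2 : ∀ i x, ent Z.2 i = some x →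
        ent (Zreg1 m).2 i = some (gfun Z.1 Z.2 (2 * m) x) := by
      intro i x hx
      have hi : i < m := by have := ent_lt_card hx; omega
      rw [show (Zreg1 m).2 = (Finset.range m).image (fun j => 2 * j + 1) from rfl,
        ent_range_image (fun a b hab => by omega) hi, gfun_B hdZ hx]
      congr 1
      omega
    have hval1' : ∀ i x, ent Z'.1 i = some x →
        ent (Zreg0 (m + 1)).1 i = some (gfun Z'.1 Z'.2 (2 * m + 1) x) := by
      intro i x hx
      have hi : i < m + 1 := by have := ent_lt_card hx; omega
      rw [show (Zreg0 (m + 1)).1 = (Finset.range (m + 1)).image (fun j => 2 * j + 1) from rfl,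
        ent_range_image (fun a b hab => by omega) hi, gfun_A hx]
      congr 1
      omega
    have hval2' : ∀ i x, ent Z'.2 i = some x →
        ent (Zreg0 (m + 1)).2 i = some (gfun Z'.1 Z'.2 (2 * m + 1) x) := by
      intro i x hx
      have hi : i < m + 1 := by have := ent_lt_card hx; omega
      rw [show (Zreg0 (m + 1)).2 = (Finset.range (m + 1)).image (fun j => 2 * j) from rfl,
        ent_range_image (fun a b hab => by omega) hi, gfun_B hdZ' hx]
      congr 1
      omega
    have hpos1 := posImage_eq hM1 hval1
    have hpos2 := posImage_eq hM2 hval2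
    have hpos1' := posImage_eq hN1 hval1'
    have hpos2' := posImage_eq hN2 hval2'
    have himg1 : Z.1.image (gfun Z.1 Z.2 (2 * m)) = (Zreg1 m).1 := by
      refine image_eq_of_val ?_ hval1
      rw [show (Zreg1 m).1 = (Finset.range (m + 1)).image (fun j => 2 * j) from rfl,
        Finset.card_image_of_injOn (fun a _ b _ h => by omega), Finset.card_range, hZ1]
    have himg2 : Z.2.image (gfun Z.1 Z.2 (2 * m)) = (Zreg1 m).2 := by
      refine image_eq_of_val ?_ hval2
      rw [show (Zreg1 m).2 = (Finset.range m).image (fun j => 2 * j + 1) from rfl,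
        Finset.card_image_of_injOn (fun a _ b _ h => by omega), Finset.card_range, hZ2]
    have himg1' : Z'.1.image (gfun Z'.1 Z'.2 (2 * m + 1)) = (Zreg0 (m + 1)).1 := by
      refine image_eq_of_val ?_ hval1'
      rw [show (Zreg0 (m + 1)).1 = (Finset.range (m + 1)).image (fun j => 2 * j + 1) from rfl,
        Finset.card_image_of_injOn (fun a _ b _ h => by omega), Finset.card_range, hZ'1]
    have himg2' : Z'.2.image (gfun Z'.1 Z'.2 (2 * m + 1)) = (Zreg0 (m + 1)).2 := by
      refine image_eq_of_val ?_ hval2'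
      rw [show (Zreg0 (m + 1)).2 = (Finset.range (m + 1)).image (fun j => 2 * j) from rfl,
        Finset.card_image_of_injOn (fun a _ b _ h => by omega), Finset.card_range, hZ'2]
    have hinjZ1 : ∀ x ∈ Z.1, ∀ y ∈ Z.1, gfun Z.1 Z.2 (2 * m) x = gfun Z.1 Z.2 (2 * m) y → x = y :=
      fun x hx y hy h => strictMonoOn_injOn hgm x (Finset.mem_union_left _ hx)
        y (Finset.mem_union_left _ hy) h
    have hinjZ2 : ∀ x ∈ Z.2, ∀ y ∈ Z.2, gfun Z.1 Z.2 (2 * m) x = gfun Z.1 Z.2 (2 * m) y → x = y :=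
      fun x hx y hy h => strictMonoOn_injOn hgm x (Finset.mem_union_right _ hx)
        y (Finset.mem_union_right _ hy) h
    have hinjZ1' : ∀ x ∈ Z'.1, ∀ y ∈ Z'.1,
        gfun Z'.1 Z'.2 (2 * m + 1) x = gfun Z'.1 Z'.2 (2 * m + 1) y → x = y :=
      fun x hx y hy h => strictMonoOn_injOn hg'm x (Finset.mem_union_left _ hx)
        y (Finset.mem_union_left _ hy) h
    have hinjZ2' : ∀ x ∈ Z'.2, ∀ y ∈ Z'.2,
        gfun Z'.1 Z'.2 (2 * m + 1) x = gfun Z'.1 Z'.2 (2 * m + 1) y → x = y :=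
      fun x hx y hy h => strictMonoOn_injOn hg'm x (Finset.mem_union_right _ hx)
        y (Finset.mem_union_right _ hy) h
    have hlam : lam (Zreg1 m) (posImage Z.1 (Zreg1 m).1 M.1 0, posImage Z.2 (Zreg1 m).2 M.2 0)
        = ((lam Z M).1.image (gfun Z.1 Z.2 (2 * m)), (lam Z M).2.image (gfun Z.1 Z.2 (2 * m))) := by
      show ((Zreg1 m).1 \ posImage Z.1 (Zreg1 m).1 M.1 0 ∪ posImage Z.2 (Zreg1 m).2 M.2 0,
            (Zreg1 m).2 \ posImage Z.2 (Zreg1 m).2 M.2 0 ∪ posImage Z.1 (Zreg1 m).1 M.1 0)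
          = ((Z.1 \ M.1 ∪ M.2).image (gfun Z.1 Z.2 (2 * m)),
             (Z.2 \ M.2 ∪ M.1).image (gfun Z.1 Z.2 (2 * m)))
      rw [hpos1, hpos2, ← himg1, ← himg2, ← image_sdiff' hM1 hinjZ1,
        ← image_sdiff' hM2 hinjZ2, ← Finset.image_union, ← Finset.image_union]
    have hlam' : lam (Zreg0 (m + 1))
        (posImage Z'.1 (Zreg0 (m + 1)).1 N.1 0, posImage Z'.2 (Zreg0 (m + 1)).2 N.2 0)
        = ((lam Z' N).1.image (gfun Z'.1 Z'.2 (2 * m + 1)),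
           (lam Z' N).2.image (gfun Z'.1 Z'.2 (2 * m + 1))) := by
      show ((Zreg0 (m + 1)).1 \ posImage Z'.1 (Zreg0 (m + 1)).1 N.1 0
              ∪ posImage Z'.2 (Zreg0 (m + 1)).2 N.2 0,
            (Zreg0 (m + 1)).2 \ posImage Z'.2 (Zreg0 (m + 1)).2 N.2 0
              ∪ posImage Z'.1 (Zreg0 (m + 1)).1 N.1 0)
          = ((Z'.1 \ N.1 ∪ N.2).image (gfun Z'.1 Z'.2 (2 * m + 1)),
             (Z'.2 \ N.2 ∪ N.1).image (gfun Z'.1 Z'.2 (2 * m + 1)))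
      rw [hpos1', hpos2', ← himg1', ← himg2', ← image_sdiff' hN1 hinjZ1',
        ← image_sdiff' hN2 hinjZ2', ← Finset.image_union, ← Finset.image_union]
    have hdreg1 : Disjoint (Zreg1 m).1 (Zreg1 m).2 := by
      simp only [Zreg1, Finset.disjoint_left, Finset.mem_image, Finset.mem_range]
      rintro a ⟨j, hj, rfl⟩ ⟨k, hk, hak⟩
      omega
    have hdreg0 : Disjoint (Zreg0 (m + 1)).1 (Zreg0 (m + 1)).2 := by
      simp only [Zreg0, Finset.disjoint_left, Finset.mem_image, Finset.mem_range]
      rintro a ⟨j, hj, rfl⟩ ⟨k, hk, hak⟩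
      omega
    have hSubR : SubZI (posImage Z.1 (Zreg1 m).1 M.1 0, posImage Z.2 (Zreg1 m).2 M.2 0)
        (Zreg1 m) := by
      constructor
      · intro y hy
        rw [show (posImage Z.1 (Zreg1 m).1 M.1 0, posImage Z.2 (Zreg1 m).2 M.2 0).1
            = posImage Z.1 (Zreg1 m).1 M.1 0 from rfl, hpos1] at hy
        obtain ⟨x, hxM, rfl⟩ := Finset.mem_image.mp hy
        have hy1 : gfun Z.1 Z.2 (2 * m) x ∈ (Zreg1 m).1 := by
          rw [← himg1]; exact Finset.mem_image_of_mem _ (hM1 hxM)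
        exact Finset.mem_sdiff.mpr ⟨hy1, Finset.disjoint_left.mp hdreg1 hy1⟩
      · intro y hy
        rw [show (posImage Z.1 (Zreg1 m).1 M.1 0, posImage Z.2 (Zreg1 m).2 M.2 0).2
            = posImage Z.2 (Zreg1 m).2 M.2 0 from rfl, hpos2] at hy
        obtain ⟨x, hxM, rfl⟩ := Finset.mem_image.mp hy
        have hy1 : gfun Z.1 Z.2 (2 * m) x ∈ (Zreg1 m).2 := by
          rw [← himg2]; exact Finset.mem_image_of_mem _ (hM2 hxM)
        exact Finset.mem_sdiff.mpr ⟨hy1, fun hc => Finset.disjoint_left.mp hdreg1 hc hy1⟩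
    have hSubR' : SubZI (posImage Z'.1 (Zreg0 (m + 1)).1 N.1 0,
        posImage Z'.2 (Zreg0 (m + 1)).2 N.2 0) (Zreg0 (m + 1)) := by
      constructor
      · intro y hy
        rw [show (posImage Z'.1 (Zreg0 (m + 1)).1 N.1 0, posImage Z'.2 (Zreg0 (m + 1)).2 N.2 0).1
            = posImage Z'.1 (Zreg0 (m + 1)).1 N.1 0 from rfl, hpos1'] at hy
        obtain ⟨x, hxN, rfl⟩ := Finset.mem_image.mp hy
        have hy1 : gfun Z'.1 Z'.2 (2 * m + 1) x ∈ (Zreg0 (m + 1)).1 := by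
          rw [← himg1']; exact Finset.mem_image_of_mem _ (hN1 hxN)
        exact Finset.mem_sdiff.mpr ⟨hy1, Finset.disjoint_left.mp hdreg0 hy1⟩
      · intro y hy
        rw [show (posImage Z'.1 (Zreg0 (m + 1)).1 N.1 0, posImage Z'.2 (Zreg0 (m + 1)).2 N.2 0).2
            = posImage Z'.2 (Zreg0 (m + 1)).2 N.2 0 from rfl, hpos2'] at hy
        obtain ⟨x, hxN, rfl⟩ := Finset.mem_image.mp hy
        have hy1 : gfun Z'.1 Z'.2 (2 * m + 1) x ∈ (Zreg0 (m + 1)).2 := by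
          rw [← himg2']; exact Finset.mem_image_of_mem _ (hN2 hxN)
        exact Finset.mem_sdiff.mpr ⟨hy1, fun hc => Finset.disjoint_left.mp hdreg0 hc hy1⟩
    have hT := Bm1_transfer hsub1 hsub2 hsub1' hsub2' hgm hg'm
      (cross · · · ·)
    rw [hlam, hlam']
    constructor
    · rintro ⟨_, _, hD⟩
      refine ⟨⟨_, hSubR, hlam.symm⟩, ⟨_, hSubR', hlam'.symm⟩, ?_⟩
      rcases hD with ⟨habs, _⟩ | ⟨_, hB⟩
      · exact absurd habs (by omega)
      · exact Or.inr ⟨rfl, hT.mp hB⟩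
    · rintro ⟨_, _, hD⟩
      refine ⟨⟨M, hM, rfl⟩, ⟨N, hN, rfl⟩, ?_⟩
      rcases hD with ⟨habs, _⟩ | ⟨_, hB⟩
      · exact absurd habs (by omega)
      · exact Or.inr ⟨rfl, hT.mpr hB⟩
end
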